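/- arXiv:1604.05414 — 13 statements merged into one kernel-verified Lean document; each statement's English description precedes it below -/
import Mathlib

section
/- Let Δ be a pure simplicial complex. Then Δ is strongly shellable if and only if its complement complex Δ^c (whose facets are the complements of facets of Δ with respect to the vertex set) is strongly shellable. -/
open scoped Classical

def StronglyShellable {α : Type*} [DecidableEq α] (F : Finset (Finset α)) : Prop :=
  ∃ l : List (Finset α), l.Nodup ∧ l.toFinset = F ∧
    ∀ i j : Fin l.length, (i : ℕ) < (j : ℕ) →
      ∃ k : Fin l.length, (k : ℕ) < (j : ℕ) ∧
        (l.get j \ l.get k).card = 1 ∧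
        l.get i ∩ l.get j ⊆ l.get k ∧ l.get k ⊆ l.get i ∪ l.get j

lemma StronglyShellable.compl {α : Type*} [Fintype α] [DecidableEq α]
    (F : Finset (Finset α)) (hpure : ∃ d, ∀ s ∈ F, s.card = d)
    (h : StronglyShellable F) : StronglyShellable (F.image fun s => sᶜ) := by
  obtain ⟨d, hd⟩ := hpure
  obtain ⟨l, hn, ht, hss⟩ := h
  have hinj : Function.Injective (fun s : Finset α => sᶜ) :=
    fun a b hab => by simpa using congrArg (fun t : Finset α => tᶜ) hab
  refine ⟨l.map (fun s => sᶜ), hn.map hinj, by rw [← ht]; ext x; simp, ?_⟩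
  intro i j hij
  have hl : (l.map (fun s : Finset α => sᶜ)).length = l.length := l.length_map _
  obtain ⟨k, hk, hc, h1, h2⟩ := hss (i.cast hl) (j.cast hl) hij
  have hmemF : ∀ x : Fin l.length, l.get x ∈ F := fun x => by
    rw [← ht]; exact List.mem_toFinset.mpr (l.get_mem _)
  have hget : ∀ x : Fin (l.map (fun s : Finset α => sᶜ)).length,
      (l.map (fun s : Finset α => sᶜ)).get x = (l.get (x.cast hl))ᶜ := fun x => by
    simp [List.get_eq_getElem]
  refine ⟨k.cast hl.symm, hk, ?_, ?_, ?_⟩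
  · rw [hget, hget, Fin.cast_cast, Fin.cast_eq_self,
      (compl_sdiff_compl : (l.get (j.cast hl))ᶜ \ (l.get k)ᶜ = l.get k \ l.get (j.cast hl)),
      Finset.card_sdiff_comm (by rw [hd _ (hmemF _), hd _ (hmemF _)])]
    exact hc
  · rw [hget, hget, hget, Fin.cast_cast, Fin.cast_eq_self, ← Finset.compl_union]
    exact Finset.compl_subset_compl.mpr h2
  · rw [hget, hget, hget, Fin.cast_cast, Fin.cast_eq_self, ← Finset.compl_inter]
    exact Finset.compl_subset_compl.mpr h1

/-- A pure simplicial complex (given by its facet set) is strongly shellable iff its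
complement complex (facets complemented within the vertex set) is strongly shellable. -/
theorem stmt0 {α : Type*} [Fintype α] [DecidableEq α] (F : Finset (Finset α))
    (hpure : ∃ d, ∀ s ∈ F, s.card = d) :
    StronglyShellable F ↔ StronglyShellable (F.image fun s => sᶜ) := by
  constructor
  · exact fun h => StronglyShellable.compl F hpure h
  · intro h
    obtain ⟨d, hd⟩ := hpure
    have hpure' : ∃ d, ∀ s ∈ F.image (fun s => sᶜ), s.card = d := by
      refine ⟨Fintype.card α - d, ?_⟩
      intro s hs
      simp only [Finset.mem_image] at hs
      obtain ⟨t, ht, rfl⟩ := hs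
      rw [Finset.card_compl, hd t ht]
    have := StronglyShellable.compl _ hpure' h
    simpa [Finset.image_image, Function.comp] using this
end

section
/- Let Δ be a pure simplicial complex. Then Δ is strongly shellable if and only if there exists a linear order ≻ on its facets such that whenever F_i ≻ F_j, there exists a facet F_k ≻ F_j with dis(F_k,F_j)=1 and dis(F_i,F_k)=dis(F_i,F_j)−1, where dis(F,G)=|F∖G|. -/
open scoped Classical

lemma aux_card_split {α : Type*} [DecidableEq α] {A B C : Finset α} {e f : α}
    (he : C \ B = {e}) (hf : B \ C = {f}) :
    (A \ C).card = ((A \ B).erase e).card + (A ∩ {f}).card := by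
  have hdecomp : A \ C = ((A \ B).erase e) ∪ (A ∩ {f}) := by
    ext x
    simp only [Finset.mem_union, Finset.mem_erase, Finset.mem_sdiff, Finset.mem_inter,
      Finset.mem_singleton]
    constructor
    · rintro ⟨hxA, hxC⟩
      by_cases hxB : x ∈ B
      · right
        refine ⟨hxA, ?_⟩
        have : x ∈ B \ C := Finset.mem_sdiff.mpr ⟨hxB, hxC⟩
        rw [hf] at this; simpa using this
      · left
        refine ⟨?_, hxA, hxB⟩
        intro h; subst h
        have : x ∈ C \ B := by rw [he]; simp
        exact hxC (Finset.mem_sdiff.mp this).1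
    · rintro (⟨hxe, hxA, hxB⟩ | ⟨hxA, hxf⟩)
      · refine ⟨hxA, fun hxC => ?_⟩
        have : x ∈ C \ B := Finset.mem_sdiff.mpr ⟨hxC, hxB⟩
        rw [he] at this; exact hxe (by simpa using this)
      · subst hxf
        refine ⟨hxA, fun hxC => ?_⟩
        have : x ∈ B \ C := by rw [hf]; simp
        exact (Finset.mem_sdiff.mp this).2 hxC
  rw [hdecomp, Finset.card_union_of_disjoint]
  rw [Finset.disjoint_left]
  intro x hx1 hx2
  simp only [Finset.mem_erase, Finset.mem_sdiff] at hx1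
  simp only [Finset.mem_inter, Finset.mem_singleton] at hx2
  have : x ∈ B \ C := by rw [hf]; simp [hx2.2]
  exact hx1.2.2 (Finset.mem_sdiff.mp this).1

lemma aux_iff {α : Type*} [DecidableEq α] {A B C : Finset α}
    (hAB : A.card = B.card) (hCB : C.card = B.card) (hne : A ≠ B) :
    ((B \ C).card = 1 ∧ A ∩ B ⊆ C ∧ C ⊆ A ∪ B) ↔
    ((C \ B).card = 1 ∧ (A \ C).card = (A \ B).card - 1) := by
  have hcomm : (B \ C).card = (C \ B).card := Finset.card_sdiff_comm hCB.symm
  have hABpos : 0 < (A \ B).card := by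
    rw [Finset.card_pos]
    by_contra h
    rw [Finset.not_nonempty_iff_eq_empty, Finset.sdiff_eq_empty_iff_subset] at h
    exact hne (Finset.eq_of_subset_of_card_le h (le_of_eq hAB.symm))
  constructor
  · rintro ⟨h1, h2, h3⟩
    have h1' : (C \ B).card = 1 := hcomm ▸ h1
    obtain ⟨e, he⟩ := Finset.card_eq_one.mp h1'
    have heC : e ∈ C := by
      have : e ∈ C \ B := by rw [he]; simp
      exact (Finset.mem_sdiff.mp this).1
    have heB : e ∉ B := by
      have : e ∈ C \ B := by rw [he]; simp
      exact (Finset.mem_sdiff.mp this).2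
    have heA : e ∈ A := by
      rcases Finset.mem_union.mp (h3 heC) with h | h
      · exact h
      · exact absurd h heB
    refine ⟨h1', ?_⟩
    have hset : A \ C = (A \ B).erase e := by
      ext x
      simp only [Finset.mem_erase, Finset.mem_sdiff]
      constructor
      · rintro ⟨hxA, hxC⟩
        refine ⟨fun h => hxC (h ▸ heC), hxA, fun hxB => hxC (h2 (Finset.mem_inter.mpr ⟨hxA, hxB⟩))⟩
      · rintro ⟨hxe, hxA, hxB⟩
        refine ⟨hxA, fun hxC => ?_⟩
        have : x ∈ C \ B := Finset.mem_sdiff.mpr ⟨hxC, hxB⟩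
        rw [he] at this; exact hxe (by simpa using this)
    rw [hset, Finset.card_erase_of_mem (Finset.mem_sdiff.mpr ⟨heA, heB⟩)]
  · rintro ⟨h1, h2⟩
    have h1' : (B \ C).card = 1 := by rw [hcomm]; exact h1
    obtain ⟨e, he⟩ := Finset.card_eq_one.mp h1
    obtain ⟨f, hf⟩ := Finset.card_eq_one.mp h1'
    have hsplit := aux_card_split (A := A) he hf
    have heA : e ∈ A ∧ f ∉ A := by
      by_cases hea : e ∈ A <;> by_cases hfa : f ∈ A
      · exfalso
        have heB : e ∉ B := by
          have : e ∈ C \ B := by rw [he]; simp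
          exact (Finset.mem_sdiff.mp this).2
        rw [Finset.card_erase_of_mem (Finset.mem_sdiff.mpr ⟨hea, heB⟩)] at hsplit
        have : A ∩ {f} = {f} := by
          rw [Finset.inter_eq_right]; simpa using hfa
        rw [this, Finset.card_singleton] at hsplit
        omega
      · exact ⟨hea, hfa⟩
      · exfalso
        have heAB : e ∉ A \ B := fun h => hea (Finset.mem_sdiff.mp h).1
        rw [Finset.erase_eq_of_notMem heAB] at hsplit
        have : A ∩ {f} = {f} := by
          rw [Finset.inter_eq_right]; simpa using hfa
        rw [this, Finset.card_singleton] at hsplit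
        omega
      · exfalso
        have heAB : e ∉ A \ B := fun h => hea (Finset.mem_sdiff.mp h).1
        rw [Finset.erase_eq_of_notMem heAB] at hsplit
        have : A ∩ {f} = ∅ := Finset.inter_singleton_of_notMem hfa
        rw [this, Finset.card_empty] at hsplit
        omega
    obtain ⟨heA, hfA⟩ := heA
    refine ⟨h1', ?_, ?_⟩
    · intro x hx
      obtain ⟨hxA, hxB⟩ := Finset.mem_inter.mp hx
      by_contra hxC
      have : x ∈ B \ C := Finset.mem_sdiff.mpr ⟨hxB, hxC⟩
      rw [hf] at this
      exact hfA ((by simpa using this : x = f) ▸ hxA)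
    · intro x hxC
      by_cases hxB : x ∈ B
      · exact Finset.mem_union_right _ hxB
      · have : x ∈ C \ B := Finset.mem_sdiff.mpr ⟨hxC, hxB⟩
        rw [he] at this
        exact Finset.mem_union_left _ ((by simpa using this : x = e) ▸ heA)

/-- A pure complex is strongly shellable iff there is a linear order on the facets such that
whenever `F i ≻ F j` (i.e. `i < j` in the list, earlier = larger), there is `F k ≻ F j` with
`dis(F k, F j) = 1` and `dis(F i, F k) = dis(F i, F j) - 1`. -/
theorem stmt1 {α : Type*} [DecidableEq α] (F : Finset (Finset α))
    (hpure : ∃ d, ∀ s ∈ F, s.card = d) :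
    StronglyShellable F ↔
      ∃ l : List (Finset α), l.Nodup ∧ l.toFinset = F ∧
        ∀ i j : Fin l.length, (i : ℕ) < (j : ℕ) →
          ∃ k : Fin l.length, (k : ℕ) < (j : ℕ) ∧
            (l.get k \ l.get j).card = 1 ∧
            (l.get i \ l.get k).card = (l.get i \ l.get j).card - 1 := by
  obtain ⟨d, hd⟩ := hpure
  constructor
  · rintro ⟨l, hnd, hlF, hmain⟩
    refine ⟨l, hnd, hlF, fun i j hij => ?_⟩
    obtain ⟨k, hkj, h1, h2, h3⟩ := hmain i j hij
    have hcard : ∀ m : Fin l.length, (l.get m).card = d := fun m =>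
      hd _ (hlF ▸ List.mem_toFinset.mpr (l.get_mem _))
    have hne : l.get i ≠ l.get j := fun h =>
      Nat.ne_of_lt hij (Fin.val_eq_of_eq ((List.Nodup.get_inj_iff hnd).mp h))
    have := (aux_iff (A := l.get i) (B := l.get j) (C := l.get k)
      ((hcard i).trans (hcard j).symm) ((hcard k).trans (hcard j).symm) hne).mp ⟨h1, h2, h3⟩
    exact ⟨k, hkj, this.1, this.2⟩
  · rintro ⟨l, hnd, hlF, hmain⟩
    refine ⟨l, hnd, hlF, fun i j hij => ?_⟩
    obtain ⟨k, hkj, h1, h2⟩ := hmain i j hij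
    have hcard : ∀ m : Fin l.length, (l.get m).card = d := fun m =>
      hd _ (hlF ▸ List.mem_toFinset.mpr (l.get_mem _))
    have hne : l.get i ≠ l.get j := fun h =>
      Nat.ne_of_lt hij (Fin.val_eq_of_eq ((List.Nodup.get_inj_iff hnd).mp h))
    have := (aux_iff (A := l.get i) (B := l.get j) (C := l.get k)
      ((hcard i).trans (hcard j).symm) ((hcard k).trans (hcard j).symm) hne).mpr ⟨h1, h2⟩
    exact ⟨k, hkj, this.1, this.2.1, this.2.2⟩
end

section
/- Every matroid complex is strongly shellable. -/
open scoped Classical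

section Aux
variable {α : Type*} [DecidableEq α]

noncomputable def wtAux (f : α → ℕ) (s : Finset α) : ℕ := ∑ x ∈ s, 2 ^ f x

lemma sum_range_two_pow_lt' (n : ℕ) : ∑ k ∈ Finset.range n, 2 ^ k < 2 ^ n := by
  induction n with
  | zero => simp
  | succ n ih => rw [Finset.sum_range_succ, pow_succ]; omega

lemma wtAux_lt (f : α → ℕ) (hf : Function.Injective f) {s t : Finset α} {m : α}
    (hm : m ∈ t) (hms : m ∉ s) (hmax : ∀ x ∈ s, x ∉ t → f x < f m) :
    wtAux f s < wtAux f t := by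
  have hs : wtAux f s = (∑ x ∈ s ∩ t, 2 ^ f x) + ∑ x ∈ s \ t, 2 ^ f x :=
    (Finset.sum_inter_add_sum_sdiff s t _).symm
  have ht : wtAux f t = (∑ x ∈ t ∩ s, 2 ^ f x) + ∑ x ∈ t \ s, 2 ^ f x :=
    (Finset.sum_inter_add_sum_sdiff t s _).symm
  rw [hs, ht, Finset.inter_comm]
  have h1 : (∑ x ∈ s \ t, 2 ^ f x) < 2 ^ f m := by
    calc (∑ x ∈ s \ t, 2 ^ f x) = ∑ k ∈ (s \ t).image f, 2 ^ k :=
          (Finset.sum_image (fun a _ b _ h => hf h)).symm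
      _ ≤ ∑ k ∈ Finset.range (f m), 2 ^ k := by
          apply Finset.sum_le_sum_of_subset
          intro k hk
          simp only [Finset.mem_image, Finset.mem_sdiff] at hk
          obtain ⟨x, ⟨hxs, hxt⟩, rfl⟩ := hk
          exact Finset.mem_range.2 (hmax x hxs hxt)
      _ < 2 ^ f m := sum_range_two_pow_lt' _
  have h2 : 2 ^ f m ≤ ∑ x ∈ t \ s, 2 ^ f x :=
    Finset.single_le_sum (f := fun x => 2 ^ f x) (fun x _ => Nat.zero_le _)
      (Finset.mem_sdiff.2 ⟨hm, hms⟩)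
  omega

lemma exists_max_symmdiff (f : α → ℕ) {s t : Finset α} (hst : s ≠ t) :
    ∃ m, ((m ∈ s ∧ m ∉ t) ∨ (m ∈ t ∧ m ∉ s)) ∧
      ∀ x, ((x ∈ s ∧ x ∉ t) ∨ (x ∈ t ∧ x ∉ s)) → f x ≤ f m := by
  have h := Finset.exists_max_image ((s \ t) ∪ (t \ s)) f ?_
  · obtain ⟨m, hm, hmax⟩ := h
    simp only [Finset.mem_union, Finset.mem_sdiff] at hm hmax
    exact ⟨m, hm, fun x hx => hmax x hx⟩
  by_contra h
  simp only [Finset.not_nonempty_iff_eq_empty, Finset.eq_empty_iff_forall_notMem,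
    Finset.mem_union, Finset.mem_sdiff, not_or, not_and, not_not] at h
  exact hst (Finset.Subset.antisymm (fun x hx => (h x).1 hx)
    (fun x hx => (h x).2 hx))

lemma wtAux_ne (f : α → ℕ) (hf : Function.Injective f) {s t : Finset α} (hst : s ≠ t) :
    wtAux f s ≠ wtAux f t := by
  obtain ⟨m, hm, hmax⟩ := exists_max_symmdiff f hst
  rcases hm with ⟨h1, h2⟩ | ⟨h1, h2⟩
  · have : wtAux f t < wtAux f s := by
      apply wtAux_lt f hf h1 h2
      intro x hx1 hx2
      have hle := hmax x (Or.inr ⟨hx1, hx2⟩)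
      have : x ≠ m := fun h => h2 (h ▸ hx1)
      exact lt_of_le_of_ne hle (fun h => this (hf h))
    omega
  · have : wtAux f s < wtAux f t := by
      apply wtAux_lt f hf h1 h2
      intro x hx1 hx2
      have hle := hmax x (Or.inl ⟨hx1, hx2⟩)
      have : x ≠ m := fun h => h2 (h ▸ hx1)
      exact lt_of_le_of_ne hle (fun h => this (hf h))
    omega

end Aux

lemma exists_max_right (f : α → ℕ) (hf : Function.Injective f) {s t : Finset α}
    (h : wtAux f s < wtAux f t) :
    ∃ m, (m ∈ t ∧ m ∉ s) ∧ ∀ x, ((x ∈ s ∧ x ∉ t) ∨ (x ∈ t ∧ x ∉ s)) → f x ≤ f m := by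
  have hst : s ≠ t := fun he => by simp [he] at h
  obtain ⟨m, hm, hmax⟩ := exists_max_symmdiff f hst
  rcases hm with ⟨h1, h2⟩ | hm'
  · have : wtAux f t < wtAux f s := by
      apply wtAux_lt f hf h1 h2
      intro x hx1 hx2
      have hle := hmax x (Or.inr ⟨hx1, hx2⟩)
      have hne : x ≠ m := fun h => h2 (h ▸ hx1)
      exact lt_of_le_of_ne hle (fun h => hne (hf h))
    omega
  · exact ⟨m, hm', hmax⟩

/-- Every matroid complex (a simplicial complex all of whose induced subcomplexes are pure)
is strongly shellable. Here Δ is a downward-closed finite family of finsets, and the matroid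
condition says: for every vertex subset W, all maximal faces contained in W have equal size. -/
theorem stmt2 {α : Type*} [Fintype α] [DecidableEq α] (Δ : Finset (Finset α))
    (hdown : ∀ s ∈ Δ, ∀ t ⊆ s, t ∈ Δ)
    (hmat : ∀ W : Finset α, ∀ s ∈ Δ, ∀ t ∈ Δ, s ⊆ W → t ⊆ W →
      (∀ u ∈ Δ, u ⊆ W → s ⊆ u → s = u) →
      (∀ u ∈ Δ, u ⊆ W → t ⊆ u → t = u) → s.card = t.card) :
    StronglyShellable (Δ.filter fun s => ∀ t ∈ Δ, s ⊆ t → s = t) := by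

  set F := Δ.filter fun s => ∀ t ∈ Δ, s ⊆ t → s = t with hFdef
  have hF : ∀ B, B ∈ F ↔ B ∈ Δ ∧ ∀ t ∈ Δ, B ⊆ t → B = t := by
    intro B; simp [hFdef, Finset.mem_filter]
  set f : α → ℕ := fun a => (Fintype.equivFin α a : ℕ) with hfdef
  have hf : Function.Injective f := fun a b h =>
    (Fintype.equivFin α).injective (Fin.val_injective h)
  -- every face extends to a facet
  have hup : ∀ s ∈ Δ, ∃ B ∈ F, s ⊆ B := by
    intro s hs
    obtain ⟨B, hBT, hBmax⟩ := Finset.exists_max_image (Δ.filter fun t => s ⊆ t)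
      Finset.card ⟨s, Finset.mem_filter.2 ⟨hs, Finset.Subset.refl s⟩⟩
    rcases Finset.mem_filter.1 hBT with ⟨hBΔ, hsB⟩
    refine ⟨B, (hF B).2 ⟨hBΔ, ?_⟩, hsB⟩
    intro t ht hBt
    exact Finset.eq_of_subset_of_card_le hBt
      (hBmax t (Finset.mem_filter.2 ⟨ht, hsB.trans hBt⟩))
  -- all facets have the same cardinality
  have hcard : ∀ B ∈ F, ∀ B' ∈ F, B.card = B'.card := by
    intro B hB B' hB'
    rcases (hF B).1 hB with ⟨hBΔ, hBmax⟩
    rcases (hF B').1 hB' with ⟨hB'Δ, hB'max⟩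
    exact hmat Finset.univ B hBΔ B' hB'Δ (Finset.subset_univ _) (Finset.subset_univ _)
      (fun u hu _ hsub => hBmax u hu hsub) (fun u hu _ hsub => hB'max u hu hsub)
  -- a face with facet cardinality is a facet
  have hfull : ∀ s ∈ Δ, ∀ B ∈ F, s.card = B.card → s ∈ F := by
    intro s hs B hB hsc
    refine (hF s).2 ⟨hs, ?_⟩
    intro u hu hsu
    obtain ⟨B', hB', huB'⟩ := hup u hu
    have h1 : B'.card = s.card := by rw [hcard B' hB' B hB, hsc]
    have h2 : s = B' := Finset.eq_of_subset_of_card_le (hsu.trans huB') (le_of_eq h1)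
    exact Finset.Subset.antisymm hsu (h2 ▸ huB')
  -- basis exchange
  have hexch : ∀ B ∈ F, ∀ B' ∈ F, ∀ x ∈ B' \ B,
      ∃ a ∈ B \ B', insert a (B'.erase x) ∈ F := by
    intro B hB B' hB' x hx
    rcases Finset.mem_sdiff.1 hx with ⟨hxB', hxB⟩
    rcases (hF B).1 hB with ⟨hBΔ, hBmax⟩
    rcases (hF B').1 hB' with ⟨hB'Δ, _⟩
    set s0 := B'.erase x with hs0def
    set W := s0 ∪ B with hWdef
    have hs0Δ : s0 ∈ Δ := hdown B' hB'Δ s0 (Finset.erase_subset _ _)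
    obtain ⟨C, hCT, hCmax⟩ := Finset.exists_max_image
      (Δ.filter fun t => s0 ⊆ t ∧ t ⊆ W) Finset.card
      ⟨s0, Finset.mem_filter.2 ⟨hs0Δ, Finset.Subset.refl s0, Finset.subset_union_left⟩⟩
    rcases Finset.mem_filter.1 hCT with ⟨hCΔ, hs0C, hCW⟩
    have hCmax' : ∀ u ∈ Δ, u ⊆ W → C ⊆ u → C = u := by
      intro u hu huW hCu
      exact Finset.eq_of_subset_of_card_le hCu
        (hCmax u (Finset.mem_filter.2 ⟨hu, hs0C.trans hCu, huW⟩))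
    have hcc : C.card = B.card :=
      hmat W C hCΔ B hBΔ hCW Finset.subset_union_right hCmax'
        (fun u hu _ hsub => hBmax u hu hsub)
    have hCF : C ∈ F := hfull C hCΔ B hB hcc
    have hs0card : s0.card = B'.card - 1 := Finset.card_erase_of_mem hxB'
    have hB'pos : 0 < B'.card := Finset.card_pos.2 ⟨x, hxB'⟩
    have hCcard : C.card = B'.card := by rw [hcc, hcard B hB B' hB']
    have hlt : s0.card < C.card := by omega
    have hss : s0 ⊂ C := lt_of_le_of_ne hs0C
      (fun h => by rw [h] at hlt; omega)
    obtain ⟨a, haC, has0⟩ := Finset.exists_of_ssubset hss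
    have haW : a ∈ W := hCW haC
    have haB : a ∈ B := by
      rcases Finset.mem_union.1 haW with h | h
      · exact absurd h has0
      · exact h
    have haB' : a ∉ B' := by
      intro h
      have hax : a ≠ x := fun he => hxB (he ▸ haB)
      exact has0 (Finset.mem_erase.2 ⟨hax, h⟩)
    have hCeq : C = insert a s0 := by
      apply (Finset.eq_of_subset_of_card_le (Finset.insert_subset haC hs0C) ?_).symm
      rw [Finset.card_insert_of_notMem has0]
      omega
    exact ⟨a, Finset.mem_sdiff.2 ⟨haB, haB'⟩, hCeq ▸ hCF⟩
  -- the sorted list of facets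
  set r : Finset α → Finset α → Prop := fun s t => wtAux f s ≤ wtAux f t with hrdef
  haveI : DecidableRel r := fun s t => Nat.decLe _ _
  haveI : IsTrans (Finset α) r := ⟨fun a b c => Nat.le_trans⟩
  haveI : Std.Total r := ⟨fun a b => Nat.le_total _ _⟩
  haveI : Std.Antisymm r := ⟨fun s t h1 h2 => by
    by_contra hne
    exact wtAux_ne f hf hne (Nat.le_antisymm h1 h2)⟩
  set l := Finset.sort F r with hldef
  refine ⟨l, Finset.sort_nodup F r, Finset.sort_toFinset F r, ?_⟩
  intro i j hij
  set Bi := l.get i with hBidef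
  set Bj := l.get j with hBjdef
  have hBiF : Bi ∈ F := (Finset.mem_sort r).1 (l.get_mem _)
  have hBjF : Bj ∈ F := (Finset.mem_sort r).1 (l.get_mem _)
  have hij' : i ≠ j := fun h => by omega
  have hne : Bi ≠ Bj := fun h =>
    hij' ((Finset.sort_nodup F r).get_inj_iff.1 h)
  have hwle : wtAux f Bi ≤ wtAux f Bj :=
    (Finset.pairwise_sort F r).rel_get_of_lt (show i < j from hij)
  have hw : wtAux f Bi < wtAux f Bj :=
    lt_of_le_of_ne hwle (wtAux_ne f hf hne)
  obtain ⟨m, ⟨hmBj, hmBi⟩, hmax⟩ := exists_max_right f hf hw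
  obtain ⟨a, ha, hCF⟩ := hexch Bi hBiF Bj hBjF m (Finset.mem_sdiff.2 ⟨hmBj, hmBi⟩)
  rcases Finset.mem_sdiff.1 ha with ⟨haBi, haBj⟩
  set C := insert a (Bj.erase m) with hCdef
  have ham : a ≠ m := fun h => hmBi (h ▸ haBi)
  have hmC : m ∉ C := by
    simp only [hCdef, Finset.mem_insert, Finset.mem_erase]
    push_neg
    exact ⟨fun h => ham h.symm, fun h => absurd rfl h⟩
  -- w C < w Bj
  have hwC : wtAux f C < wtAux f Bj := by
    apply wtAux_lt f hf hmBj hmC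
    intro x hxC hxBj
    have hxa : x = a := by
      rcases Finset.mem_insert.1 hxC with h | h
      · exact h
      · exact absurd (Finset.mem_of_mem_erase h) hxBj
    subst hxa
    have hle := hmax x (Or.inl ⟨haBi, haBj⟩)
    exact lt_of_le_of_ne hle (fun h => ham (hf h))
  obtain ⟨k, hkC⟩ := List.mem_iff_get.1 ((Finset.mem_sort r).2 hCF)
  refine ⟨k, ?_, ?_, ?_, ?_⟩
  · by_contra hkj
    have hjk : (j : ℕ) ≤ k := Nat.le_of_not_lt hkj
    rcases Nat.eq_or_lt_of_le hjk with h | h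
    · have : Bj = C := by rw [hBjdef, ← hkC]; congr 1; exact Fin.ext h
      rw [this] at hwC; omega
    · have : wtAux f Bj ≤ wtAux f C := by
        rw [← hkC]
        exact (Finset.pairwise_sort F r).rel_get_of_lt (show j < k from h)
      omega
  · rw [hkC]
    have : Bj \ C = {m} := by
      ext y
      simp only [hCdef, Finset.mem_sdiff, Finset.mem_insert, Finset.mem_erase,
        Finset.mem_singleton]
      constructor
      · rintro ⟨hy, hy2⟩
        push_neg at hy2
        rcases hy2 with ⟨hya, hy3⟩
        by_contra hym
        exact (hy3 hym) hy
      · rintro rfl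
        push_neg
        exact ⟨hmBj, fun h => ham h.symm, fun h => absurd rfl h⟩
    rw [this, Finset.card_singleton]
  · rw [hkC]
    intro y hy
    rcases Finset.mem_inter.1 hy with ⟨hy1, hy2⟩
    have hym : y ≠ m := fun h => hmBi (h ▸ hy1)
    exact Finset.mem_insert_of_mem (Finset.mem_erase.2 ⟨hym, hy2⟩)
  · rw [hkC]
    intro y hy
    rcases Finset.mem_insert.1 hy with h | h
    · exact Finset.mem_union.2 (Or.inl (h ▸ haBi))
    · exact Finset.mem_union.2 (Or.inr (Finset.mem_of_mem_erase h))
end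

section
/- Let X and Y be disjoint finite sets, λ a positive integer, and i ≤ j indices with max(0, λ−|Y|) ≤ i ≤ j ≤ min(λ, |X|). Let A_{i,j} be the collection of all sets X'∪Y' with X' ⊆ X, Y' ⊆ Y, |X'|+|Y'| = λ and i ≤ |X'| ≤ j. Then the simplicial complex whose facet set is A_{i,j} is a matroid complex, hence strongly shellable. -/
open scoped Classical

private lemma sum_range_two_pow (n : ℕ) : ∑ k ∈ Finset.range n, 2 ^ k = 2 ^ n - 1 := by
  induction n with
  | zero => simp
  | succ m ih =>
    rw [Finset.sum_range_succ, ih]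
    have := Nat.one_le_two_pow (n := m)
    have : (2:ℕ) ^ (m+1) = 2 * 2 ^ m := by ring
    omega

/-- For disjoint finite sets X, Y, λ > 0 and max(0, λ-|Y|) ≤ i ≤ j ≤ min(λ, |X|), the family
A_{i,j} of sets X' ∪ Y' with X' ⊆ X, Y' ⊆ Y, |X'| + |Y'| = λ, i ≤ |X'| ≤ j is the facet set of
a matroid complex (every induced subcomplex of the downward closure is pure), hence is
strongly shellable. -/
theorem stmt3 {α : Type*} [DecidableEq α] (X Y : Finset α) (hXY : Disjoint X Y)
    (lam : ℕ) (hlam : 0 < lam) (i j : ℕ)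
    (h1 : max 0 (lam - Y.card) ≤ i) (h2 : i ≤ j) (h3 : j ≤ min lam X.card)
    (A : Finset (Finset α))
    (hA : A = ((X.powerset ×ˢ Y.powerset).filter fun p =>
        p.1.card + p.2.card = lam ∧ i ≤ p.1.card ∧ p.1.card ≤ j).image fun p => p.1 ∪ p.2)
    (Δ : Finset (Finset α)) (hΔ : Δ = A.biUnion Finset.powerset) :
    (∀ W : Finset α, ∀ s ∈ Δ, ∀ t ∈ Δ, s ⊆ W → t ⊆ W →
      (∀ u ∈ Δ, u ⊆ W → s ⊆ u → s = u) →
      (∀ u ∈ Δ, u ⊆ W → t ⊆ u → t = u) → s.card = t.card) ∧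
    StronglyShellable A := by
  have hiY : lam - i ≤ Y.card := by omega
  have hjlam : j ≤ lam := le_trans h3 (min_le_left _ _)
  have hjX : j ≤ X.card := le_trans h3 (min_le_right _ _)
  -- decomposition of subsets of X ∪ Y
  have hdec : ∀ F : Finset α, F ⊆ X ∪ Y → (F ∩ X) ∪ (F ∩ Y) = F := by
    intro F hF
    rw [← Finset.inter_union_distrib_left]
    exact Finset.inter_eq_left.2 hF
  have hdisj : ∀ F : Finset α, Disjoint (F ∩ X) (F ∩ Y) :=
    fun F => (hXY.mono (Finset.inter_subset_right) (Finset.inter_subset_right))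
  have hcard : ∀ F : Finset α, F ⊆ X ∪ Y → (F ∩ X).card + (F ∩ Y).card = F.card := by
    intro F hF
    rw [← Finset.card_union_of_disjoint (hdisj F), hdec F hF]
  -- characterization of A
  have hAchar : ∀ F : Finset α, F ∈ A ↔
      F ⊆ X ∪ Y ∧ F.card = lam ∧ i ≤ (F ∩ X).card ∧ (F ∩ X).card ≤ j := by
    intro F
    rw [hA]
    simp only [Finset.mem_image, Finset.mem_filter, Finset.mem_product, Finset.mem_powerset]
    constructor
    · rintro ⟨⟨X', Y'⟩, ⟨⟨hX', hY'⟩, hsum, hi, hj⟩, rfl⟩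
      dsimp only at hX' hY' hsum hi hj ⊢
      have hXX : (X' ∪ Y') ∩ X = X' := by
        rw [Finset.union_inter_distrib_right, Finset.inter_eq_left.2 hX',
          Finset.disjoint_iff_inter_eq_empty.1 (hXY.symm.mono hY' le_rfl), Finset.union_empty]
      have hYY : (X' ∪ Y') ∩ Y = Y' := by
        rw [Finset.union_inter_distrib_right, Finset.inter_eq_left.2 hY',
          Finset.disjoint_iff_inter_eq_empty.1 (hXY.mono hX' le_rfl), Finset.empty_union]
      refine ⟨Finset.union_subset_union hX' hY', ?_, ?_, ?_⟩
      · rw [← hcard _ (Finset.union_subset_union hX' hY'), hXX, hYY]; exact hsum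
      · rw [hXX]; exact hi
      · rw [hXX]; exact hj
    · rintro ⟨hF, hc, hi, hj⟩
      refine ⟨⟨F ∩ X, F ∩ Y⟩, ⟨⟨Finset.inter_subset_right, Finset.inter_subset_right⟩,
        ?_, hi, hj⟩, hdec F hF⟩
      rw [hcard F hF]; exact hc
  -- characterization of Δ
  have hΔchar : ∀ s : Finset α, s ∈ Δ ↔
      s ⊆ X ∪ Y ∧ (s ∩ X).card ≤ j ∧ (s ∩ Y).card ≤ lam - i ∧ s.card ≤ lam := by
    intro s
    rw [hΔ]
    simp only [Finset.mem_biUnion, Finset.mem_powerset]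
    constructor
    · rintro ⟨F, hF, hsF⟩
      obtain ⟨hFU, hFc, hFi, hFj⟩ := (hAchar F).1 hF
      have h1' : s ⊆ X ∪ Y := hsF.trans hFU
      have hX' : (s ∩ X).card ≤ j :=
        le_trans (Finset.card_le_card (Finset.inter_subset_inter hsF le_rfl)) hFj
      have hY' : (s ∩ Y).card ≤ lam - i := by
        have := Finset.card_le_card (Finset.inter_subset_inter hsF le_rfl (t := Y))
        have := hcard F hFU
        omega
      exact ⟨h1', hX', hY', le_trans (Finset.card_le_card hsF) (le_of_eq hFc)⟩
    · rintro ⟨hsU, hsX, hsY, hsc⟩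
      have hsplit := hcard s hsU
      set a := max i (s ∩ X).card with ha
      have haj : a ≤ j := max_le (h2) hsX
      obtain ⟨X', hX1, hX2, hX3⟩ :=
        Finset.exists_subsuperset_card_eq (Finset.inter_subset_right : s ∩ X ⊆ X)
          (le_max_right _ _) (le_trans haj hjX)
      have hYa : (s ∩ Y).card ≤ lam - a := by
        rw [ha]; omega
      obtain ⟨Y', hY1, hY2, hY3⟩ :=
        Finset.exists_subsuperset_card_eq (Finset.inter_subset_right : s ∩ Y ⊆ Y)
          hYa (by omega)
      refine ⟨X' ∪ Y', ?_, ?_⟩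
      · refine (hAchar _).2 ⟨Finset.union_subset_union hX2 hY2, ?_, ?_, ?_⟩
        · rw [← hcard _ (Finset.union_subset_union hX2 hY2)]
          have hXX : (X' ∪ Y') ∩ X = X' := by
            rw [Finset.union_inter_distrib_right, Finset.inter_eq_left.2 hX2,
              Finset.disjoint_iff_inter_eq_empty.1 (hXY.symm.mono hY2 le_rfl), Finset.union_empty]
          have hYY : (X' ∪ Y') ∩ Y = Y' := by
            rw [Finset.union_inter_distrib_right, Finset.inter_eq_left.2 hY2,
              Finset.disjoint_iff_inter_eq_empty.1 (hXY.mono hX2 le_rfl), Finset.empty_union]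
          rw [hXX, hYY, hX3, hY3]; omega
        · have hXX : (X' ∪ Y') ∩ X = X' := by
            rw [Finset.union_inter_distrib_right, Finset.inter_eq_left.2 hX2,
              Finset.disjoint_iff_inter_eq_empty.1 (hXY.symm.mono hY2 le_rfl), Finset.union_empty]
          rw [hXX, hX3]; exact le_max_left _ _
        · have hXX : (X' ∪ Y') ∩ X = X' := by
            rw [Finset.union_inter_distrib_right, Finset.inter_eq_left.2 hX2,
              Finset.disjoint_iff_inter_eq_empty.1 (hXY.symm.mono hY2 le_rfl), Finset.union_empty]
          rw [hXX, hX3]; exact haj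
      · calc s = (s ∩ X) ∪ (s ∩ Y) := (hdec s hsU).symm
          _ ⊆ X' ∪ Y' := Finset.union_subset_union hX1 hY1
  constructor
  · -- purity of induced subcomplexes
    intro W s hs t ht hsW htW hsmax htmax
    have key : ∀ u ∈ Δ, u ⊆ W → (∀ v ∈ Δ, v ⊆ W → u ⊆ v → u = v) →
        u.card = min lam (min j (W ∩ X).card + min (lam - i) (W ∩ Y).card) := by
      intro u hu huW humax
      obtain ⟨huU, huX, huY, huc⟩ := (hΔchar u).1 hu
      have husplit := hcard u huU
      have hle1 : (u ∩ X).card ≤ min j (W ∩ X).card :=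
        le_min huX (Finset.card_le_card (Finset.inter_subset_inter huW le_rfl))
      have hle2 : (u ∩ Y).card ≤ min (lam - i) (W ∩ Y).card :=
        le_min huY (Finset.card_le_card (Finset.inter_subset_inter huW le_rfl))
      by_contra hne
      have hlt : u.card < min lam (min j (W ∩ X).card + min (lam - i) (W ∩ Y).card) := by
        omega
      have hcase : (u ∩ X).card < min j (W ∩ X).card ∨
          (u ∩ Y).card < min (lam - i) (W ∩ Y).card := by omega
      rcases hcase with hc | hc
      · have hWX : (u ∩ X).card < (W ∩ X).card := lt_of_lt_of_le hc (min_le_right _ _)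
        have : ¬ (W ∩ X ⊆ u ∩ X) := fun h => absurd (Finset.card_le_card h) (by omega)
        obtain ⟨x, hxWX, hxu⟩ := Finset.not_subset.1 this
        have hxX : x ∈ X := (Finset.mem_inter.1 hxWX).2
        have hxW : x ∈ W := (Finset.mem_inter.1 hxWX).1
        have hxu' : x ∉ u := fun h => hxu (Finset.mem_inter.2 ⟨h, hxX⟩)
        have hxY : x ∉ Y := Finset.disjoint_left.1 hXY hxX
        have hu' : insert x u ∈ Δ := by
          refine (hΔchar _).2 ⟨Finset.insert_subset (Finset.mem_union_left _ hxX) huU, ?_, ?_, ?_⟩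
          · rw [Finset.insert_inter_of_mem hxX, Finset.card_insert_of_notMem hxu]
            omega
          · rw [Finset.insert_inter_of_notMem hxY]
            exact huY
          · rw [Finset.card_insert_of_notMem hxu']
            omega
        have := humax _ hu' (Finset.insert_subset hxW huW) (Finset.subset_insert _ _)
        exact hxu' (this ▸ Finset.mem_insert_self x u)
      · have hWY : (u ∩ Y).card < (W ∩ Y).card := lt_of_lt_of_le hc (min_le_right _ _)
        have : ¬ (W ∩ Y ⊆ u ∩ Y) := fun h => absurd (Finset.card_le_card h) (by omega)
        obtain ⟨x, hxWY, hxu⟩ := Finset.not_subset.1 this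
        have hxY : x ∈ Y := (Finset.mem_inter.1 hxWY).2
        have hxW : x ∈ W := (Finset.mem_inter.1 hxWY).1
        have hxu' : x ∉ u := fun h => hxu (Finset.mem_inter.2 ⟨h, hxY⟩)
        have hxX : x ∉ X := Finset.disjoint_right.1 hXY hxY
        have hu' : insert x u ∈ Δ := by
          refine (hΔchar _).2 ⟨Finset.insert_subset (Finset.mem_union_right _ hxY) huU, ?_, ?_, ?_⟩
          · rw [Finset.insert_inter_of_notMem hxX]
            exact huX
          · rw [Finset.insert_inter_of_mem hxY, Finset.card_insert_of_notMem hxu]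
            omega
          · rw [Finset.card_insert_of_notMem hxu']
            omega
        have := humax _ hu' (Finset.insert_subset hxW huW) (Finset.subset_insert _ _)
        exact hxu' (this ▸ Finset.mem_insert_self x u)
    rw [key s hs hsW hsmax, key t ht htW htmax]
  · -- strong shellability
    set f : α → ℕ := fun a => (X ∪ Y).toList.idxOf a with hf
    have finj : ∀ a ∈ X ∪ Y, ∀ b ∈ X ∪ Y, f a = f b → a = b := by
      intro a ha b hb hab
      have ha' : a ∈ (X ∪ Y).toList := Finset.mem_toList.2 ha
      have hb' : b ∈ (X ∪ Y).toList := Finset.mem_toList.2 hb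
      exact (List.idxOf_inj ha').1 hab
    set code : Finset α → ℕ := fun F => ∑ x ∈ F, 2 ^ (f x) with hcode
    -- key monotonicity lemma
    have codeLt : ∀ F G : Finset α, F ⊆ X ∪ Y → G ⊆ X ∪ Y → ∀ b ∈ F, b ∉ G →
        (∀ a ∈ G, a ∉ F → f a < f b) → code G < code F := by
      intro F G hFU hGU b hbF hbG hmax
      have hb' : b ∈ F \ G := Finset.mem_sdiff.2 ⟨hbF, hbG⟩
      have e1 : code G = (∑ x ∈ G ∩ F, 2 ^ f x) + ∑ x ∈ G \ F, 2 ^ f x :=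
        (Finset.sum_inter_add_sum_sdiff G F _).symm
      have e2 : code F = (∑ x ∈ F ∩ G, 2 ^ f x) + ∑ x ∈ F \ G, 2 ^ f x :=
        (Finset.sum_inter_add_sum_sdiff F G _).symm
      have hsmall : (∑ x ∈ G \ F, 2 ^ f x) < 2 ^ f b := by
        have hginj : ∀ x ∈ G \ F, ∀ y ∈ G \ F, f x = f y → x = y := by
          intro x hx y hy hxy
          exact finj x (hGU (Finset.mem_sdiff.1 hx).1) y (hGU (Finset.mem_sdiff.1 hy).1) hxy
        have e3 : (∑ x ∈ G \ F, 2 ^ f x) = ∑ n ∈ (G \ F).image f, 2 ^ n :=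
          (Finset.sum_image hginj).symm
        have hsub : (G \ F).image f ⊆ Finset.range (f b) := by
          intro n hn
          obtain ⟨a, ha, rfl⟩ := Finset.mem_image.1 hn
          obtain ⟨haG, haF⟩ := Finset.mem_sdiff.1 ha
          exact Finset.mem_range.2 (hmax a haG haF)
        calc (∑ x ∈ G \ F, 2 ^ f x) = ∑ n ∈ (G \ F).image f, 2 ^ n := e3
          _ ≤ ∑ n ∈ Finset.range (f b), 2 ^ n :=
            Finset.sum_le_sum_of_subset hsub
          _ = 2 ^ f b - 1 := sum_range_two_pow _
          _ < 2 ^ f b := by have := Nat.one_le_two_pow (n := f b); omega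
      have hbig : 2 ^ f b ≤ ∑ x ∈ F \ G, 2 ^ f x :=
        Finset.single_le_sum (f := fun x => 2 ^ f x) (fun x _ => Nat.zero_le _) hb'
      rw [e1, e2, Finset.inter_comm]
      omega
    -- the sorted list of facets
    set le : Finset α → Finset α → Bool := fun F G => decide (code F ≤ code G) with hle
    set l : List (Finset α) := A.toList.mergeSort le with hl
    have hperm : l.Perm A.toList := List.mergeSort_perm _ _
    have hnodup : l.Nodup := hperm.nodup_iff.2 (Finset.nodup_toList A)
    have htf : l.toFinset = A := by
      rw [List.toFinset_eq_of_perm _ _ hperm, Finset.toList_toFinset]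
    have hsorted : l.Pairwise (fun F G => code F ≤ code G) := by
      have := List.pairwise_mergeSort (le := le)
        (fun a b c hab hbc => by
          simp only [hle, decide_eq_true_eq] at *; omega)
        (fun a b => by simp only [hle, Bool.or_eq_true, decide_eq_true_eq]; omega)
        A.toList
      rw [← hl] at this
      exact this.imp (fun h => by simpa [hle, decide_eq_true_eq] using h)
    have hmeml : ∀ F : Finset α, F ∈ l ↔ F ∈ A := by
      intro F; rw [← htf, List.mem_toFinset]
    refine ⟨l, hnodup, htf, ?_⟩
    intro i0 j0 hij
    set G := l.get i0 with hG
    set F := l.get j0 with hF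
    have hGA : G ∈ A := (hmeml G).1 (l.get_mem _)
    have hFA : F ∈ A := (hmeml F).1 (l.get_mem _)
    have hGle : code G ≤ code F :=
      List.pairwise_iff_get.1 hsorted i0 j0 (Fin.mk_lt_mk.2 hij)
    have hGFne : G ≠ F := fun h => absurd ((hnodup.get_inj_iff).1 h) (Fin.ne_of_lt (Fin.mk_lt_mk.2 hij))
    obtain ⟨hGU, hGc, hGi, hGj⟩ := (hAchar G).1 hGA
    obtain ⟨hFU, hFc, hFi, hFj⟩ := (hAchar F).1 hFA
    have hGsplit := hcard G hGU
    have hFsplit := hcard F hFU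
    -- symmetric difference is nonempty on both sides
    have hFG : (F \ G).Nonempty := by
      rw [Finset.sdiff_nonempty]
      intro hsub
      exact hGFne (Finset.eq_of_subset_of_card_le hsub (by omega)).symm
    have hGF : (G \ F).Nonempty := by
      rw [Finset.sdiff_nonempty]
      intro hsub
      exact hGFne (Finset.eq_of_subset_of_card_le hsub (by omega))
    -- pick b maximizing f over the symmetric difference
    obtain ⟨b, hbD, hbmax⟩ := Finset.exists_max_image ((F \ G) ∪ (G \ F)) f
      ⟨hFG.choose, Finset.mem_union_left _ hFG.choose_spec⟩
    -- b must lie in F \ G, else code F < code G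
    have hbFG : b ∈ F \ G := by
      rcases Finset.mem_union.1 hbD with h | h
      · exact h
      · exfalso
        obtain ⟨hbG, hbF⟩ := Finset.mem_sdiff.1 h
        have : code F < code G := by
          refine codeLt G F hGU hFU b hbG hbF ?_
          intro a haF haG
          have haD : a ∈ (F \ G) ∪ (G \ F) :=
            Finset.mem_union_left _ (Finset.mem_sdiff.2 ⟨haF, haG⟩)
          have hne : a ≠ b := fun h => hbF (h ▸ haF)
          have : f a ≠ f b := fun h =>
            hne (finj a (hFU haF) b (hGU hbG) h)
          exact lt_of_le_of_ne (hbmax a haD) this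
        omega
    obtain ⟨hbF, hbG⟩ := Finset.mem_sdiff.1 hbFG
    -- the generic step: given a suitable x, build the facet K
    have main : ∀ x ∈ G, x ∉ F →
        i ≤ ((insert x (F.erase b)) ∩ X).card → ((insert x (F.erase b)) ∩ X).card ≤ j →
        ∃ k : Fin l.length, (k : ℕ) < (j0 : ℕ) ∧
          (l.get j0 \ l.get k).card = 1 ∧
          l.get i0 ∩ l.get j0 ⊆ l.get k ∧ l.get k ⊆ l.get i0 ∪ l.get j0 := by
      intro x hxG hxF hKi hKj
      set K := insert x (F.erase b) with hK
      have hxb : x ≠ b := fun h => hxF (h ▸ hbF)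
      have hxFe : x ∉ F.erase b := fun h => hxF (Finset.mem_of_mem_erase h)
      have hKU : K ⊆ X ∪ Y :=
        Finset.insert_subset (hGU hxG) ((Finset.erase_subset _ _).trans hFU)
      have hKc : K.card = lam := by
        rw [hK, Finset.card_insert_of_notMem hxFe, Finset.card_erase_of_mem hbF]
        omega
      have hKA : K ∈ A := (hAchar K).2 ⟨hKU, hKc, hKi, hKj⟩
      have hbK : b ∉ K := by
        rw [hK, Finset.mem_insert]
        push_neg
        exact ⟨fun h => hxb h.symm, Finset.notMem_erase _ _⟩
      have hcodeK : code K < code F := by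
        refine codeLt F K hFU hKU b hbF hbK ?_
        intro a haK haF
        have hax : a = x := by
          rcases Finset.mem_insert.1 haK with h | h
          · exact h
          · exact absurd (Finset.mem_of_mem_erase h) haF
        subst hax
        have haD : a ∈ (F \ G) ∪ (G \ F) :=
          Finset.mem_union_right _ (Finset.mem_sdiff.2 ⟨hxG, haF⟩)
        have hne : f a ≠ f b := fun h => hxb (finj a (hGU hxG) b (hFU hbF) h)
        exact lt_of_le_of_ne (hbmax a haD) hne
      have hKl : K ∈ l := (hmeml K).2 hKA
      obtain ⟨k, hk⟩ := List.mem_iff_get.1 hKl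
      refine ⟨k, ?_, ?_, ?_, ?_⟩
      · by_contra hcon
        push_neg at hcon
        rcases lt_or_eq_of_le hcon with h | h
        · have h2' : code (l.get j0) ≤ code (l.get k) :=
            List.pairwise_iff_get.1 hsorted j0 k (Fin.mk_lt_mk.2 h)
          rw [hk, ← hF] at h2'
          omega
        · have h2' : l.get j0 = l.get k := by
            congr 1
            exact Fin.ext h
          rw [hk, ← hF] at h2'
          rw [h2'] at hcodeK
          omega
      · rw [hk, ← hF]
        have : F \ K = {b} := by
          ext a
          simp only [hK, Finset.mem_sdiff, Finset.mem_insert, Finset.mem_erase,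
            Finset.mem_singleton]
          constructor
          · rintro ⟨haF, hcon⟩
            push_neg at hcon
            by_contra hab
            exact (hcon.2 hab) haF
          · rintro rfl
            exact ⟨hbF, by push_neg; exact ⟨fun h => hxF (h ▸ hbF), fun h => absurd rfl h⟩⟩
        rw [this, Finset.card_singleton]
      · rw [hk, ← hF, ← hG]
        intro a ha
        obtain ⟨haG, haF⟩ := Finset.mem_inter.1 ha
        have hab : a ≠ b := fun h => hbG (h ▸ haG)
        exact Finset.mem_insert_of_mem (Finset.mem_erase.2 ⟨hab, haF⟩)
      · rw [hk, ← hF, ← hG]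
        intro a ha
        rcases Finset.mem_insert.1 ha with h | h
        · exact Finset.mem_union_left _ (h ▸ hxG)
        · exact Finset.mem_union_right _ (Finset.mem_of_mem_erase h)
    -- now choose x depending on where b lies
    rcases Finset.mem_union.1 (hFU hbF) with hbX | hbY
    · -- b ∈ X
      have hbnY : b ∉ Y := Finset.disjoint_left.1 hXY hbX
      by_cases hex : ((G \ F) ∩ X).Nonempty
      · obtain ⟨x, hx⟩ := hex
        obtain ⟨hxGF, hxX⟩ := Finset.mem_inter.1 hx
        obtain ⟨hxG, hxF⟩ := Finset.mem_sdiff.1 hxGF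
        have hxFX : x ∉ (F ∩ X).erase b := fun h =>
          hxF (Finset.mem_of_mem_inter_left (Finset.mem_of_mem_erase h))
        have hcardK : ((insert x (F.erase b)) ∩ X).card = (F ∩ X).card := by
          rw [Finset.insert_inter_of_mem hxX, Finset.erase_inter,
            Finset.card_insert_of_notMem hxFX,
            Finset.card_erase_of_mem (Finset.mem_inter.2 ⟨hbF, hbX⟩)]
          have : 0 < (F ∩ X).card := Finset.card_pos.2 ⟨b, Finset.mem_inter.2 ⟨hbF, hbX⟩⟩
          omega
        exact main x hxG hxF (by omega) (by omega)
      · -- all of G \ F is in Y; then (F ∩ X).card > i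
        obtain ⟨x, hxGF⟩ := hGF
        obtain ⟨hxG, hxF⟩ := Finset.mem_sdiff.1 hxGF
        have hxnX : x ∉ X := fun h =>
          hex ⟨x, Finset.mem_inter.2 ⟨hxGF, h⟩⟩
        have hGXsub : G ∩ X ⊆ (F ∩ X).erase b := by
          intro a ha
          obtain ⟨haG, haX⟩ := Finset.mem_inter.1 ha
          have haF : a ∈ F := by
            by_contra haF
            exact hex ⟨a, Finset.mem_inter.2 ⟨Finset.mem_sdiff.2 ⟨haG, haF⟩, haX⟩⟩
          exact Finset.mem_erase.2 ⟨fun h => hbG (h ▸ haG), Finset.mem_inter.2 ⟨haF, haX⟩⟩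
        have hGXle : (G ∩ X).card ≤ (F ∩ X).card - 1 := by
          have := Finset.card_le_card hGXsub
          rw [Finset.card_erase_of_mem (Finset.mem_inter.2 ⟨hbF, hbX⟩)] at this
          exact this
        have hFXpos : 0 < (F ∩ X).card := Finset.card_pos.2 ⟨b, Finset.mem_inter.2 ⟨hbF, hbX⟩⟩
        have hcardK : ((insert x (F.erase b)) ∩ X).card = (F ∩ X).card - 1 := by
          rw [Finset.insert_inter_of_notMem hxnX, Finset.erase_inter,
            Finset.card_erase_of_mem (Finset.mem_inter.2 ⟨hbF, hbX⟩)]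
        exact main x hxG hxF (by omega) (by omega)
    · -- b ∈ Y
      have hbnX : b ∉ X := Finset.disjoint_right.1 hXY hbY
      by_cases hex : ((G \ F) ∩ Y).Nonempty
      · obtain ⟨x, hx⟩ := hex
        obtain ⟨hxGF, hxY⟩ := Finset.mem_inter.1 hx
        obtain ⟨hxG, hxF⟩ := Finset.mem_sdiff.1 hxGF
        have hxnX : x ∉ X := Finset.disjoint_right.1 hXY hxY
        have hcardK : ((insert x (F.erase b)) ∩ X).card = (F ∩ X).card := by
          rw [Finset.insert_inter_of_notMem hxnX, Finset.erase_inter,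
            Finset.erase_eq_of_notMem (fun h => hbnX (Finset.mem_of_mem_inter_right h))]
        exact main x hxG hxF (by omega) (by omega)
      · -- all of G \ F is in X; then (F ∩ X).card < j
        obtain ⟨x, hxGF⟩ := hGF
        obtain ⟨hxG, hxF⟩ := Finset.mem_sdiff.1 hxGF
        have hxX : x ∈ X := by
          rcases Finset.mem_union.1 (hGU hxG) with h | h
          · exact h
          · exact absurd ⟨x, Finset.mem_inter.2 ⟨hxGF, h⟩⟩ hex
        have hGYsub : G ∩ Y ⊆ (F ∩ Y).erase b := by
          intro a ha
          obtain ⟨haG, haY⟩ := Finset.mem_inter.1 ha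
          have haF : a ∈ F := by
            by_contra haF
            exact hex ⟨a, Finset.mem_inter.2 ⟨Finset.mem_sdiff.2 ⟨haG, haF⟩, haY⟩⟩
          exact Finset.mem_erase.2 ⟨fun h => hbG (h ▸ haG), Finset.mem_inter.2 ⟨haF, haY⟩⟩
        have hGYle : (G ∩ Y).card ≤ (F ∩ Y).card - 1 := by
          have := Finset.card_le_card hGYsub
          rw [Finset.card_erase_of_mem (Finset.mem_inter.2 ⟨hbF, hbY⟩)] at this
          exact this
        have hFYpos : 0 < (F ∩ Y).card := Finset.card_pos.2 ⟨b, Finset.mem_inter.2 ⟨hbF, hbY⟩⟩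
        have hxFX : x ∉ F ∩ X := fun h => hxF (Finset.mem_of_mem_inter_left h)
        have hcardK : ((insert x (F.erase b)) ∩ X).card = (F ∩ X).card + 1 := by
          rw [Finset.insert_inter_of_mem hxX, Finset.erase_inter,
            Finset.erase_eq_of_notMem (fun h => hbnX (Finset.mem_of_mem_inter_right h)),
            Finset.card_insert_of_notMem hxFX]
        exact main x hxG hxF (by omega) (by omega)
end

section
/- Let C be a uniform clutter that is edgewise strongly shellable, and let W be a subset of its vertex set. Then the induced subclutter C_W = {E ∈ E(C) : E ⊆ W} is also edgewise strongly shellable. -/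
open scoped Classical

/-- If a uniform clutter C is edgewise strongly shellable, then so is the induced subclutter
on any vertex subset W. -/
theorem stmt4 {α : Type*} [DecidableEq α] (C : Finset (Finset α)) (d : ℕ)
    (huniform : ∀ e ∈ C, e.card = d) (hESS : StronglyShellable C) (W : Finset α) :
    StronglyShellable (C.filter fun e => e ⊆ W) := by
  obtain ⟨l, hnd, hlC, hl⟩ := hESS
  refine ⟨l.filter (fun e => e ⊆ W), hnd.filter _, ?_, ?_⟩
  · rw [List.toFinset_filter, hlC]
    simp
  · set l' := l.filter (fun e => (e ⊆ W : Prop)) with hl'def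
    have hsub : List.Sublist l' l := List.filter_sublist
    obtain ⟨f, hf⟩ := List.sublist_iff_exists_fin_orderEmbedding_get_eq.mp hsub
    intro i j hij
    have hfij : (f i : ℕ) < (f j : ℕ) := by
      exact_mod_cast f.strictMono (show i < j from hij)
    obtain ⟨k, hk, hcard, hsub1, hsub2⟩ := hl (f i) (f j) hfij
    -- l.get k ⊆ W
    have hiW : l'.get i ⊆ W := by
      have := List.get_mem l' i
      rw [List.mem_filter] at this
      simpa using this.2
    have hjW : l'.get j ⊆ W := by
      have := List.get_mem l' j
      rw [List.mem_filter] at this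
      simpa using this.2
    have hkW : l.get k ⊆ W := by
      exact hsub2.trans (Finset.union_subset (hf i ▸ hiW) (hf j ▸ hjW))
    have hkmem : l.get k ∈ l' := by
      rw [hl'def, List.mem_filter]
      exact ⟨List.get_mem l k, by simpa using hkW⟩
    obtain ⟨k', hk'⟩ := List.get_of_mem hkmem
    have hfk' : f k' = k := by
      have hinj := List.nodup_iff_injective_get.mp hnd
      apply hinj
      rw [← hf k', hk']
    refine ⟨k', ?_, ?_, ?_, ?_⟩
    · have : (f k' : ℕ) < (f j : ℕ) := by rw [hfk']; exact hk
      exact_mod_cast f.lt_iff_lt.mp this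
    · rw [hf j, hk']
      exact hcard
    · rw [hf i, hf j, hk']
      exact hsub1
    · rw [hf i, hf j, hk']
      exact hsub2
end

section
/- Let G be a finite simple graph. If the complement graph Ḡ admits a perfect elimination ordering of its vertices, then G is edgewise strongly shellable. -/
open scoped Classical

def edgeSets {V : Type*} [Fintype V] [DecidableEq V] (G : SimpleGraph V) [DecidableRel G.Adj] :
    Finset (Finset V) :=
  G.edgeFinset.image (Sym2.lift ⟨fun u v => ({u, v} : Finset V), fun u v => Finset.pair_comm u v⟩)

section Aux

variable {V : Type*} [DecidableEq V] (G : SimpleGraph V) [DecidableRel G.Adj]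

def edgeList : List V → List (Finset V)
  | [] => []
  | v :: vs => (vs.filter (fun w => G.Adj v w)).map (fun w => ({v, w} : Finset V)) ++ edgeList vs

variable {G}

lemma edgeList_subset {l : List V} {e : Finset V} (he : e ∈ edgeList G l) :
    ∀ x ∈ e, x ∈ l := by
  induction l with
  | nil => simp [edgeList] at he
  | cons v vs ih =>
    simp only [edgeList, List.mem_append, List.mem_map, List.mem_filter,
      decide_eq_true_eq] at he
    rcases he with ⟨w, ⟨hw, _⟩, rfl⟩ | he
    · intro x hx
      rcases Finset.mem_insert.mp hx with rfl | hx
      · exact List.mem_cons_self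
      · exact List.mem_cons_of_mem _ (Finset.mem_singleton.mp hx ▸ hw)
    · exact fun x hx => List.mem_cons_of_mem _ (ih he x hx)

lemma edgeList_shape {l : List V} {e : Finset V} (he : e ∈ edgeList G l) :
    ∃ c d, G.Adj c d ∧ e = {c, d} := by
  induction l with
  | nil => simp [edgeList] at he
  | cons v vs ih =>
    simp only [edgeList, List.mem_append, List.mem_map, List.mem_filter,
      decide_eq_true_eq] at he
    rcases he with ⟨w, ⟨_, hw⟩, rfl⟩ | he
    · exact ⟨v, w, hw, rfl⟩
    · exact ih he

lemma mem_edgeList_of_adj {l : List V} {u w : V} (hu : u ∈ l) (hw : w ∈ l)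
    (h : G.Adj u w) : ({u, w} : Finset V) ∈ edgeList G l := by
  induction l with
  | nil => simp at hu
  | cons v vs ih =>
    simp only [edgeList, List.mem_append, List.mem_map, List.mem_filter,
      decide_eq_true_eq]
    by_cases huv : u = v
    · subst huv
      left
      refine ⟨w, ⟨?_, h⟩, rfl⟩
      rcases List.mem_cons.mp hw with rfl | hw'
      · exact absurd rfl h.ne
      · exact hw'
    · by_cases hwv : w = v
      · subst hwv
        left
        have hu' : u ∈ vs := (List.mem_cons.mp hu).resolve_left huv
        exact ⟨u, ⟨hu', h.symm⟩, Finset.pair_comm w u⟩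
      · exact Or.inr (ih ((List.mem_cons.mp hu).resolve_left huv)
          ((List.mem_cons.mp hw).resolve_left hwv))

lemma nodup_edgeList {l : List V} (h : l.Nodup) : (edgeList G l).Nodup := by
  induction l with
  | nil => simp [edgeList]
  | cons v vs ih =>
    rcases List.nodup_cons.mp h with ⟨hv, hvs⟩
    rw [edgeList, List.nodup_append]
    refine ⟨?_, ih hvs, ?_⟩
    · refine List.Nodup.map_on ?_ (List.Nodup.filter _ hvs)
      intro w hwm w' hwm' hee
      have hw : w ∈ vs := (List.mem_filter.mp hwm).1
      have hw' : w' ∈ vs := (List.mem_filter.mp hwm').1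
      have h1 : w ∈ ({v, w'} : Finset V) := by
        rw [← hee]; exact Finset.mem_insert_of_mem (Finset.mem_singleton_self _)
      rcases Finset.mem_insert.mp h1 with rfl | h1
      · exact absurd hw hv
      · exact Finset.mem_singleton.mp h1
    · intro e he e' he' hee
      simp only [List.mem_map, List.mem_filter] at he
      rcases he with ⟨w, hw, rfl⟩
      exact hv (edgeList_subset he' v (by rw [← hee]; exact Finset.mem_insert_self _ _))

def Peo (G : SimpleGraph V) : List V → Prop
  | [] => True
  | v :: vs => (∀ c ∈ vs, ∀ d ∈ vs, c ≠ d → Gᶜ.Adj v c → Gᶜ.Adj v d → Gᶜ.Adj c d) ∧ Peo G vs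

lemma peo_of_fin : ∀ (l : List V),
    (∀ i j k : Fin l.length, (i : ℕ) < (j : ℕ) → (i : ℕ) < (k : ℕ) → j ≠ k →
      Gᶜ.Adj (l.get i) (l.get j) → Gᶜ.Adj (l.get i) (l.get k) →
      Gᶜ.Adj (l.get j) (l.get k)) → Peo G l := by
  intro l
  induction l with
  | nil => intro _; trivial
  | cons v vs ih =>
    intro hp
    constructor
    · intro c hc d hd hcd h1 h2
      obtain ⟨jc, hjc⟩ := List.mem_iff_get.mp hc
      obtain ⟨jd, hjd⟩ := List.mem_iff_get.mp hd
      have hjck : (⟨jc.1 + 1, by simpa using Nat.succ_lt_succ jc.2⟩ : Fin (v :: vs).length) ≠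
          ⟨jd.1 + 1, by simpa using Nat.succ_lt_succ jd.2⟩ := by
        intro hh
        apply hcd
        rw [← hjc, ← hjd]
        congr 1
        simpa [Fin.ext_iff] using hh
      have := hp ⟨0, by simp⟩ ⟨jc.1 + 1, by simpa using Nat.succ_lt_succ jc.2⟩
        ⟨jd.1 + 1, by simpa using Nat.succ_lt_succ jd.2⟩ (Nat.succ_pos _) (Nat.succ_pos _)
        hjck
      simp only [List.get_cons_succ, Fin.eta] at this
      rw [hjc, hjd] at this
      exact this h1 h2
    · apply ih
      intro i j k hij hik hjk h1 h2
      have := hp ⟨i.1 + 1, by simpa using Nat.succ_lt_succ i.2⟩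
        ⟨j.1 + 1, by simpa using Nat.succ_lt_succ j.2⟩
        ⟨k.1 + 1, by simpa using Nat.succ_lt_succ k.2⟩
        (by simpa using hij) (by simpa using hik)
        (by simpa [Fin.ext_iff] using (Fin.val_ne_iff.mpr hjk))
      simp only [List.get_cons_succ, Fin.eta] at this
      exact this h1 h2

lemma sdiff_card_one {e f : Finset V} (he : e.card = 2) (hf : f.card = 2) (hne : e ≠ f)
    {x : V} (hx1 : x ∈ e) (hx2 : x ∈ f) : (f \ e).card = 1 := by
  have h1 : (f \ e).card + (f ∩ e).card = f.card := Finset.card_sdiff_add_card_inter f e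
  have h2 : 1 ≤ (f ∩ e).card := Finset.card_pos.mpr ⟨x, Finset.mem_inter.mpr ⟨hx2, hx1⟩⟩
  have h3 : (f ∩ e).card ≤ 2 := hf ▸ Finset.card_le_card (Finset.inter_subset_left)
  have h4 : (f ∩ e).card ≠ 2 := by
    intro hc
    have : f ∩ e = f := Finset.eq_of_subset_of_card_le Finset.inter_subset_left (by omega)
    have hfe : f ⊆ e := by rw [← this]; exact Finset.inter_subset_right
    exact hne (Finset.eq_of_subset_of_card_le hfe (by omega)).symm
  omega

lemma not_mem_take {l : List V} (h : l.Nodup) {n : ℕ} (hn : n < l.length) :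
    l[n] ∉ l.take n := by
  rw [List.mem_take_iff_getElem]
  rintro ⟨i, hi, hei⟩
  have hi' : i < l.length := lt_of_lt_of_le hi (min_le_right _ _)
  have := (List.Nodup.getElem_inj_iff h (hi := hi') (hj := hn)).mp hei
  have : i < n := lt_of_lt_of_le hi (min_le_left _ _)
  omega

lemma cross {v : V} {vs : List V} (hv : v ∉ vs)
    (hhead : ∀ c ∈ vs, ∀ d ∈ vs, c ≠ d → Gᶜ.Adj v c → Gᶜ.Adj v d → Gᶜ.Adj c d)
    {w : V} (hw : w ∈ vs) (hadj : G.Adj v w)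
    {f : Finset V} (hf : f ∈ edgeList G vs) :
    ∃ g : Finset V,
      (g = {v, w} ∨ g ∈ (vs.filter (fun u => G.Adj v u)).map (fun u => ({v, u} : Finset V))) ∧
      (f \ g).card = 1 ∧ ({v, w} : Finset V) ∩ f ⊆ g ∧ g ⊆ ({v, w} : Finset V) ∪ f := by
  obtain ⟨c, d, hcd, rfl⟩ := edgeList_shape hf
  have hcvs : c ∈ vs := edgeList_subset hf c (Finset.mem_insert_self _ _)
  have hdvs : d ∈ vs := edgeList_subset hf d (by simp)
  have hvf : v ∉ ({c, d} : Finset V) := by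
    simp only [Finset.mem_insert, Finset.mem_singleton]
    rintro (rfl | rfl) <;> [exact hv hcvs; exact hv hdvs]
  have hfcard : ({c, d} : Finset V).card = 2 := Finset.card_pair hcd.ne
  by_cases hwf : w ∈ ({c, d} : Finset V)
  · refine ⟨{v, w}, Or.inl rfl, ?_, Finset.inter_subset_left, Finset.subset_union_left⟩
    exact sdiff_card_one (Finset.card_pair hadj.ne) hfcard
      (fun hh => hvf (hh ▸ Finset.mem_insert_self v {w}))
      (Finset.mem_insert_of_mem (Finset.mem_singleton_self w)) hwf
  · have hdisj : ({v, w} : Finset V) ∩ ({c, d} : Finset V) = ∅ := by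
      apply Finset.eq_empty_of_forall_notMem
      intro x hx
      rcases Finset.mem_inter.mp hx with ⟨hx1, hx2⟩
      rcases Finset.mem_insert.mp hx1 with rfl | hx1
      · exact hvf hx2
      · rw [Finset.mem_singleton.mp hx1] at hx2; exact hwf hx2
    by_cases hvc : G.Adj v c
    · refine ⟨{v, c}, Or.inr ?_, ?_, ?_, ?_⟩
      · exact List.mem_map.mpr ⟨c, List.mem_filter.mpr ⟨hcvs, by simpa using hvc⟩, rfl⟩
      · exact sdiff_card_one (Finset.card_pair hvc.ne) hfcard
          (fun hh => hvf (hh ▸ Finset.mem_insert_self v {c}))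
          (Finset.mem_insert_of_mem (Finset.mem_singleton_self c))
          (Finset.mem_insert_self c {d})
      · rw [hdisj]; exact Finset.empty_subset _
      · intro x hx
        rcases Finset.mem_insert.mp hx with rfl | hx
        · exact Finset.mem_union_left _ (Finset.mem_insert_self _ _)
        · rw [Finset.mem_singleton.mp hx]
          exact Finset.mem_union_right _ (Finset.mem_insert_self _ _)
    · by_cases hvd : G.Adj v d
      · refine ⟨{v, d}, Or.inr ?_, ?_, ?_, ?_⟩
        · exact List.mem_map.mpr ⟨d, List.mem_filter.mpr ⟨hdvs, by simpa using hvd⟩, rfl⟩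
        · exact sdiff_card_one (Finset.card_pair hvd.ne) hfcard
            (fun hh => hvf (hh ▸ Finset.mem_insert_self v {d}))
            (Finset.mem_insert_of_mem (Finset.mem_singleton_self d))
            (Finset.mem_insert_of_mem (Finset.mem_singleton_self d))
        · rw [hdisj]; exact Finset.empty_subset _
        · intro x hx
          rcases Finset.mem_insert.mp hx with rfl | hx
          · exact Finset.mem_union_left _ (Finset.mem_insert_self _ _)
          · rw [Finset.mem_singleton.mp hx]
            exact Finset.mem_union_right _
              (Finset.mem_insert_of_mem (Finset.mem_singleton_self d))
      · exfalso
        have hnvc : v ≠ c := fun h => hv (h ▸ hcvs)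
        have hnvd : v ≠ d := fun h => hv (h ▸ hdvs)
        have := hhead c hcvs d hdvs hcd.ne
          ((SimpleGraph.compl_adj G v c).mpr ⟨hnvc, hvc⟩)
          ((SimpleGraph.compl_adj G v d).mpr ⟨hnvd, hvd⟩)
        exact ((SimpleGraph.compl_adj G c d).mp this).2 hcd

lemma main : ∀ l : List V, l.Nodup → Peo G l →
    ∀ (L1 L2 : List (Finset V)) (f e : Finset V), edgeList G l = L1 ++ f :: L2 → e ∈ L1 →
    ∃ g ∈ L1, (f \ g).card = 1 ∧ e ∩ f ⊆ g ∧ g ⊆ e ∪ f := by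
  intro l
  induction l with
  | nil =>
    intro _ _ L1 L2 f e hsp he
    exfalso
    have := congrArg List.length hsp
    simp [edgeList] at this
  | cons v vs ih =>
    intro hnd hpeo L1 L2 f e hsp he
    obtain ⟨hv, hvs⟩ := List.nodup_cons.mp hnd
    obtain ⟨hhead, htail⟩ := hpeo
    have hsp' : (vs.filter (fun u => G.Adj v u)).map (fun u => ({v, u} : Finset V))
        ++ edgeList G vs = L1 ++ f :: L2 := hsp
    rcases List.append_eq_append_iff.mp hsp' with ⟨a, ha1, ha2⟩ | ⟨c, hc1, hc2⟩
    · -- L1 = B ++ a, edgeList vs = a ++ f :: L2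
      have hfT : f ∈ edgeList G vs := by rw [ha2]; simp
      subst ha1
      rcases List.mem_append.mp he with heB | hea
      · obtain ⟨w, hwm, rfl⟩ := List.mem_map.mp heB
        obtain ⟨hw1, hw2⟩ := List.mem_filter.mp hwm
        have hw2' : G.Adj v w := by simpa using hw2
        obtain ⟨g, hgor, hcond⟩ := cross hv hhead hw1 hw2' hfT
        refine ⟨g, ?_, hcond⟩
        rcases hgor with rfl | hgB
        · exact List.mem_append_left _ heB
        · exact List.mem_append_left _ hgB
      · obtain ⟨g, hg, hcond⟩ := ih hvs htail a L2 f e ha2 hea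
        exact ⟨g, List.mem_append_right _ hg, hcond⟩
    · cases c with
      | nil =>
        rw [List.append_nil] at hc1
        have hfT : f ∈ edgeList G vs := by
          rw [List.nil_append] at hc2
          rw [← hc2]; simp
        have heB : e ∈ (vs.filter (fun u => G.Adj v u)).map
            (fun u => ({v, u} : Finset V)) := hc1 ▸ he
        obtain ⟨w, hwm, rfl⟩ := List.mem_map.mp heB
        obtain ⟨hw1, hw2⟩ := List.mem_filter.mp hwm
        have hw2' : G.Adj v w := by simpa using hw2
        obtain ⟨g, hgor, hcond⟩ := cross hv hhead hw1 hw2' hfT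
        refine ⟨g, ?_, hcond⟩
        rcases hgor with rfl | hgB
        · exact he
        · exact hc1 ▸ hgB
      | cons f' c' =>
        have hff' : f = f' ∧ L2 = c' ++ edgeList G vs := by
          have := hc2
          rw [List.cons_append] at this
          exact ⟨List.head_eq_of_cons_eq this, List.tail_eq_of_cons_eq this⟩
        obtain ⟨rfl, -⟩ := hff'
        -- f ∈ B, e ∈ L1 ⊆ B, share v
        have hBnd : ((vs.filter (fun u => G.Adj v u)).map
            (fun u => ({v, u} : Finset V))).Nodup := by
          have h2 : ((vs.filter (fun u => G.Adj v u)).map (fun u => ({v, u} : Finset V))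
              ++ edgeList G vs).Nodup := nodup_edgeList hnd
          exact (List.nodup_append.mp h2).1
        have hfB : f ∈ (vs.filter (fun u => G.Adj v u)).map
            (fun u => ({v, u} : Finset V)) := by rw [hc1]; simp
        have heB : e ∈ (vs.filter (fun u => G.Adj v u)).map
            (fun u => ({v, u} : Finset V)) := by rw [hc1]; exact List.mem_append_left _ he
        obtain ⟨w', hw'm, hw'e⟩ := List.mem_map.mp hfB
        obtain ⟨w, hwm, hwe⟩ := List.mem_map.mp heB
        have hadjw' : G.Adj v w' := by simpa using (List.mem_filter.mp hw'm).2
        have hadjw : G.Adj v w := by simpa using (List.mem_filter.mp hwm).2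
        have hne : e ≠ f := by
          rintro rfl
          rw [hc1, List.nodup_append] at hBnd
          exact hBnd.2.2 _ he _ List.mem_cons_self rfl
        refine ⟨e, he, ?_, Finset.inter_subset_left, Finset.subset_union_left⟩
        exact sdiff_card_one (hwe ▸ Finset.card_pair hadjw.ne)
          (hw'e ▸ Finset.card_pair hadjw'.ne) hne
          (hwe ▸ Finset.mem_insert_self v {w}) (hw'e ▸ Finset.mem_insert_self v {w'})

end Aux

/-- If the complement of G admits a perfect elimination ordering (later neighbors of each
vertex form a clique), then G is edgewise strongly shellable. -/
theorem stmt6 {V : Type*} [Fintype V] [DecidableEq V] (G : SimpleGraph V)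
    [DecidableRel G.Adj] (l : List V) (hnd : l.Nodup) (hall : ∀ v : V, v ∈ l)
    (hpeo : ∀ i j k : Fin l.length, (i : ℕ) < (j : ℕ) → (i : ℕ) < (k : ℕ) → j ≠ k →
      Gᶜ.Adj (l.get i) (l.get j) → Gᶜ.Adj (l.get i) (l.get k) →
      Gᶜ.Adj (l.get j) (l.get k)) :
    StronglyShellable (edgeSets G) := by
  refine ⟨edgeList G l, nodup_edgeList hnd, ?_, ?_⟩
  · ext s
    simp only [List.mem_toFinset]
    constructor
    · intro h
      obtain ⟨c, d, hadj, rfl⟩ := edgeList_shape h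
      exact Finset.mem_image.mpr ⟨s(c, d), SimpleGraph.mem_edgeFinset.mpr hadj, by simp⟩
    · intro h
      obtain ⟨a, ha, rfl⟩ := Finset.mem_image.mp h
      induction a using Sym2.ind with
      | _ u w =>
        have hadj : G.Adj u w := SimpleGraph.mem_edgeFinset.mp ha
        simpa using mem_edgeList_of_adj (hall u) (hall w) hadj
  · intro i j hij
    have hdrop : (edgeList G l).drop ↑j = (edgeList G l)[↑j] :: (edgeList G l).drop (↑j + 1) :=
      (List.getElem_cons_drop _).symm
    have hsplit : edgeList G l =
        (edgeList G l).take ↑j ++ (edgeList G l)[↑j] :: (edgeList G l).drop (↑j + 1) := by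
      rw [← hdrop, List.take_append_drop]
    have hei : (edgeList G l).get i ∈ (edgeList G l).take ↑j := by
      rw [List.mem_take_iff_getElem]
      refine ⟨i, by simp only [lt_min_iff]; exact ⟨hij, i.2⟩, ?_⟩
      rw [List.get_eq_getElem]
    obtain ⟨g, hg, hcard, hsub1, hsub2⟩ :=
      main l hnd (peo_of_fin l hpeo) ((edgeList G l).take ↑j) ((edgeList G l).drop (↑j + 1))
        (edgeList G l)[↑j] ((edgeList G l).get i) hsplit hei
    obtain ⟨k, hk, hgk⟩ := List.mem_take_iff_getElem.mp hg
    have hkL : k < (edgeList G l).length := lt_of_lt_of_le hk (min_le_right _ _)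
    have hkj : k < ↑j := lt_of_lt_of_le hk (min_le_left _ _)
    refine ⟨⟨k, hkL⟩, hkj, ?_, ?_, ?_⟩
    · rw [List.get_eq_getElem, List.get_eq_getElem]
      simpa [hgk] using hcard
    · rw [List.get_eq_getElem, List.get_eq_getElem, List.get_eq_getElem]
      simpa [hgk] using hsub1
    · rw [List.get_eq_getElem, List.get_eq_getElem, List.get_eq_getElem]
      simpa [hgk] using hsub2
end

section
/- If G is an edgewise strongly shellable finite simple graph, then every two non-adjacent (vertex-disjoint) edges of G are both adjacent to a common third edge; in particular, the complement graph Ḡ contains no induced cycle on 4 vertices. -/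
open scoped Classical

lemma mem_edgeSets_iff {V : Type*} [Fintype V] [DecidableEq V] (G : SimpleGraph V)
    [DecidableRel G.Adj] (e : Finset V) :
    e ∈ edgeSets G ↔ ∃ u v, G.Adj u v ∧ e = {u, v} := by
  constructor
  · rintro he
    simp only [edgeSets, Finset.mem_image] at he
    obtain ⟨s, hs, rfl⟩ := he
    rw [SimpleGraph.mem_edgeFinset] at hs
    induction s using Sym2.ind with
    | _ u v =>
      exact ⟨u, v, hs, rfl⟩
  · rintro ⟨u, v, huv, rfl⟩
    simp only [edgeSets, Finset.mem_image]
    exact ⟨s(u, v), by simpa using huv, rfl⟩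

lemma card_two_of_mem_edgeSets {V : Type*} [Fintype V] [DecidableEq V] (G : SimpleGraph V)
    [DecidableRel G.Adj] {e : Finset V} (he : e ∈ edgeSets G) : e.card = 2 := by
  obtain ⟨u, v, huv, rfl⟩ := (mem_edgeSets_iff G e).mp he
  exact Finset.card_pair huv.ne

lemma key_lemma {V : Type*} [DecidableEq V] {ei ej ek : Finset V}
    (hi : ei.card = 2) (hj : ej.card = 2) (hk : ek.card = 2)
    (h1 : (ej \ ek).card = 1) (hsub : ek ⊆ ei ∪ ej) :
    (ek ∩ ei).Nonempty ∧ (ek ∩ ej).Nonempty := by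
  have hinter : (ej ∩ ek).card = 1 := by
    have := Finset.card_inter_add_card_sdiff ej ek
    omega
  have hkj : (ek ∩ ej).card = 1 := by rwa [Finset.inter_comm]
  have hkdiff : (ek \ ej).card = 1 := by
    have := Finset.card_inter_add_card_sdiff ek ej
    omega
  refine ⟨?_, Finset.card_pos.mp (by omega)⟩
  obtain ⟨y, hy⟩ := Finset.card_pos.mp (show 0 < (ek \ ej).card by omega)
  rw [Finset.mem_sdiff] at hy
  have hyi : y ∈ ei := by
    have := hsub hy.1
    rcases Finset.mem_union.mp this with h | h
    · exact h
    · exact absurd h hy.2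
  exact ⟨y, Finset.mem_inter.mpr ⟨hy.1, hyi⟩⟩

/-- In an ESS graph, any two vertex-disjoint edges are both adjacent to a common third edge;
in particular the complement graph contains no induced 4-cycle. -/
theorem stmt7 {V : Type*} [Fintype V] [DecidableEq V] (G : SimpleGraph V)
    [DecidableRel G.Adj] (hESS : StronglyShellable (edgeSets G)) :
    (∀ e₁ ∈ edgeSets G, ∀ e₂ ∈ edgeSets G, Disjoint e₁ e₂ →
        ∃ e₃ ∈ edgeSets G, (e₃ ∩ e₁).Nonempty ∧ (e₃ ∩ e₂).Nonempty) ∧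
    ¬ ∃ a b c d : V, a ≠ c ∧ b ≠ d ∧
        Gᶜ.Adj a b ∧ Gᶜ.Adj b c ∧ Gᶜ.Adj c d ∧ Gᶜ.Adj d a ∧
        ¬ Gᶜ.Adj a c ∧ ¬ Gᶜ.Adj b d := by
  obtain ⟨l, hnd, htf, hshell⟩ := hESS
  have hmem : ∀ i : Fin l.length, l.get i ∈ edgeSets G := by
    intro i
    rw [← htf, List.mem_toFinset]
    exact List.get_mem l i
  have part1 : ∀ e₁ ∈ edgeSets G, ∀ e₂ ∈ edgeSets G, Disjoint e₁ e₂ →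
      ∃ e₃ ∈ edgeSets G, (e₃ ∩ e₁).Nonempty ∧ (e₃ ∩ e₂).Nonempty := by
    intro e₁ he₁ e₂ he₂ hdisj
    have hc₁ := card_two_of_mem_edgeSets G he₁
    have hc₂ := card_two_of_mem_edgeSets G he₂
    have hne : e₁ ≠ e₂ := by
      rintro rfl
      have : e₁ = ∅ := disjoint_self.mp hdisj
      simp [this] at hc₁
    have hm1 : e₁ ∈ l := by rw [← List.mem_toFinset, htf]; exact he₁
    have hm2 : e₂ ∈ l := by rw [← List.mem_toFinset, htf]; exact he₂
    obtain ⟨i, hi⟩ := List.mem_iff_get.mp hm1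
    obtain ⟨j, hj⟩ := List.mem_iff_get.mp hm2
    have hij : (i : ℕ) ≠ (j : ℕ) := by
      intro h
      apply hne
      rw [← hi, ← hj]
      congr 1
      exact Fin.ext h
    rcases lt_or_gt_of_ne hij with h | h
    · obtain ⟨k, _, h1, _, hsub⟩ := hshell i j h
      have hck := card_two_of_mem_edgeSets G (hmem k)
      simp only [hi, hj] at h1 hsub
      obtain ⟨ha, hb⟩ := key_lemma hc₁ hc₂ hck h1 hsub
      exact ⟨l.get k, hmem k, ha, hb⟩
    · obtain ⟨k, _, h1, _, hsub⟩ := hshell j i h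
      have hck := card_two_of_mem_edgeSets G (hmem k)
      simp only [hi, hj] at h1 hsub
      obtain ⟨ha, hb⟩ := key_lemma hc₂ hc₁ hck h1 hsub
      exact ⟨l.get k, hmem k, hb, ha⟩
  refine ⟨part1, ?_⟩
  rintro ⟨a, b, c, d, hac, hbd, hab, hbc, hcd, hda, hnac, hnbd⟩
  rw [SimpleGraph.compl_adj] at hab hbc hcd hda hnac hnbd
  have Gac : G.Adj a c := by
    by_contra h; exact hnac ⟨hac, h⟩
  have Gbd : G.Adj b d := by
    by_contra h; exact hnbd ⟨hbd, h⟩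
  have he₁ : ({a, c} : Finset V) ∈ edgeSets G := (mem_edgeSets_iff G _).mpr ⟨a, c, Gac, rfl⟩
  have he₂ : ({b, d} : Finset V) ∈ edgeSets G := (mem_edgeSets_iff G _).mpr ⟨b, d, Gbd, rfl⟩
  have hdisj : Disjoint ({a, c} : Finset V) ({b, d} : Finset V) := by
    rw [Finset.disjoint_left]
    intro x hx hx'
    simp only [Finset.mem_insert, Finset.mem_singleton] at hx hx'
    rcases hx with rfl | rfl <;> rcases hx' with h | h
    · exact hab.1 h
    · exact hda.1 h.symm
    · exact hbc.1 h.symm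
    · exact hcd.1 h
  obtain ⟨e₃, he₃, ⟨x, hx⟩, ⟨y, hy⟩⟩ := part1 _ he₁ _ he₂ hdisj
  obtain ⟨u, v, huv, rfl⟩ := (mem_edgeSets_iff G e₃).mp he₃
  rw [Finset.mem_inter] at hx hy
  have hxy : x ≠ y := by
    intro h
    exact Finset.disjoint_left.mp hdisj hx.2 (h ▸ hy.2)
  have hAdj : G.Adj x y := by
    have hx' := hx.1; have hy' := hy.1
    simp only [Finset.mem_insert, Finset.mem_singleton] at hx' hy'
    rcases hx' with rfl | rfl <;> rcases hy' with rfl | rfl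
    · exact absurd rfl hxy
    · exact huv
    · exact huv.symm
    · exact absurd rfl hxy
  have hx2 := hx.2; have hy2 := hy.2
  simp only [Finset.mem_insert, Finset.mem_singleton] at hx2 hy2
  rcases hx2 with rfl | rfl <;> rcases hy2 with rfl | rfl
  · exact hab.2 hAdj
  · exact hda.2 hAdj.symm
  · exact hbc.2 hAdj.symm
  · exact hcd.2 hAdj
end

section
/- Let T be a tree with at least 3 vertices and G_T its generic graph. Then G_T is connected and its diameter equals 3. -/
open scoped Classical

abbrev GenericVertex {V : Type*} (T : SimpleGraph V) : Type _ := {p : V × V // T.Adj p.1 p.2}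

/-- The generic graph of a tree T: vertices are ordered pairs (i,k) with {i,k} ∈ E(T)
(representing x_{i,k}); x_{i,k} is adjacent to x_{j,l} iff on the unique path in T from i
to j, the second vertex is k and the second-to-last vertex is l. -/
def genericGraph {V : Type*} [DecidableEq V] (T : SimpleGraph V) : SimpleGraph (GenericVertex T) :=
  SimpleGraph.fromRel fun a b =>
    ∃ w : T.Walk a.val.1 b.val.1, w.IsPath ∧ 0 < w.length ∧
      w.support[1]? = some a.val.2 ∧ w.support.reverse[1]? = some b.val.2

namespace GenericAux

open SimpleGraph Walk

variable {V : Type*} [DecidableEq V] {T : SimpleGraph V}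

lemma support_one {u v w : V} (h : T.Adj u v) (R : T.Walk v w) :
    (Walk.cons h R).support[1]? = some v := by
  rw [Walk.support_cons, R.support_eq_cons]
  simp

lemma support_head {u v : V} (R : T.Walk u v) : R.support[0]? = some u := by
  rw [R.support_eq_cons]; simp

lemma ne_of_path {x y : V} (w : T.Walk x y) (hw : w.IsPath) (h0 : 0 < w.length) : x ≠ y := by
  rintro rfl
  cases w with
  | nil => simp at h0
  | cons h p =>
    rw [Walk.cons_isPath_iff] at hw
    exact hw.2 p.end_mem_support

lemma adj_intro {a b : GenericVertex T} (w : T.Walk a.val.1 b.val.1)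
    (hw : w.IsPath) (h0 : 0 < w.length) (h1 : w.support[1]? = some a.val.2)
    (h2 : w.support.reverse[1]? = some b.val.2) : (genericGraph T).Adj a b := by
  have hne : a.val.1 ≠ b.val.1 := ne_of_path w hw h0
  rw [genericGraph, SimpleGraph.fromRel_adj]
  exact ⟨fun hab => hne (by rw [hab]), Or.inl ⟨w, hw, h0, h1, h2⟩⟩

lemma adj_flip {i k : V} (h : T.Adj i k) :
    (genericGraph T).Adj ⟨(i,k), h⟩ ⟨(k,i), h.symm⟩ := by
  apply adj_intro (Walk.cons h Walk.nil)
  · simp [Walk.cons_isPath_iff, h.ne]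
  · simp
  · rfl
  · rfl

lemma adj_fst_ne {a b : GenericVertex T} (h : (genericGraph T).Adj a b) :
    a.val.1 ≠ b.val.1 := by
  rw [genericGraph, SimpleGraph.fromRel_adj] at h
  obtain ⟨hne, h | h⟩ := h <;> obtain ⟨w, hw, h0, -⟩ := h
  · exact ne_of_path w hw h0
  · exact (ne_of_path w hw h0).symm

lemma adj_dir (hT : T.IsAcyclic) {a b : GenericVertex T} (h : (genericGraph T).Adj a b)
    (w : T.Walk a.val.1 b.val.1) (hw : w.IsPath) : w.support[1]? = some a.val.2 := by
  rw [genericGraph, SimpleGraph.fromRel_adj] at h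
  obtain ⟨-, h | h⟩ := h
  · obtain ⟨w', hw', -, h1, -⟩ := h
    have heq := hT.path_unique ⟨w, hw⟩ ⟨w', hw'⟩
    have hww : w = w' := congrArg Subtype.val heq
    rw [hww]; exact h1
  · obtain ⟨w', hw', -, -, h2⟩ := h
    have heq := hT.path_unique ⟨w, hw⟩ ⟨w'.reverse, hw'.reverse⟩
    have hww : w = w'.reverse := congrArg Subtype.val heq
    rw [hww, Walk.support_reverse]; exact h2

lemma not_mem_of_snd_ne (hT : T.IsAcyclic) {i j k : V} (P : T.Walk i j) (hP : P.IsPath)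
    (hik : T.Adj i k) (hk : P.support[1]? ≠ some k) : k ∉ P.support := by
  intro hmem
  have hQ : (P.takeUntil k hmem).IsPath := hP.takeUntil hmem
  have hE : (Walk.cons hik Walk.nil).IsPath := by simp [Walk.cons_isPath_iff, hik.ne]
  have heq := hT.path_unique ⟨P.takeUntil k hmem, hQ⟩ ⟨Walk.cons hik Walk.nil, hE⟩
  have heq' : P.takeUntil k hmem = Walk.cons hik Walk.nil := congrArg Subtype.val heq
  have hspec := P.take_spec hmem
  rw [heq'] at hspec
  apply hk
  rw [← hspec, Walk.cons_append, Walk.nil_append]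
  exact support_one _ _

lemma not_mem_of_pen_ne (hT : T.IsAcyclic) {i j l : V} (P : T.Walk i j) (hP : P.IsPath)
    (hjl : T.Adj j l) (hl : P.support.reverse[1]? ≠ some l) : l ∉ P.support := by
  have h := not_mem_of_snd_ne hT P.reverse hP.reverse hjl
    (by rw [Walk.support_reverse]; exact hl)
  rw [Walk.support_reverse, List.mem_reverse] at h
  exact h

lemma concat_isPath {i j l : V} {P : T.Walk i j} (hP : P.IsPath) (h : T.Adj j l)
    (hl : l ∉ P.support) : (P.concat h).IsPath := by
  rw [← Walk.isPath_reverse_iff, Walk.reverse_concat, Walk.cons_isPath_iff]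
  exact ⟨hP.reverse, by rw [Walk.support_reverse, List.mem_reverse]; exact hl⟩

lemma getElem1_append {α : Type*} (L M : List α) (h : 2 ≤ L.length) :
    (L ++ M)[1]? = L[1]? :=
  List.getElem?_append_left (by omega)

lemma exists_short_walk (hT : T.IsTree) (a b : GenericVertex T) :
    ∃ w : (genericGraph T).Walk a b, w.length ≤ 3 := by
  obtain ⟨⟨i, k⟩, hik⟩ := a
  obtain ⟨⟨j, l⟩, hjl⟩ := b
  by_cases hij : i = j
  · subst hij
    by_cases hkl : k = l
    · subst hkl
      exact ⟨Walk.nil, by simp⟩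
    · have e1 := adj_flip hik
      have e3 := (adj_flip hjl).symm
      have e2 : (genericGraph T).Adj ⟨(k, i), hik.symm⟩ ⟨(l, i), hjl.symm⟩ := by
        apply adj_intro (Walk.cons hik.symm (Walk.cons hjl Walk.nil))
        · simp [Walk.cons_isPath_iff, hik.ne', hjl.ne, hkl]
        · simp
        · rfl
        · rfl
      exact ⟨Walk.cons e1 (Walk.cons e2 (Walk.cons e3 Walk.nil)), by simp⟩
  · obtain ⟨P, hP⟩ := ((hT.isConnected.preconnected i j).some.toPath : T.Path i j)
    have h0 : 0 < P.length :=
      Nat.pos_of_ne_zero fun h => hij (Walk.eq_of_length_eq_zero h)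
    have hsl : 2 ≤ P.support.length := by rw [Walk.length_support]; omega
    have hslr : 2 ≤ P.support.reverse.length := by rw [List.length_reverse]; exact hsl
    have hrev0 : P.support.reverse[0]? = some j := by
      rw [← Walk.support_reverse]; exact support_head _
    by_cases hk : P.support[1]? = some k <;> by_cases hl : P.support.reverse[1]? = some l
    · exact ⟨Walk.cons (adj_intro P hP h0 hk hl) Walk.nil, by simp⟩
    · -- k correct, l not: a ~ (l,j) ~ b
      have hlP : l ∉ P.support := not_mem_of_pen_ne hT.IsAcyclic P hP hjl hl
      have e1 : (genericGraph T).Adj ⟨(i, k), hik⟩ ⟨(l, j), hjl.symm⟩ := by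
        apply adj_intro (P.concat hjl)
        · exact concat_isPath hP hjl hlP
        · rw [Walk.length_concat]; omega
        · rw [Walk.support_concat, getElem1_append _ _ hsl]
          exact hk
        · rw [Walk.support_concat, List.reverse_append]
          simpa using hrev0
      exact ⟨Walk.cons e1 (Walk.cons (adj_flip hjl).symm Walk.nil), by simp⟩
    · -- l correct, k not: a ~ (k,i) ~ b
      have hkP : k ∉ P.support := not_mem_of_snd_ne hT.IsAcyclic P hP hik hk
      have e2 : (genericGraph T).Adj ⟨(k, i), hik.symm⟩ ⟨(j, l), hjl⟩ := by
        apply adj_intro (Walk.cons hik.symm P)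
        · rw [Walk.cons_isPath_iff]; exact ⟨hP, hkP⟩
        · simp
        · exact support_one _ _
        · rw [Walk.support_cons, List.reverse_cons, getElem1_append _ _ hslr]
          exact hl
      exact ⟨Walk.cons (adj_flip hik) (Walk.cons e2 Walk.nil), by simp⟩
    · -- neither: a ~ (k,i) ~ (l,j) ~ b
      have hkP : k ∉ P.support := not_mem_of_snd_ne hT.IsAcyclic P hP hik hk
      have hlP : l ∉ P.support := not_mem_of_pen_ne hT.IsAcyclic P hP hjl hl
      have hkl : k ≠ l := by
        rintro rfl
        have hW : (Walk.cons hik.symm P).IsPath := by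
          rw [Walk.cons_isPath_iff]; exact ⟨hP, hkP⟩
        have hE : (Walk.cons hjl.symm Walk.nil).IsPath := by
          simp [Walk.cons_isPath_iff, hjl.ne']
        have heq := hT.IsAcyclic.path_unique ⟨Walk.cons hik.symm P, hW⟩
          ⟨Walk.cons hjl.symm Walk.nil, hE⟩
        have hlen := congrArg (fun q : T.Path k j => q.val.length) heq
        simp only [Walk.length_cons, Walk.length_nil] at hlen
        omega
      have e2 : (genericGraph T).Adj ⟨(k, i), hik.symm⟩ ⟨(l, j), hjl.symm⟩ := by
        have hWpath : (Walk.cons hik.symm P).IsPath := by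
          rw [Walk.cons_isPath_iff]; exact ⟨hP, hkP⟩
        apply adj_intro ((Walk.cons hik.symm P).concat hjl)
        · apply concat_isPath hWpath hjl
          rw [Walk.support_cons]
          simp only [List.mem_cons]
          rintro (rfl | h)
          · exact hkl rfl
          · exact hlP h
        · rw [Walk.length_concat]; omega
        · rw [Walk.support_concat,
            getElem1_append _ _ (by rw [Walk.support_cons]; simp)]
          exact support_one _ _
        · rw [Walk.support_concat, List.reverse_concat]
          simp only [List.getElem?_cons_succ]
          rw [← Walk.support_reverse]
          exact support_head _
      exact ⟨Walk.cons (adj_flip hik) (Walk.cons e2 (Walk.cons (adj_flip hjl).symm Walk.nil)),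
        by simp⟩

lemma exists_three [Fintype V] (hT : T.IsTree) (h3 : 3 ≤ Fintype.card V) :
    ∃ x y z : V, T.Adj x y ∧ T.Adj y z ∧ x ≠ z := by
  by_contra hcon
  push_neg at hcon
  have hpath : ∀ {u v : V} (w : T.Walk u v), w.IsPath → w.length ≤ 1 := by
    intro u v w hw
    match w with
    | .nil => simp
    | .cons h .nil => simp
    | .cons h₁ (.cons h₂ r) =>
      exfalso
      rw [Walk.cons_isPath_iff] at hw
      apply hw.2
      rw [hcon _ _ _ h₁ h₂, Walk.support_cons]
      exact List.mem_cons_of_mem _ r.start_mem_support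
  have hd : ∀ {u v : V}, u ≠ v → T.Adj u v := by
    intro u v huv
    obtain ⟨Q, hQ⟩ := ((hT.isConnected.preconnected u v).some.toPath : T.Path u v)
    have h1 : Q.length ≤ 1 := hpath Q hQ
    have h0 : 0 < Q.length :=
      Nat.pos_of_ne_zero fun h => huv (Walk.eq_of_length_eq_zero h)
    exact Walk.adj_of_length_eq_one (p := Q) (by omega)
  obtain ⟨x, y, z, hxy, hxz, hyz⟩ := (Fintype.two_lt_card_iff (α := V)).mp (by omega)
  exact hxz (hcon x y z (hd hxy) (hd hyz))

theorem main [Fintype V] [DecidableRel T.Adj] (hT : T.IsTree) (h3 : 3 ≤ Fintype.card V) :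
    (genericGraph T).Connected ∧ (genericGraph T).diam = 3 := by
  obtain ⟨x, y, z, hxy, hyz, hxz⟩ := exists_three hT h3
  set X : GenericVertex T := ⟨(y, x), hxy.symm⟩ with hX
  set Y : GenericVertex T := ⟨(y, z), hyz⟩ with hY
  -- connectivity
  have hconn : (genericGraph T).Connected := by
    rw [connected_iff]
    refine ⟨fun a b => ?_, ⟨X⟩⟩
    obtain ⟨w, -⟩ := exists_short_walk hT a b
    exact ⟨w⟩
  -- lower bound: every walk from X to Y has length ≥ 3
  have hlow : ∀ w : (genericGraph T).Walk X Y, 3 ≤ w.length := by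
    intro w
    by_contra hlt
    push_neg at hlt
    have hXY : X ≠ Y := by
      intro h
      apply hxz
      have := congrArg (fun v : GenericVertex T => v.val.2) h
      exact this
    obtain hlen | hlen | hlen : w.length = 0 ∨ w.length = 1 ∨ w.length = 2 := by omega
    · exact hXY (Walk.eq_of_length_eq_zero hlen)
    · have hadj : (genericGraph T).Adj X Y := Walk.adj_of_length_eq_one hlen
      exact adj_fst_ne hadj rfl
    · -- common neighbor
      have h1 : (genericGraph T).Adj X (w.getVert 1) := by
        have := w.adj_getVert_succ (i := 0) (by omega)
        rwa [Walk.getVert_zero] at this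
      have h2 : (genericGraph T).Adj (w.getVert 1) Y := by
        have := w.adj_getVert_succ (i := 1) (by omega)
        rwa [show (1 + 1 : ℕ) = w.length by omega, Walk.getVert_length] at this
      obtain ⟨Q, hQ⟩ :=
        ((hT.isConnected.preconnected y (w.getVert 1).val.1).some.toPath :
          T.Path y (w.getVert 1).val.1)
      have d1 : Q.support[1]? = some x := adj_dir hT.IsAcyclic h1 Q hQ
      have d2 : Q.support[1]? = some z := adj_dir hT.IsAcyclic h2.symm Q hQ
      rw [d1] at d2
      exact hxz (Option.some_injective _ d2)
  -- ediam = 3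
  have hupper : (genericGraph T).ediam ≤ 3 := by
    apply ediam_le_of_edist_le
    intro u v
    obtain ⟨w, hw⟩ := exists_short_walk hT u v
    exact (edist_le w).trans (by exact_mod_cast hw)
  have hlower : (3 : ℕ∞) ≤ (genericGraph T).ediam := by
    have hXY3 : (3 : ℕ∞) ≤ (genericGraph T).edist X Y := by
      rw [edist_eq_sInf]
      apply le_sInf
      rintro n ⟨w, rfl⟩
      show (3 : ℕ∞) ≤ (w.length : ℕ∞)
      exact_mod_cast hlow w
    exact hXY3.trans edist_le_ediam
  have hediam : (genericGraph T).ediam = 3 := le_antisymm hupper hlower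
  refine ⟨hconn, ?_⟩
  rw [SimpleGraph.diam, hediam]
  rfl

end GenericAux

/-- The generic graph of a tree with at least 3 vertices is connected of diameter 3. -/
theorem stmt9 {V : Type*} [Fintype V] [DecidableEq V] (T : SimpleGraph V) [DecidableRel T.Adj]
    (hT : T.IsTree) (h3 : 3 ≤ Fintype.card V) :
    (genericGraph T).Connected ∧ (genericGraph T).diam = 3 := by
  exact GenericAux.main hT h3
end

section
/- Let T be a tree and G_T its generic graph. Then the following three numbers are equal: the clique number of G_T, the number of leaves of G_T, and the number of leaves of T. -/
open scoped Classical

namespace Stmt10Aux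

open SimpleGraph Walk

variable {V : Type*} [DecidableEq V] {T : SimpleGraph V}

noncomputable def P (hT : T.IsTree) (i j : V) : T.Walk i j :=
  (hT.existsUnique_path i j).exists.choose

lemma P_isPath (hT : T.IsTree) (i j : V) : (P hT i j).IsPath :=
  (hT.existsUnique_path i j).exists.choose_spec

lemma P_unique (hT : T.IsTree) {i j : V} {w : T.Walk i j} (hw : w.IsPath) : w = P hT i j :=
  (hT.existsUnique_path i j).unique hw (P_isPath hT i j)

lemma P_reverse (hT : T.IsTree) (i j : V) : (P hT i j).reverse = P hT j i :=
  P_unique hT ((P_isPath hT i j).reverse)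

lemma P_nil (hT : T.IsTree) (i : V) : P hT i i = Walk.nil :=
  (P_unique hT (IsPath.nil)).symm

lemma s2_cons {i k j : V} (h : T.Adj i k) (q : T.Walk k j) :
    (Walk.cons h q).support[1]? = some k := by
  rw [support_cons, q.support_eq_cons]
  simp

lemma exists_cons_of_s2 {i j k : V} {w : T.Walk i j} (h : w.support[1]? = some k) :
    ∃ (h' : T.Adj i k) (q : T.Walk k j), w = Walk.cons h' q := by
  cases w with
  | nil => simp [support_nil] at h
  | cons h' q =>
    rw [s2_cons] at h
    obtain rfl : _ = k := Option.some_injective _ h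
    exact ⟨h', q, rfl⟩

lemma s2_exists {i j : V} (w : T.Walk i j) (hij : i ≠ j) :
    ∃ u, T.Adj i u ∧ w.support[1]? = some u := by
  cases w with
  | nil => exact absurd rfl hij
  | cons h' q => exact ⟨_, h', s2_cons h' q⟩

lemma ne_of_pos_path {i j : V} {w : T.Walk i j} (hw : w.IsPath) (hpos : 0 < w.length) :
    i ≠ j := by
  rintro rfl
  rw [isPath_iff_eq_nil] at hw
  subst hw
  simp at hpos

lemma adj_iff (hT : T.IsTree) {a b : GenericVertex T} :
    (genericGraph T).Adj a b ↔ a.1.1 ≠ b.1.1 ∧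
      (P hT a.1.1 b.1.1).support[1]? = some a.1.2 ∧
      (P hT b.1.1 a.1.1).support[1]? = some b.1.2 := by
  rw [genericGraph, fromRel_adj]
  constructor
  · rintro ⟨hne, (⟨w, hw, hpos, h1, h2⟩ | ⟨w, hw, hpos, h1, h2⟩)⟩
    · have hij := ne_of_pos_path hw hpos
      refine ⟨hij, ?_, ?_⟩
      · rw [← P_unique hT hw]; exact h1
      · rw [← P_reverse hT, support_reverse, ← P_unique hT hw]; exact h2
    · have hij := ne_of_pos_path hw hpos
      refine ⟨hij.symm, ?_, ?_⟩
      · rw [← P_reverse hT, support_reverse, ← P_unique hT hw]; exact h2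
      · rw [← P_unique hT hw]; exact h1
  · rintro ⟨hij, h1, h2⟩
    refine ⟨?_, Or.inl ⟨P hT a.1.1 b.1.1, P_isPath hT _ _, ?_, h1, ?_⟩⟩
    · intro h; exact hij (by rw [h])
    · rcases Nat.eq_zero_or_pos (P hT a.1.1 b.1.1).length with h | h
      · exact absurd (eq_of_length_eq_zero h) hij
      · exact h
    · rw [← support_reverse, P_reverse hT]; exact h2

/-- second vertex of the canonical path to an intermediate vertex -/
lemma sv_of_mem (hT : T.IsTree) {i j v : V} {w : T.Walk i j} (hw : w.IsPath)
    (hv : v ∈ w.support) (hvi : v ≠ i) :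
    (P hT i v).support[1]? = w.support[1]? := by
  cases w with
  | nil => simp [support_nil] at hv; exact absurd hv hvi
  | cons h' q =>
    rename_i u _
    rw [support_cons] at hv
    rcases List.mem_cons.mp hv with h | hvq
    · exact absurd h hvi
    have hq : q.IsPath := hw.of_cons
    have hiq : i ∉ q.support := ((cons_isPath_iff h' q).mp hw).2
    have htk : (q.takeUntil v hvq).IsPath := hq.takeUntil hvq
    have hint : i ∉ (q.takeUntil v hvq).support :=
      fun hmem => hiq (q.support_takeUntil_subset hvq hmem)
    have hpath : (Walk.cons h' (q.takeUntil v hvq)).IsPath := htk.cons hint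
    rw [← P_unique hT hpath, s2_cons, s2_cons]

lemma leaf_unique_nbr [Fintype V] [DecidableRel T.Adj] {i k m : V}
    (hl : T.degree i = 1) (h1 : T.Adj i k) (h2 : T.Adj i m) : k = m := by
  rw [SimpleGraph.degree, Finset.card_eq_one] at hl
  obtain ⟨x, hx⟩ := hl
  have hk : k ∈ T.neighborFinset i := by rwa [SimpleGraph.mem_neighborFinset]
  have hm : m ∈ T.neighborFinset i := by rwa [SimpleGraph.mem_neighborFinset]
  rw [hx, Finset.mem_singleton] at hk hm
  rw [hk, hm]

lemma sv_from_leaf [Fintype V] [DecidableRel T.Adj] (hT : T.IsTree) {i j k : V}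
    (hl : T.degree i = 1) (hij : i ≠ j) (hk : T.Adj i k) :
    (P hT i j).support[1]? = some k := by
  obtain ⟨u, hu, h2⟩ := s2_exists (P hT i j) hij
  rw [h2, leaf_unique_nbr hl hu hk]

lemma single_edge_path {i k : V} (h : T.Adj i k) : (Walk.cons h Walk.nil : T.Walk i k).IsPath := by
  rw [cons_isPath_iff]
  exact ⟨IsPath.nil, by simp [h.ne]⟩

lemma P_single (hT : T.IsTree) {i k : V} (h : T.Adj i k) :
    P hT i k = Walk.cons h Walk.nil :=
  (P_unique hT (single_edge_path h)).symm

lemma sv_single (hT : T.IsTree) {i k : V} (h : T.Adj i k) :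
    (P hT i k).support[1]? = some k := by
  rw [P_single hT h, s2_cons]

/-- existence of a leaf `ℓ` such that the path from `i` to `ℓ` does not start towards `k` -/
lemma exists_leafAway [Fintype V] [DecidableRel T.Adj] (hT : T.IsTree) {i k : V}
    (h : T.Adj i k) :
    ∃ ℓ, T.degree ℓ = 1 ∧ (P hT i ℓ).support[1]? ≠ some k := by
  classical
  set S : Finset V := Finset.univ.filter (fun v => i ∈ (P hT k v).support) with hS
  have hiS : i ∈ S := by
    simp only [hS, Finset.mem_filter, Finset.mem_univ, true_and]
    exact (P hT k i).end_mem_support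
  obtain ⟨ℓ, hℓS, hmax⟩ := S.exists_max_image (fun v => (P hT k v).length) ⟨i, hiS⟩
  have hiℓ : i ∈ (P hT k ℓ).support := by
    simpa only [hS, Finset.mem_filter, Finset.mem_univ, true_and] using hℓS
  have hik : i ≠ k := h.ne
  -- second condition
  have hcond : (P hT i ℓ).support[1]? ≠ some k := by
    intro hcon
    have hktail : k ∈ (P hT i ℓ).support.tail := by
      have := (P hT i ℓ).support_eq_cons
      rw [this] at hcon
      rw [List.getElem?_cons_succ] at hcon
      exact List.mem_of_getElem? hcon
    have hdrop : (P hT k ℓ).dropUntil i hiℓ = P hT i ℓ :=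
      P_unique hT ((P_isPath hT k ℓ).dropUntil hiℓ)
    have hnodup := (P_isPath hT k ℓ).support_nodup
    rw [← (P hT k ℓ).take_spec hiℓ, support_append] at hnodup
    have hdisj := List.disjoint_of_nodup_append hnodup
    exact hdisj (((P hT k ℓ).takeUntil i hiℓ).start_mem_support) (by rw [hdrop]; exact hktail)
  refine ⟨ℓ, ?_, hcond⟩
  -- leaf condition
  by_contra hdeg
  have hℓk : ℓ ≠ k := by
    rintro rfl
    rw [P_nil hT] at hiℓ
    simp [support_nil] at hiℓ
    exact hik hiℓ
  obtain ⟨p, hp, hpsec⟩ := s2_exists (P hT ℓ k) hℓk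
  have hp1 : p ∈ T.neighborFinset ℓ := by rwa [SimpleGraph.mem_neighborFinset]
  have hcard : 1 < (T.neighborFinset ℓ).card := by
    have h0 : 0 < (T.neighborFinset ℓ).card := Finset.card_pos.mpr ⟨p, hp1⟩
    have : (T.neighborFinset ℓ).card ≠ 1 := hdeg
    omega
  obtain ⟨m, hm1, hmp⟩ := Finset.exists_mem_ne hcard p
  have hm : T.Adj ℓ m := by rwa [SimpleGraph.mem_neighborFinset] at hm1
  have hmnot : m ∉ (P hT k ℓ).support := by
    intro hmem
    have hmem' : m ∈ (P hT ℓ k).support := by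
      rw [← P_reverse hT, support_reverse, List.mem_reverse]
      exact hmem
    have := sv_of_mem hT (P_isPath hT ℓ k) hmem' hm.ne'
    rw [sv_single hT hm, hpsec] at this
    exact hmp (Option.some_injective _ this)
  have hconc : ((P hT k ℓ).concat hm).IsPath := by
    apply IsPath.mk'
    rw [support_concat, List.nodup_append]
    refine ⟨(P_isPath hT k ℓ).support_nodup, List.nodup_singleton m, ?_⟩
    intro x hx y hx' hxy
    subst hxy
    rw [List.mem_singleton] at hx'
    subst hx'
    exact hmnot hx
  have hPm : P hT k m = (P hT k ℓ).concat hm := (P_unique hT hconc).symm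
  have hmS : m ∈ S := by
    simp only [hS, Finset.mem_filter, Finset.mem_univ, true_and]
    rw [hPm, concat_eq_append, mem_support_append_iff]
    exact Or.inl hiℓ
  have := hmax m hmS
  rw [hPm, length_concat] at this
  omega

/-- if the path from i to j starts towards k but the path from i to ℓ does not,
then the path from ℓ to j passes through i -/
lemma path_through (hT : T.IsTree) {i j ℓ k : V} (hij : i ≠ j)
    (h1 : (P hT i j).support[1]? = some k)
    (h2 : (P hT i ℓ).support[1]? ≠ some k) :
    (P hT ℓ j).length = (P hT ℓ i).length + (P hT i j).length := by
  have key : ((P hT ℓ i).append (P hT i j)).IsPath := by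
    apply IsPath.mk'
    rw [support_append, List.nodup_append]
    refine ⟨(P_isPath hT ℓ i).support_nodup, ((P_isPath hT i j).support_nodup).tail, ?_⟩
    intro v hv w hv' hvw
    subst hvw
    have hvj : v ∈ (P hT i j).support := by
      rw [(P hT i j).support_eq_cons]
      exact List.mem_cons_of_mem _ hv'
    by_cases hvi : v = i
    · subst hvi
      have : (P hT v j).support.Nodup := (P_isPath hT v j).support_nodup
      rw [(P hT v j).support_eq_cons] at this
      exact absurd hv' (List.nodup_cons.mp this).1
    · exfalso
      have e1 := sv_of_mem hT (P_isPath hT i j) hvj hvi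
      by_cases hℓi : ℓ = i
      · subst hℓi
        rw [P_nil hT] at hv
        simp [support_nil] at hv
        exact hvi hv
      · have hvℓ : v ∈ (P hT i ℓ).support := by
          rw [← P_reverse hT, support_reverse, List.mem_reverse]
          exact hv
        have e2 := sv_of_mem hT (P_isPath hT i ℓ) hvℓ hvi
        rw [e1, h1] at e2
        exact h2 e2.symm
  have := P_unique hT key
  rw [← this, length_append]

lemma two_edge_path {i k m : V} (h1 : T.Adj i k) (h2 : T.Adj k m) (him : i ≠ m) :
    (Walk.cons h1 (Walk.cons h2 Walk.nil) : T.Walk i m).IsPath := by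
  rw [cons_isPath_iff]
  refine ⟨single_edge_path h2, ?_⟩
  simp only [support_cons, support_nil, List.mem_cons, List.mem_singleton, List.not_mem_nil]
  push_neg
  exact ⟨h1.ne, him, trivial⟩

lemma adj_b0 (hT : T.IsTree) (a : GenericVertex T) :
    (genericGraph T).Adj a ⟨(a.1.2, a.1.1), a.2.symm⟩ :=
  (adj_iff hT).mpr ⟨a.2.ne, sv_single hT a.2, sv_single hT a.2.symm⟩

lemma nbr_of_leaf [Fintype V] [DecidableRel T.Adj] (hT : T.IsTree) {a b : GenericVertex T}
    (hk : T.degree a.1.2 = 1) (hadj : (genericGraph T).Adj a b) :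
    b = ⟨(a.1.2, a.1.1), a.2.symm⟩ := by
  obtain ⟨hij, h1, h2⟩ := (adj_iff hT).mp hadj
  obtain ⟨h', q, hq⟩ := exists_cons_of_s2 h1
  have hjk : b.1.1 = a.1.2 := by
    by_contra hne
    obtain ⟨u, hu, husec⟩ := s2_exists q (fun he => hne he.symm)
    have hu1 : u = a.1.1 := leaf_unique_nbr hk hu a.2.symm
    have hiq : a.1.1 ∉ q.support := by
      have hp := P_isPath hT a.1.1 b.1.1
      rw [hq, cons_isPath_iff] at hp
      exact hp.2
    have humem : u ∈ q.support := List.mem_of_getElem? husec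
    rw [hu1] at humem
    exact hiq humem
  rw [hjk] at h2
  rw [sv_single hT a.2.symm] at h2
  have hbl : b.1.2 = a.1.1 := Option.some_injective _ h2.symm
  exact Subtype.ext (Prod.ext hjk hbl)

lemma G_deg_one_iff [Fintype V] [DecidableRel T.Adj] (hT : T.IsTree) (a : GenericVertex T) :
    (genericGraph T).degree a = 1 ↔ T.degree a.1.2 = 1 := by
  constructor
  · intro hdeg
    by_contra hk
    -- two distinct neighbors
    have hb0 : (⟨(a.1.2, a.1.1), a.2.symm⟩ : GenericVertex T) ∈ (genericGraph T).neighborFinset a := by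
      rw [SimpleGraph.mem_neighborFinset]; exact adj_b0 hT a
    have hk0 : 0 < T.degree a.1.2 := by
      rw [SimpleGraph.degree, Finset.card_pos]
      exact ⟨a.1.1, by rw [SimpleGraph.mem_neighborFinset]; exact a.2.symm⟩
    have hk2 : 1 < (T.neighborFinset a.1.2).card := by
      have : T.degree a.1.2 ≠ 1 := hk
      rw [SimpleGraph.degree] at this hk0
      omega
    obtain ⟨m, hm1, hmi⟩ := Finset.exists_mem_ne hk2 a.1.1
    have hm : T.Adj a.1.2 m := by rwa [SimpleGraph.mem_neighborFinset] at hm1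
    have hw : (Walk.cons a.2 (Walk.cons hm Walk.nil) : T.Walk a.1.1 m).IsPath :=
      two_edge_path a.2 hm (fun h => hmi h.symm)
    have hw' : (Walk.cons hm.symm (Walk.cons a.2.symm Walk.nil) : T.Walk m a.1.1).IsPath :=
      two_edge_path hm.symm a.2.symm hmi
    have hb1 : (⟨(m, a.1.2), hm.symm⟩ : GenericVertex T) ∈ (genericGraph T).neighborFinset a := by
      rw [SimpleGraph.mem_neighborFinset]
      refine (adj_iff hT).mpr ⟨fun h => hmi h.symm, ?_, ?_⟩
      · rw [← P_unique hT hw, s2_cons]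
      · rw [← P_unique hT hw', s2_cons]
    have hne : (⟨(a.1.2, a.1.1), a.2.symm⟩ : GenericVertex T) ≠ ⟨(m, a.1.2), hm.symm⟩ := by
      intro h
      have h2 := congrArg (fun x : GenericVertex T => x.1.1) h
      simp only at h2
      exact hm.ne' h2.symm
    have : 1 < ((genericGraph T).neighborFinset a).card :=
      Finset.one_lt_card_iff.mpr ⟨_, _, hb0, hb1, hne⟩
    rw [SimpleGraph.degree] at hdeg
    omega
  · intro hk
    have : (genericGraph T).neighborFinset a = {⟨(a.1.2, a.1.1), a.2.symm⟩} := by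
      ext b
      rw [SimpleGraph.mem_neighborFinset, Finset.mem_singleton]
      constructor
      · exact nbr_of_leaf hT hk
      · rintro rfl; exact adj_b0 hT a
    rw [SimpleGraph.degree, this, Finset.card_singleton]

lemma card_leaves [Fintype V] [DecidableRel T.Adj] (hT : T.IsTree) :
    Fintype.card {v : GenericVertex T // (genericGraph T).degree v = 1} =
      Fintype.card {v : V // T.degree v = 1} := by
  apply Fintype.card_of_bijective
    (f := fun a : {v : GenericVertex T // (genericGraph T).degree v = 1} =>
      (⟨a.1.1.2, (G_deg_one_iff hT a.1).mp a.2⟩ : {v : V // T.degree v = 1}))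
  constructor
  · rintro ⟨a, ha⟩ ⟨b, hb⟩ hab
    simp only [Subtype.mk.injEq] at hab
    have hka : T.degree a.1.2 = 1 := (G_deg_one_iff hT a).mp ha
    have h2 : T.Adj a.1.2 b.1.1 := by
      have := b.2.symm
      rwa [← hab] at this
    have h11 : a.1.1 = b.1.1 := leaf_unique_nbr hka a.2.symm h2
    exact Subtype.ext (Subtype.ext (Prod.ext h11 hab))
  · rintro ⟨k, hk⟩
    obtain ⟨x, hx⟩ := Finset.card_eq_one.mp hk
    have hxk : T.Adj k x := by
      rw [← SimpleGraph.mem_neighborFinset, hx]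
      exact Finset.mem_singleton_self x
    refine ⟨⟨⟨(x, k), hxk.symm⟩, ?_⟩, rfl⟩
    exact (G_deg_one_iff hT _).mpr hk

lemma cliqueNum_eq [Fintype V] [DecidableRel T.Adj] (hT : T.IsTree) :
    (genericGraph T).cliqueNum = Fintype.card {v : V // T.degree v = 1} := by
  classical
  have hLcard : Fintype.card {v : V // T.degree v = 1} =
      (Finset.univ.filter (fun v => T.degree v = 1)).card := Fintype.card_subtype _
  apply le_antisymm
  · obtain ⟨s, hs⟩ := (genericGraph T).exists_isNClique_cliqueNum
    rw [← hs.card_eq, hLcard]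
    apply Finset.card_le_card_of_injOn
      (f := fun a : GenericVertex T => Classical.choose (exists_leafAway hT a.2))
    · intro a _
      simp only [Finset.mem_coe, Finset.mem_filter, Finset.mem_univ, true_and]
      exact (Classical.choose_spec (exists_leafAway hT a.2)).1
    · intro a ha b hb hfab
      by_contra hne
      have hadj : (genericGraph T).Adj a b := hs.isClique ha hb hne
      obtain ⟨hij, h1, h2⟩ := (adj_iff hT).mp hadj
      have hfab' : Classical.choose (exists_leafAway hT a.2) =
          Classical.choose (exists_leafAway hT b.2) := hfab
      have hsa := (Classical.choose_spec (exists_leafAway hT a.2)).2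
      have hsb := (Classical.choose_spec (exists_leafAway hT b.2)).2
      rw [← hfab'] at hsb
      have e1 := path_through hT hij h1 hsa
      have e2 := path_through hT hij.symm h2 hsb
      have hpos : 0 < (P hT a.1.1 b.1.1).length := by
        rcases Nat.eq_zero_or_pos (P hT a.1.1 b.1.1).length with h | h
        · exact absurd (eq_of_length_eq_zero h) hij
        · exact h
      omega
  · set s : Finset (GenericVertex T) :=
      Finset.univ.filter (fun a : GenericVertex T => T.degree a.1.1 = 1) with hsdef
    have hmem : ∀ a : GenericVertex T, a ∈ s ↔ T.degree a.1.1 = 1 := by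
      intro a
      simp [hsdef]
    have hclique : (genericGraph T).IsClique ↑s := by
      intro a ha b hb hne
      rw [Finset.mem_coe, hmem] at ha hb
      have hij : a.1.1 ≠ b.1.1 := by
        intro he
        apply hne
        have h2 : T.Adj a.1.1 b.1.2 := by rw [he]; exact b.2
        have := leaf_unique_nbr ha a.2 h2
        exact Subtype.ext (Prod.ext he this)
      exact (adj_iff hT).mpr
        ⟨hij, sv_from_leaf hT ha hij a.2, sv_from_leaf hT hb hij.symm b.2⟩
    have hcard : s.card = (Finset.univ.filter (fun v => T.degree v = 1)).card := by
      apply Finset.card_bij (fun a _ => a.1.1)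
      · intro a ha
        rw [hmem] at ha
        simp only [Finset.mem_filter, Finset.mem_univ, true_and]
        exact ha
      · intro a ha b hb he
        rw [hmem] at ha
        have h2 : T.Adj a.1.1 b.1.2 := by rw [he]; exact b.2
        have := leaf_unique_nbr ha a.2 h2
        exact Subtype.ext (Prod.ext he this)
      · intro ℓ hℓ
        simp only [Finset.mem_filter, Finset.mem_univ, true_and] at hℓ
        obtain ⟨x, hx⟩ := Finset.card_eq_one.mp hℓ
        have hxk : T.Adj ℓ x := by
          rw [← SimpleGraph.mem_neighborFinset, hx]
          exact Finset.mem_singleton_self x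
        exact ⟨⟨(ℓ, x), hxk⟩, (hmem _).mpr hℓ, rfl⟩
    rw [hLcard, ← hcard]
    exact SimpleGraph.IsClique.card_le_cliqueNum (tc := hclique)

end Stmt10Aux

/-- The clique number of the generic graph of a tree T equals the number of leaves of the
generic graph, which equals the number of leaves of T. -/
theorem stmt10 {V : Type*} [Fintype V] [DecidableEq V] (T : SimpleGraph V) [DecidableRel T.Adj]
    (hT : T.IsTree) :
    (genericGraph T).cliqueNum =
        Fintype.card {v : GenericVertex T // (genericGraph T).degree v = 1} ∧
    Fintype.card {v : GenericVertex T // (genericGraph T).degree v = 1} =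
        Fintype.card {v : V // T.degree v = 1} := by
  exact ⟨(Stmt10Aux.cliqueNum_eq hT).trans (Stmt10Aux.card_leaves hT).symm,
    Stmt10Aux.card_leaves hT⟩
end

section
/- Let T be a tree and G_T its generic graph. If e and f are any two edges of G_T, then some endpoint of e is adjacent or equal in G_T to some endpoint of f; precisely, if {x_{i_1,k_1}, x_{j_1,l_1}} and {x_{i_2,k_2}, x_{j_2,l_2}} are edges of G_T, then at least one of {x_{i_1,k_1}, x_{i_2,k_2}}, {x_{i_1,k_1}, x_{j_2,l_2}}, {x_{j_1,l_1}, x_{i_2,k_2}}, {x_{j_1,l_1}, x_{j_2,l_2}} is an edge of G_T. -/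
open scoped Classical

namespace GGaux

open SimpleGraph Walk

variable {V : Type*} [DecidableEq V] {T : SimpleGraph V}

/-- `Br T x n y` : there is a path from `n` to `y` avoiding `x`
(i.e. `y` is in the branch of `n` at `x`). -/
def Br (T : SimpleGraph V) (x n y : V) : Prop :=
  ∃ p : T.Walk n y, p.IsPath ∧ x ∉ p.support

lemma Br.ne {x n y : V} (h : Br T x n y) : x ≠ y := by
  obtain ⟨p, -, hx⟩ := h
  rintro rfl
  exact hx p.end_mem_support

lemma Br.closed {x n y z : V} (h : Br T x n y) (r : T.Walk y z) (hr : x ∉ r.support) :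
    Br T x n z := by
  obtain ⟨p, hp, hx⟩ := h
  refine ⟨(p.append r).bypass, (p.append r).bypass_isPath, fun hmem => ?_⟩
  have := (p.append r).support_bypass_subset hmem
  rw [Walk.mem_support_append_iff] at this
  exact this.elim hx hr

lemma mem_of_not_Br {x n y z : V} (h : Br T x n y) (h' : ¬ Br T x n z) (r : T.Walk y z) :
    x ∈ r.support := by
  by_contra hx
  exact h' (h.closed r hx)

lemma path_length_eq_dist (hT : T.IsTree) {x y : V} {p : T.Walk x y} (hp : p.IsPath) :
    p.length = T.dist x y := by
  obtain ⟨q, hq, hql⟩ := hT.isConnected.exists_path_of_dist x y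
  rw [(hT.existsUnique_path x y).unique hp hq, hql]

lemma on_path (hT : T.IsTree) {x y v : V} {p : T.Walk x y} (hp : p.IsPath)
    (hv : v ∈ p.support) : T.dist x v + T.dist v y = T.dist x y := by
  have h1 := path_length_eq_dist hT (hp.takeUntil hv)
  have h2 := path_length_eq_dist hT (hp.dropUntil hv)
  have h3 := path_length_eq_dist hT hp
  have h4 := congrArg Walk.length (p.take_spec hv)
  rw [Walk.length_append] at h4
  omega

lemma on_path_or (hT : T.IsTree) {x y u v : V} {p : T.Walk x y} (hp : p.IsPath)
    (hu : u ∈ p.support) (hv : v ∈ p.support) :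
    T.dist x v + T.dist v u = T.dist x u ∨ T.dist x u + T.dist u v = T.dist x v := by
  rw [← p.take_spec hv, Walk.mem_support_append_iff] at hu
  rcases hu with hu | hu
  · exact Or.inr (on_path hT (hp.takeUntil hv) hu)
  · left
    have h1 := on_path hT (hp.dropUntil hv) hu
    have h2 := on_path hT hp hv
    have h3 := on_path hT hp (p.support_dropUntil_subset hv hu)
    omega

lemma branch_cover (hT : T.IsTree) {i k j l : V} (hik : T.Adj i k)
    (h1 : Br T i k j) (h2 : Br T j l i) (v : V) : Br T i k v ∨ Br T j l v := by
  obtain ⟨p0, hp0, hip0⟩ := h1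
  obtain ⟨Q, hQ, -⟩ := hT.isConnected.exists_path_of_dist i v
  by_cases hk : k ∈ Q.support
  · left
    refine ⟨Q.dropUntil k hk, hQ.dropUntil hk, fun hi => ?_⟩
    have hQn := hQ.support_nodup
    rw [← Q.take_spec hk, Walk.support_append] at hQn
    have hdisj := (List.nodup_append'.mp hQn).2.2
    have hitail : i ∈ (Q.dropUntil k hk).support.tail := by
      rw [Walk.support_eq_cons (Q.dropUntil k hk)] at hi
      rcases List.mem_cons.mp hi with rfl | hi2
      · exact absurd rfl hik.ne
      · exact hi2
    exact hdisj (Walk.start_mem_support _) hitail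
  · have hj : j ∉ Q.support := by
      intro hj
      have htq : (Q.takeUntil j hj).IsPath := hQ.takeUntil hj
      have hc : (Walk.cons hik p0).IsPath := hp0.cons hip0
      have he : Q.takeUntil j hj = Walk.cons hik p0 := (hT.existsUnique_path i j).unique htq hc
      have hk' : k ∈ (Q.takeUntil j hj).support := by
        rw [he, Walk.support_cons]
        exact List.mem_cons_of_mem _ p0.start_mem_support
      exact hk (Q.support_takeUntil_subset hj hk')
    exact Or.inr (h2.closed Q hj)

lemma genericAdj_half {x y n : V} (w : T.Walk x y) (hw : w.IsPath) (hlen : 0 < w.length)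
    (h1 : w.support[1]? = some n) : x ≠ y ∧ Br T x n y := by
  cases w with
  | nil => simp at hlen
  | @cons _ m _ h p =>
    rw [Walk.support_cons] at h1
    rw [Walk.support_eq_cons p] at h1
    simp only [List.getElem?_cons_succ, List.getElem?_cons_zero, Option.some.injEq] at h1
    subst h1
    rw [Walk.cons_isPath_iff] at hw
    refine ⟨fun hxy => ?_, ⟨p, hw.1, hw.2⟩⟩
    exact hw.2 (hxy ▸ p.end_mem_support)

lemma genericAdj_R {a b : GenericVertex T}
    (h : ∃ w : T.Walk a.val.1 b.val.1, w.IsPath ∧ 0 < w.length ∧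
      w.support[1]? = some a.val.2 ∧ w.support.reverse[1]? = some b.val.2) :
    a.val.1 ≠ b.val.1 ∧ Br T a.val.1 a.val.2 b.val.1 ∧ Br T b.val.1 b.val.2 a.val.1 := by
  obtain ⟨w, hw, hlen, h1, h2⟩ := h
  obtain ⟨hne, hbr⟩ := genericAdj_half w hw hlen h1
  have h2' : w.reverse.support[1]? = some b.val.2 := by
    rwa [Walk.support_reverse]
  have hlen' : 0 < w.reverse.length := by rwa [Walk.length_reverse]
  obtain ⟨-, hbr'⟩ := genericAdj_half w.reverse hw.reverse hlen' h2'
  exact ⟨hne, hbr, hbr'⟩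

lemma genericAdj_iff (hT : T.IsTree) (a b : GenericVertex T) :
    (genericGraph T).Adj a b ↔
      a.val.1 ≠ b.val.1 ∧ Br T a.val.1 a.val.2 b.val.1 ∧ Br T b.val.1 b.val.2 a.val.1 := by
  rw [genericGraph, SimpleGraph.fromRel_adj]
  constructor
  · rintro ⟨-, h | h⟩
    · exact genericAdj_R h
    · obtain ⟨hne, hb1, hb2⟩ := genericAdj_R h
      exact ⟨hne.symm, hb2, hb1⟩
  · rintro ⟨hne, ⟨p, hp, hap⟩, ⟨q, hq, hbq⟩⟩
    have hw1 : (Walk.cons a.property p).IsPath := hp.cons hap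
    have hw2 : ((Walk.cons b.property q).reverse : T.Walk a.val.1 b.val.1).IsPath :=
      (hq.cons hbq).reverse
    have he : Walk.cons a.property p = (Walk.cons b.property q).reverse :=
      (hT.existsUnique_path a.val.1 b.val.1).unique hw1 hw2
    refine ⟨fun hab => hne (congrArg (fun z => z.val.1) hab),
      Or.inl ⟨Walk.cons a.property p, hw1, by simp [Walk.length_cons], ?_, ?_⟩⟩
    · rw [Walk.support_cons, Walk.support_eq_cons p]
      simp
    · rw [he, Walk.support_reverse, List.reverse_reverse, Walk.support_cons,
        Walk.support_eq_cons q]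
      simp

lemma key (hT : T.IsTree) {i1 k1 j1 l1 i2 k2 j2 l2 : V}
    (h11 : T.Adj i1 k1) (h21 : T.Adj i2 k2)
    (e1a : Br T i1 k1 j1) (e1b : Br T j1 l1 i1) (e2a : Br T i2 k2 j2) (e2b : Br T j2 l2 i2)
    (hx : Br T i1 k1 i2) :
    (Br T i1 k1 i2 ∧ Br T i2 k2 i1) ∨ (Br T i1 k1 j2 ∧ Br T j2 l2 i1) ∨
    (Br T j1 l1 i2 ∧ Br T i2 k2 j1) ∨ (Br T j1 l1 j2 ∧ Br T j2 l2 j1) := by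
  by_cases c1 : Br T i2 k2 i1
  · exact Or.inl ⟨hx, c1⟩
  have g1 : Br T j2 l2 i1 := (branch_cover hT h21 e2a e2b i1).resolve_left c1
  by_cases c2 : Br T i1 k1 j2
  · exact Or.inr (Or.inl ⟨c2, g1⟩)
  have g2 : Br T j1 l1 j2 := (branch_cover hT h11 e1a e1b j2).resolve_left c2
  by_cases c3 : Br T j2 l2 j1
  · exact Or.inr (Or.inr (Or.inr ⟨g2, c3⟩))
  have g3 : Br T i2 k2 j1 := (branch_cover hT h21 e2a e2b j1).resolve_right c3
  by_cases c4 : Br T j1 l1 i2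
  · exact Or.inr (Or.inr (Or.inl ⟨c4, g3⟩))
  exfalso
  obtain ⟨P1, hP1, -⟩ := hT.isConnected.exists_path_of_dist i1 j1
  obtain ⟨P2, hP2, -⟩ := hT.isConnected.exists_path_of_dist i2 j2
  have hi2P1 : i2 ∈ P1.support := by
    have := mem_of_not_Br g3 c1 P1.reverse
    rwa [Walk.support_reverse, List.mem_reverse] at this
  have hi1P2 : i1 ∈ P2.support := mem_of_not_Br hx c2 P2
  have hj1P2 : j1 ∈ P2.support := by
    have := mem_of_not_Br g2 c4 P2.reverse
    rwa [Walk.support_reverse, List.mem_reverse] at this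
  have eq1 : T.dist i1 i2 + T.dist i2 j1 = T.dist i1 j1 := on_path hT hP1 hi2P1
  have disj := on_path_or hT hP2 hi1P2 hj1P2
  have dpos1 : 0 < T.dist i1 i2 := hT.isConnected.pos_dist_of_ne hx.ne
  have dpos2 : 0 < T.dist i2 j1 := hT.isConnected.pos_dist_of_ne g3.ne
  have hc1 : T.dist i2 i1 = T.dist i1 i2 := SimpleGraph.dist_comm ..
  have hc2 : T.dist j1 i1 = T.dist i1 j1 := SimpleGraph.dist_comm ..
  rw [hc1, hc2] at disj
  rcases disj with h | h <;> omega

end GGaux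

open GGaux

/-- If {a,b} and {c,d} are two edges of the generic graph of a tree, then at least one of
{a,c}, {a,d}, {b,c}, {b,d} is also an edge. -/
theorem stmt11 {V : Type*} [Fintype V] [DecidableEq V] (T : SimpleGraph V) [DecidableRel T.Adj]
    (hT : T.IsTree) (a b c d : GenericVertex T)
    (h1 : (genericGraph T).Adj a b) (h2 : (genericGraph T).Adj c d) :
    (genericGraph T).Adj a c ∨ (genericGraph T).Adj a d ∨
    (genericGraph T).Adj b c ∨ (genericGraph T).Adj b d := by

  obtain ⟨ne1, e1a, e1b⟩ := (genericAdj_iff hT a b).mp h1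
  obtain ⟨ne2, e2a, e2b⟩ := (genericAdj_iff hT c d).mp h2
  have mk : ∀ (u v : GenericVertex T), Br T u.val.1 u.val.2 v.val.1 →
      Br T v.val.1 v.val.2 u.val.1 → (genericGraph T).Adj u v := fun u v hu hv =>
    (genericAdj_iff hT u v).mpr ⟨hu.ne, hu, hv⟩
  rcases branch_cover hT a.property e1a e1b c.val.1 with hx | hx
  · rcases key hT a.property c.property e1a e1b e2a e2b hx with
      ⟨u1, u2⟩ | ⟨u1, u2⟩ | ⟨u1, u2⟩ | ⟨u1, u2⟩
    · exact Or.inl (mk a c u1 u2)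
    · exact Or.inr (Or.inl (mk a d u1 u2))
    · exact Or.inr (Or.inr (Or.inl (mk b c u1 u2)))
    · exact Or.inr (Or.inr (Or.inr (mk b d u1 u2)))
  · rcases key hT b.property c.property e1b e1a e2a e2b hx with
      ⟨u1, u2⟩ | ⟨u1, u2⟩ | ⟨u1, u2⟩ | ⟨u1, u2⟩
    · exact Or.inr (Or.inr (Or.inl (mk b c u1 u2)))
    · exact Or.inr (Or.inr (Or.inr (mk b d u1 u2)))
    · exact Or.inl (mk a c u1 u2)
    · exact Or.inr (Or.inl (mk a d u1 u2))
end

section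
/- For any tree T, the generic graph G_T is edgewise strongly shellable. -/
open scoped Classical

namespace TreeESSAux
open SimpleGraph Walk
variable {V : Type*} {T : SimpleGraph V}



/-- The unique path between two vertices of a tree. -/
noncomputable def tp (hT : T.IsTree) (u v : V) : T.Walk u v :=
  (hT.existsUnique_path u v).exists.choose

lemma tp_isPath (hT : T.IsTree) (u v : V) : (tp hT u v).IsPath :=
  (hT.existsUnique_path u v).exists.choose_spec

lemma tp_unique (hT : T.IsTree) {u v : V} (w : T.Walk u v) (hw : w.IsPath) :
    w = tp hT u v :=
  (hT.existsUnique_path u v).unique hw (tp_isPath hT u v)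

/-- Next vertex on the path from `u` to `v`. -/
noncomputable def nxt (hT : T.IsTree) (u v : V) : V := (tp hT u v).getVert 1

/-- Tree distance. -/
noncomputable def d (hT : T.IsTree) (u v : V) : ℕ := (tp hT u v).length

lemma d_eq_zero_iff (hT : T.IsTree) {u v : V} : d hT u v = 0 ↔ u = v := by
  constructor
  · exact fun h => Walk.eq_of_length_eq_zero h
  · rintro rfl
    have : (Walk.nil : T.Walk u u) = tp hT u u := tp_unique hT _ (IsPath.nil)
    simp [d, ← this]

lemma tp_reverse (hT : T.IsTree) (u v : V) : (tp hT u v).reverse = tp hT v u :=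
  tp_unique hT _ ((tp_isPath hT u v).reverse)

lemma d_symm (hT : T.IsTree) (u v : V) : d hT u v = d hT v u := by
  rw [d, d, ← tp_reverse hT u v, Walk.length_reverse]

lemma d_pos (hT : T.IsTree) {u v : V} (h : u ≠ v) : 0 < d hT u v :=
  Nat.pos_of_ne_zero (fun h0 => h ((d_eq_zero_iff hT).1 h0))

lemma d_lt_card [Fintype V] (hT : T.IsTree) (u v : V) : d hT u v < Fintype.card V :=
  (tp_isPath hT u v).length_lt

lemma adj_nxt (hT : T.IsTree) {u v : V} (h : u ≠ v) : T.Adj u (nxt hT u v) := by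
  have h0 : 0 < (tp hT u v).length := d_pos hT h
  have := (tp hT u v).adj_getVert_succ h0
  simpa [Walk.getVert_zero, nxt] using this

/-- second entry of the support. -/
lemma support_getElem_one {u v : V} (w : T.Walk u v) (h : 0 < w.length) :
    w.support[1]? = some (w.getVert 1) := by
  cases w with
  | nil => simp at h
  | cons hadj w' =>
      rw [Walk.support_cons]
      rw [Walk.getVert_cons_succ, Walk.getVert_zero]
      rw [Walk.support_eq_cons w']
      simp

/-- first step of a `takeUntil` prefix. -/
lemma takeUntil_getVert_one (hT : T.IsTree) {v x z : V} (p : T.Walk v x)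
    (hz : z ∈ p.support) (hzv : z ≠ v) :
    (p.takeUntil z hz).getVert 1 = p.getVert 1 := by
  have hlen : 0 < (p.takeUntil z hz).length := by
    rcases Nat.eq_zero_or_pos (p.takeUntil z hz).length with h0 | h
    · exact absurd (Walk.eq_of_length_eq_zero h0).symm hzv
    · exact h
  conv_rhs => rw [← Walk.take_spec p hz]
  rw [Walk.getVert_append]
  split_ifs with h1
  · rfl
  · -- 1 ≥ length of takeUntil, so length = 1
    have hl1 : (p.takeUntil z hz).length = 1 := by omega
    have hz1 : (p.takeUntil z hz).getVert 1 = z := by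
      conv_lhs => rw [← hl1]
      exact Walk.getVert_length _
    have hz2 : (p.dropUntil z hz).getVert (1 - (p.takeUntil z hz).length) = z := by
      rw [hl1]
      simpa using Walk.getVert_zero _
    rw [hz1, hz2]

lemma split_d (hT : T.IsTree) {x r v : V} (h : v ∈ (tp hT x r).support) :
    d hT x r = d hT x v + d hT v r := by
  have h1 : ((tp hT x r).takeUntil v h) = tp hT x v :=
    tp_unique hT _ ((tp_isPath hT x r).takeUntil h)
  have h2 : ((tp hT x r).dropUntil v h) = tp hT v r :=
    tp_unique hT _ ((tp_isPath hT x r).dropUntil h)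
  have := congrArg Walk.length (Walk.take_spec (tp hT x r) h)
  rw [Walk.length_append, h1, h2] at this
  exact this.symm

/-- Fork lemma: if the first steps from `v` towards `x` and `r` differ, then `v` is on
the path from `x` to `r`. -/
lemma fork (hT : T.IsTree) {v x r : V} (hvx : v ≠ x) (hvr : v ≠ r)
    (hne : nxt hT v x ≠ nxt hT v r) : v ∈ (tp hT x r).support := by
  set W1 := tp hT v x with hW1
  set W2 := tp hT v r with hW2
  have key : ∀ z, z ∈ W1.support → z ∈ W2.support → z = v := by
    intro z h1 h2
    by_contra hz
    have e1 : W1.takeUntil z h1 = tp hT v z :=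
      tp_unique hT _ ((tp_isPath hT v x).takeUntil h1)
    have e2 : W2.takeUntil z h2 = tp hT v z :=
      tp_unique hT _ ((tp_isPath hT v r).takeUntil h2)
    apply hne
    have g1 : nxt hT v x = (tp hT v z).getVert 1 := by
      rw [← e1, takeUntil_getVert_one hT W1 h1 hz]; rfl
    have g2 : nxt hT v r = (tp hT v z).getVert 1 := by
      rw [← e2, takeUntil_getVert_one hT W2 h2 hz]; rfl
    rw [g1, g2]
  have hq : (W1.reverse.append W2).IsPath := by
    rw [Walk.isPath_def, Walk.support_append]
    apply List.Nodup.append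
    · rw [Walk.support_reverse]
      exact List.nodup_reverse.2 (tp_isPath hT v x).support_nodup
    · exact (tp_isPath hT v r).support_nodup.sublist (List.tail_sublist _)
    · intro z hz1 hz2
      have hz1' : z ∈ W1.support := by
        rw [Walk.support_reverse] at hz1
        exact List.mem_reverse.1 hz1
      have hz2' : z ∈ W2.support := List.mem_of_mem_tail hz2
      have hzv : z = v := key z hz1' hz2'
      rw [hzv] at hz2
      have hcons : W2.support = v :: W2.support.tail := Walk.support_eq_cons W2
      have hnd := (tp_isPath hT v r).support_nodup
      rw [← hW2] at hnd
      rw [hcons] at hnd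
      exact (List.nodup_cons.1 hnd).1 hz2
  have hcq : W1.reverse.append W2 = tp hT x r := tp_unique hT _ hq
  rw [← hcq, Walk.support_append]
  apply List.mem_append_left
  rw [Walk.support_reverse]
  exact List.mem_reverse.2 (Walk.start_mem_support W1)

/-- First steps from `v` coincide towards any two vertices at distance ≤ from the root. -/
lemma nxt_eq_nxt_root (hT : T.IsTree) (r : V) {v x : V} (hx : x ≠ v)
    (hd : d hT r x ≤ d hT r v) : nxt hT v x = nxt hT v r := by
  rcases eq_or_ne v r with rfl | hvr
  · have h0 : d hT v v = 0 := (d_eq_zero_iff hT).2 rfl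
    have hzz : d hT v x = 0 := le_antisymm (h0 ▸ hd) (Nat.zero_le _)
    exact absurd ((d_eq_zero_iff hT).1 hzz).symm hx
  by_contra hne
  have hmem : v ∈ (tp hT x r).support := fork hT (Ne.symm hx) hvr hne
  have hsplit := split_d hT hmem
  have h1 : d hT r x = d hT x r := d_symm hT r x
  have h2 : d hT x v = d hT v x := d_symm hT x v
  have h3 : d hT v x ≠ 0 := fun h0 => hx ((d_eq_zero_iff hT).1 h0).symm
  have h4 : d hT v r = d hT r v := d_symm hT v r
  omega

/-- Crossing lemma: for distinct `p q` and `a ∉ {p,q}`, the path from `p` to `a` starts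
towards `q`, or the path from `q` to `a` starts towards `p`. -/
lemma cross (hT : T.IsTree) {a p q : V} (hpq : p ≠ q) (hap : a ≠ p) (haq : a ≠ q) :
    nxt hT p a = nxt hT p q ∨ nxt hT q a = nxt hT q p := by
  by_contra hcon
  push_neg at hcon
  obtain ⟨h1, h2⟩ := hcon
  have hm1 : p ∈ (tp hT a q).support := fork hT (Ne.symm hap) hpq h1
  have hm2 : q ∈ (tp hT a p).support := fork hT (Ne.symm haq) hpq.symm h2
  have hs1 := split_d hT hm1
  have hs2 := split_d hT hm2
  have hpq0 : d hT p q ≠ 0 := fun h0 => hpq ((d_eq_zero_iff hT).1 h0)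
  have := d_symm hT p q
  have := d_symm hT q p
  omega



section Adj
variable [DecidableEq V]

lemma rel_iff (hT : T.IsTree) {i j k l : V} :
    (∃ w : T.Walk i j, w.IsPath ∧ 0 < w.length ∧
      w.support[1]? = some k ∧ w.support.reverse[1]? = some l) ↔
      (i ≠ j ∧ k = nxt hT i j ∧ l = nxt hT j i) := by
  constructor
  · rintro ⟨w, hw, hlen, h1, h2⟩
    obtain rfl : w = tp hT i j := tp_unique hT w hw
    have hij : i ≠ j := by
      intro h; subst h
      have := (d_eq_zero_iff hT (u := i) (v := i)).2 rfl
      simp only [d] at this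
      omega
    refine ⟨hij, ?_, ?_⟩
    · rw [support_getElem_one _ hlen] at h1
      exact (Option.some_injective _ h1).symm
    · rw [← Walk.support_reverse, tp_reverse hT i j] at h2
      have hlen2 : 0 < (tp hT j i).length := d_pos hT (Ne.symm hij)
      rw [support_getElem_one _ hlen2] at h2
      exact (Option.some_injective _ h2).symm
  · rintro ⟨hij, rfl, rfl⟩
    refine ⟨tp hT i j, tp_isPath hT i j, d_pos hT hij, ?_, ?_⟩
    · exact support_getElem_one _ (d_pos hT hij)
    · rw [← Walk.support_reverse, tp_reverse hT i j]
      exact support_getElem_one _ (d_pos hT (Ne.symm hij))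

lemma adj_iff (hT : T.IsTree) (a b : GenericVertex T) :
    (genericGraph T).Adj a b ↔
      (a.1.1 ≠ b.1.1 ∧ a.1.2 = nxt hT a.1.1 b.1.1 ∧ b.1.2 = nxt hT b.1.1 a.1.1) := by
  rw [genericGraph, SimpleGraph.fromRel_adj]
  rw [rel_iff hT, rel_iff hT]
  constructor
  · rintro ⟨hab, h | h⟩
    · exact h
    · exact ⟨Ne.symm h.1, h.2.2, h.2.1⟩
  · rintro ⟨h1, h2, h3⟩
    refine ⟨?_, Or.inl ⟨h1, h2, h3⟩⟩
    intro h; apply h1; rw [h]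
end Adj

section Order
variable [Fintype V] [DecidableEq V]

noncomputable def root (hT : T.IsTree) : V := hT.isConnected.nonempty.some

noncomputable def key (hT : T.IsTree) (a : V) : ℕ :=
  Fintype.card V * (Fintype.card V - d hT (root hT) a) + ((Fintype.equivFin V) a : ℕ)

lemma equivFin_lt (a : V) : ((Fintype.equivFin V) a : ℕ) < Fintype.card V :=
  ((Fintype.equivFin V) a).2

lemma key_inj (hT : T.IsTree) {a b : V} (h : key hT a = key hT b) : a = b := by
  have ha := equivFin_lt a
  have hb := equivFin_lt b
  have : ((Fintype.equivFin V) a : ℕ) = ((Fintype.equivFin V) b : ℕ) := by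
    have h1 := congrArg (· % Fintype.card V) h
    simpa [key, Nat.mul_add_mod, Nat.mod_eq_of_lt ha, Nat.mod_eq_of_lt hb] using h1
  have : (Fintype.equivFin V) a = (Fintype.equivFin V) b := Fin.ext this
  exact (Fintype.equivFin V).injective this

lemma d_le_of_key_lt (hT : T.IsTree) {v x : V} (h : key hT v < key hT x) :
    d hT (root hT) x ≤ d hT (root hT) v := by
  by_contra hlt
  push_neg at hlt
  set c := Fintype.card V with hc
  have hx : d hT (root hT) x < c := d_lt_card hT _ _
  have hv : d hT (root hT) v < c := d_lt_card hT _ _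
  have h1 : c - d hT (root hT) x + 1 ≤ c - d hT (root hT) v := by omega
  have h2 : key hT x < c * (c - d hT (root hT) x + 1) := by
    have hkey : key hT x = c * (c - d hT (root hT) x) + ((Fintype.equivFin V) x : ℕ) := rfl
    rw [hkey, Nat.mul_succ]
    exact Nat.add_lt_add_left (equivFin_lt x) _
  have h3 : c * (c - d hT (root hT) x + 1) ≤ c * (c - d hT (root hT) v) :=
    Nat.mul_le_mul_left c h1
  have h4 : c * (c - d hT (root hT) v) ≤ key hT v := Nat.le_add_right _ _
  omega

lemma key_lt_ne (hT : T.IsTree) {a b : V} (h : key hT a < key hT b) : a ≠ b :=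
  fun hab => absurd (congrArg (key hT) hab) (Nat.ne_of_lt h)

/-- if `x` comes after `v` in the ordering, the first step from `v` to `x` is the first
step from `v` to the root. -/
lemma nxt_eq_of_key_lt (hT : T.IsTree) {v x : V} (h : key hT v < key hT x) :
    nxt hT v x = nxt hT v (root hT) :=
  nxt_eq_nxt_root hT (root hT) (Ne.symm (key_lt_ne hT h)) (d_le_of_key_lt hT h)

end Order
section Eset
variable [Fintype V] [DecidableEq V] [DecidableRel T.Adj]

noncomputable def vert (hT : T.IsTree) (a b : V) (h : a ≠ b) : GenericVertex T :=
  ⟨(a, nxt hT a b), adj_nxt hT h⟩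

noncomputable def eset (hT : T.IsTree) (a b : V) : Finset (GenericVertex T) :=
  Finset.univ.filter (fun x => x.1 = (a, nxt hT a b) ∨ x.1 = (b, nxt hT b a))

lemma mem_eset (hT : T.IsTree) {a b : V} {x : GenericVertex T} :
    x ∈ eset hT a b ↔ (x.1 = (a, nxt hT a b) ∨ x.1 = (b, nxt hT b a)) := by
  simp [eset]

lemma vert_mem_left (hT : T.IsTree) {a b : V} (h : a ≠ b) :
    vert hT a b h ∈ eset hT a b := by
  rw [mem_eset]; exact Or.inl rfl

lemma vert_mem_right (hT : T.IsTree) {a b : V} (h : a ≠ b) :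
    vert hT b a h.symm ∈ eset hT a b := by
  rw [mem_eset]; exact Or.inr rfl

lemma eset_eq_pair (hT : T.IsTree) {a b : V} (h : a ≠ b) :
    eset hT a b = {vert hT a b h, vert hT b a h.symm} := by
  ext x
  simp only [mem_eset, Finset.mem_insert, Finset.mem_singleton, vert, Subtype.ext_iff]

lemma vert_ne (hT : T.IsTree) {a b a' b' : V} (h : a ≠ b) (h' : a' ≠ b') (hne : a ≠ a') :
    vert hT a b h ≠ vert hT a' b' h' := by
  simp only [vert, ne_eq, Subtype.mk.injEq, Prod.mk.injEq, not_and]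
  exact fun hc => absurd hc hne

lemma card_eset (hT : T.IsTree) {a b : V} (h : a ≠ b) : (eset hT a b).card = 2 := by
  rw [eset_eq_pair hT h, Finset.card_insert_of_notMem, Finset.card_singleton]
  simp only [Finset.mem_singleton]
  exact vert_ne hT h h.symm h

lemma adj_verts (hT : T.IsTree) {a b : V} (h : a ≠ b) :
    (genericGraph T).Adj (vert hT a b h) (vert hT b a h.symm) :=
  (adj_iff hT _ _).2 ⟨h, rfl, rfl⟩

lemma mem_edgeSets_iff {W : Type*} [Fintype W] [DecidableEq W] {G : SimpleGraph W}
    [DecidableRel G.Adj] {e : Finset W} :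
    e ∈ edgeSets G ↔ ∃ x y, G.Adj x y ∧ ({x, y} : Finset W) = e := by
  unfold edgeSets
  rw [Finset.mem_image]
  constructor
  · rintro ⟨s, hs, hse⟩
    rw [SimpleGraph.mem_edgeFinset] at hs
    revert hs hse
    refine Sym2.ind (fun x y => ?_) s
    intro hs hse
    exact ⟨x, y, hs, by simpa using hse⟩
  · rintro ⟨x, y, hadj, rfl⟩
    exact ⟨s(x, y), by simp [SimpleGraph.mem_edgeFinset, hadj], by simp⟩

lemma eset_mem_edgeSets (hT : T.IsTree) [DecidableRel (genericGraph T).Adj] {a b : V}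
    (h : a ≠ b) : eset hT a b ∈ edgeSets (genericGraph T) :=
  mem_edgeSets_iff.2 ⟨_, _, adj_verts hT h, (eset_eq_pair hT h).symm⟩

lemma eset_comm (hT : T.IsTree) (a b : V) : eset hT a b = eset hT b a := by
  ext x; rw [mem_eset, mem_eset]; exact or_comm

lemma edgeSets_char (hT : T.IsTree) [DecidableRel (genericGraph T).Adj]
    {e : Finset (GenericVertex T)} (he : e ∈ edgeSets (genericGraph T)) :
    ∃ a b, key hT a < key hT b ∧ e = eset hT a b := by
  obtain ⟨x, y, hadj, rfl⟩ := mem_edgeSets_iff.1 he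
  rw [adj_iff hT] at hadj
  obtain ⟨hij, hx2, hy2⟩ := hadj
  have hx : x = vert hT x.1.1 y.1.1 hij := by
    apply Subtype.ext
    rw [vert]
    exact Prod.ext rfl hx2
  have hy : y = vert hT y.1.1 x.1.1 hij.symm := by
    apply Subtype.ext
    rw [vert]
    exact Prod.ext rfl hy2
  rcases lt_trichotomy (key hT x.1.1) (key hT y.1.1) with hlt | heq | hgt
  · refine ⟨x.1.1, y.1.1, hlt, ?_⟩
    rw [eset_eq_pair hT hij, ← hx, ← hy]
  · exact absurd (key_inj hT heq) hij
  · refine ⟨y.1.1, x.1.1, hgt, ?_⟩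
    rw [eset_eq_pair hT hij.symm, ← hx, ← hy, Finset.pair_comm]

lemma eset_inj (hT : T.IsTree) {a b p q : V} (hab : key hT a < key hT b)
    (hpq : key hT p < key hT q) (h : eset hT a b = eset hT p q) : (a, b) = (p, q) := by
  have hab' : a ≠ b := key_lt_ne hT hab
  have hpq' : p ≠ q := key_lt_ne hT hpq
  have h1 := (mem_eset hT).1 (h ▸ vert_mem_left hT hab')
  have h2 := (mem_eset hT).1 (h ▸ vert_mem_right hT hab')
  simp only [vert, Prod.mk.injEq] at h1 h2
  rcases h1 with ⟨hap, -⟩ | ⟨haq, -⟩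
  · rcases h2 with ⟨hbp, -⟩ | ⟨hbq, -⟩
    · exact absurd (hap.trans hbp.symm) hab'
    · rw [hap, hbq]
  · rcases h2 with ⟨hbp, -⟩ | ⟨hbq, -⟩
    · subst haq; subst hbp
      exact absurd hpq (by omega)
    · exact absurd (haq.trans hbq.symm) hab'

end Eset

section Skey
variable [Fintype V] [DecidableEq V]

noncomputable def skey (hT : T.IsTree) (p : V × V) : ℕ :=
  key hT p.1 * (Fintype.card V * Fintype.card V + Fintype.card V) + key hT p.2

lemma key_lt_M (hT : T.IsTree) (a : V) :
    key hT a < Fintype.card V * Fintype.card V + Fintype.card V := by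
  have h1 : Fintype.card V * (Fintype.card V - d hT (root hT) a) ≤
      Fintype.card V * Fintype.card V :=
    Nat.mul_le_mul_left _ (Nat.sub_le _ _)
  have h2 := equivFin_lt a
  exact Nat.add_lt_add_of_le_of_lt h1 h2

lemma skey_mono_left (hT : T.IsTree) {a p : V} (h : key hT a < key hT p) (x y : V) :
    skey hT (a, x) < skey hT (p, y) := by
  set M := Fintype.card V * Fintype.card V + Fintype.card V with hM
  calc key hT a * M + key hT x < key hT a * M + M := Nat.add_lt_add_left (key_lt_M hT x) _
    _ = (key hT a + 1) * M := (Nat.succ_mul _ _).symm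
    _ ≤ key hT p * M := Nat.mul_le_mul_right M h
    _ ≤ key hT p * M + key hT y := Nat.le_add_right _ _

lemma skey_mono_right (hT : T.IsTree) (a : V) {x y : V} (h : key hT x < key hT y) :
    skey hT (a, x) < skey hT (a, y) :=
  Nat.add_lt_add_left h _

lemma skey_le_first (hT : T.IsTree) {a b p q : V} (h : skey hT (a, b) ≤ skey hT (p, q)) :
    key hT a ≤ key hT p := by
  by_contra hcon
  push_neg at hcon
  exact absurd h (Nat.not_le.2 (skey_mono_left hT hcon q b))

lemma skey_inj (hT : T.IsTree) {p q : V × V} (h : skey hT p = skey hT q) : p = q := by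
  have hp2 := key_lt_M hT p.2
  have hq2 := key_lt_M hT q.2
  have e1 : skey hT p % (Fintype.card V * Fintype.card V + Fintype.card V) = key hT p.2 := by
    rw [skey, Nat.add_comm, Nat.add_mul_mod_self_right, Nat.mod_eq_of_lt hp2]
  have e2 : skey hT q % (Fintype.card V * Fintype.card V + Fintype.card V) = key hT q.2 := by
    rw [skey, Nat.add_comm, Nat.add_mul_mod_self_right, Nat.mod_eq_of_lt hq2]
  have h2 : key hT p.2 = key hT q.2 := by rw [← e1, ← e2, h]
  have hM0 : 0 < Fintype.card V * Fintype.card V + Fintype.card V := by omega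
  have h' := h
  rw [skey, skey, h2] at h'
  have h3 := Nat.add_right_cancel h'
  have h1 := Nat.eq_of_mul_eq_mul_right hM0 h3
  exact Prod.ext (key_inj hT h1) (key_inj hT h2)

end Skey

section Main
variable [Fintype V] [DecidableEq V] [DecidableRel T.Adj]

/-- Main combinatorial step: for two disjoint generic edges with the first one smaller,
there is a crossing edge that is strictly earlier. -/
lemma main_step (hT : T.IsTree) {a b p q : V} (hab : key hT a < key hT b)
    (hpq : key hT p < key hT q) (hle : skey hT (a, b) ≤ skey hT (p, q))
    (hdisj : eset hT a b ∩ eset hT p q = ∅) :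
    ∃ u w : V, key hT u < key hT w ∧ skey hT (u, w) < skey hT (p, q) ∧
      (eset hT p q \ eset hT u w).card = 1 ∧ eset hT u w ⊆ eset hT a b ∪ eset hT p q := by
  have hab' : a ≠ b := key_lt_ne hT hab
  have hpq' : p ≠ q := key_lt_ne hT hpq
  have hkap : key hT a ≤ key hT p := skey_le_first hT hle
  have haq : a ≠ q := by
    intro h
    rw [h] at hkap
    omega
  have hap : a ≠ p := by
    intro h
    have h1 : nxt hT a b = nxt hT a (root hT) := nxt_eq_of_key_lt hT hab
    have h2 : nxt hT a q = nxt hT a (root hT) := by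
      apply nxt_eq_of_key_lt hT
      rw [h]; exact hpq
    have hmem : vert hT a b hab' ∈ eset hT p q := by
      rw [mem_eset]
      left
      show (a, nxt hT a b) = (p, nxt hT p q)
      rw [Prod.mk.injEq]
      refine ⟨h, ?_⟩
      rw [← h, h1]
      exact h2.symm
    have hmem2 : vert hT a b hab' ∈ eset hT a b ∩ eset hT p q :=
      Finset.mem_inter.2 ⟨vert_mem_left hT hab', hmem⟩
    rw [hdisj] at hmem2
    exact absurd hmem2 (Finset.notMem_empty _)
  have hkap' : key hT a < key hT p :=
    lt_of_le_of_ne hkap (fun h => hap (key_inj hT h))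
  have hkaq : key hT a < key hT q := hkap'.trans hpq
  have hnap : nxt hT a p = nxt hT a b := by
    rw [nxt_eq_of_key_lt hT hkap', nxt_eq_of_key_lt hT hab]
  have hnaq : nxt hT a q = nxt hT a b := by
    rw [nxt_eq_of_key_lt hT hkaq, nxt_eq_of_key_lt hT hab]
  have hvab : ∀ (z : V) (hz : a ≠ z), key hT a < key hT z → vert hT a z hz = vert hT a b hab' := by
    intro z hz hk
    apply Subtype.ext
    simp only [vert]
    rw [nxt_eq_of_key_lt hT hk, nxt_eq_of_key_lt hT hab]
  rcases cross hT hpq' hap haq with hz | hz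
  · -- use pair (a, p); the crossing edge is {vert a b, vert p q}
    refine ⟨a, p, hkap', skey_mono_left hT hkap' _ _, ?_, ?_⟩
    · have heR : eset hT a p = {vert hT a b hab', vert hT p q hpq'} := by
        rw [eset_eq_pair hT hap]
        congr 1
        · exact hvab p hap hkap'
        · congr 1
          apply Subtype.ext
          simp only [vert]
          rw [hz]
      rw [heR, eset_eq_pair hT hpq']
      have h1 : vert hT q p hpq'.symm ≠ vert hT a b hab' := vert_ne hT _ _ (Ne.symm haq)
      have h2 : vert hT q p hpq'.symm ≠ vert hT p q hpq' := vert_ne hT _ _ (Ne.symm hpq')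
      have : ({vert hT p q hpq', vert hT q p hpq'.symm} : Finset (GenericVertex T)) \
          {vert hT a b hab', vert hT p q hpq'} = {vert hT q p hpq'.symm} := by
        ext x
        simp only [Finset.mem_sdiff, Finset.mem_insert, Finset.mem_singleton]
        constructor
        · rintro ⟨rfl | rfl, hnot⟩
          · exact absurd (Or.inr rfl) hnot
          · rfl
        · rintro rfl
          exact ⟨Or.inr rfl, by push_neg; exact ⟨h1, h2⟩⟩
      rw [this, Finset.card_singleton]
    · have heR : eset hT a p = {vert hT a b hab', vert hT p q hpq'} := by
        rw [eset_eq_pair hT hap]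
        congr 1
        · exact hvab p hap hkap'
        · congr 1
          apply Subtype.ext
          simp only [vert]
          rw [hz]
      rw [heR]
      intro x hx
      rcases Finset.mem_insert.1 hx with rfl | hx
      · exact Finset.mem_union_left _ (vert_mem_left hT hab')
      · rw [Finset.mem_singleton] at hx
        subst hx
        exact Finset.mem_union_right _ (vert_mem_left hT hpq')
  · -- use pair (a, q); the crossing edge is {vert a b, vert q p}
    have hkaq' : skey hT (a, q) < skey hT (p, q) := skey_mono_left hT hkap' _ _
    refine ⟨a, q, hkaq, hkaq', ?_, ?_⟩
    · have heR : eset hT a q = {vert hT a b hab', vert hT q p hpq'.symm} := by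
        rw [eset_eq_pair hT haq]
        congr 1
        · exact hvab q haq hkaq
        · congr 1
          apply Subtype.ext
          simp only [vert]
          rw [hz]
      rw [heR, eset_eq_pair hT hpq']
      have h1 : vert hT p q hpq' ≠ vert hT a b hab' := vert_ne hT _ _ (Ne.symm hap)
      have h2 : vert hT p q hpq' ≠ vert hT q p hpq'.symm := vert_ne hT _ _ hpq'
      have : ({vert hT p q hpq', vert hT q p hpq'.symm} : Finset (GenericVertex T)) \
          {vert hT a b hab', vert hT q p hpq'.symm} = {vert hT p q hpq'} := by
        ext x
        simp only [Finset.mem_sdiff, Finset.mem_insert, Finset.mem_singleton]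
        constructor
        · rintro ⟨rfl | rfl, hnot⟩
          · rfl
          · exact absurd (Or.inr rfl) hnot
        · rintro rfl
          exact ⟨Or.inl rfl, by push_neg; exact ⟨h1, h2⟩⟩
      rw [this, Finset.card_singleton]
    · have heR : eset hT a q = {vert hT a b hab', vert hT q p hpq'.symm} := by
        rw [eset_eq_pair hT haq]
        congr 1
        · exact hvab q haq hkaq
        · congr 1
          apply Subtype.ext
          simp only [vert]
          rw [hz]
      rw [heR]
      intro x hx
      rcases Finset.mem_insert.1 hx with rfl | hx
      · exact Finset.mem_union_left _ (vert_mem_left hT hab')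
      · rw [Finset.mem_singleton] at hx
        subst hx
        exact Finset.mem_union_right _ (vert_mem_right hT hpq')

end Main

end TreeESSAux


/-- The generic graph of any tree is edgewise strongly shellable. -/
theorem stmt12 {V : Type*} [Fintype V] [DecidableEq V] (T : SimpleGraph V) [DecidableRel T.Adj]
    (hT : T.IsTree) :
    StronglyShellable (edgeSets (genericGraph T)) := by
  classical
  open TreeESSAux in
  let le : V × V → V × V → Prop := fun p q => skey hT p ≤ skey hT q
  haveI : DecidableRel le := fun p q => Nat.decLe _ _
  haveI : IsTrans (V × V) le := ⟨fun a b c hab hbc => Nat.le_trans hab hbc⟩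
  haveI : IsAntisymm (V × V) le := ⟨fun a b h1 h2 => skey_inj hT (Nat.le_antisymm h1 h2)⟩
  haveI : IsTotal (V × V) le := ⟨fun a b => Nat.le_total _ _⟩
  set P2 : Finset (V × V) :=
    Finset.univ.filter (fun p : V × V => key hT p.1 < key hT p.2) with hP2
  set S : List (V × V) := P2.sort le with hS
  have hmemS : ∀ p : V × V, p ∈ S ↔ key hT p.1 < key hT p.2 := by
    intro p
    rw [hS, Finset.mem_sort, hP2, Finset.mem_filter]
    simp
  have hsorted : S.Pairwise le := Finset.pairwise_sort P2 le
  have hnodupS : S.Nodup := Finset.sort_nodup P2 le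
  set f : V × V → Finset (GenericVertex T) := fun p => eset hT p.1 p.2 with hf
  refine ⟨S.map f, ?_, ?_, ?_⟩
  · refine List.Nodup.map_on ?_ hnodupS
    intro x hx y hy hxy
    exact eset_inj hT ((hmemS x).1 hx) ((hmemS y).1 hy) hxy
  · ext e
    simp only [List.mem_toFinset, List.mem_map]
    constructor
    · rintro ⟨p, hp, rfl⟩
      exact eset_mem_edgeSets hT (key_lt_ne hT ((hmemS p).1 hp))
    · intro he
      obtain ⟨a, b, hab, rfl⟩ := edgeSets_char hT he
      exact ⟨(a, b), (hmemS _).2 hab, rfl⟩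
  · intro i j hij
    have hlen : (S.map f).length = S.length := List.length_map _
    have hiS : (i : ℕ) < S.length := hlen ▸ i.2
    have hjS : (j : ℕ) < S.length := hlen ▸ j.2
    have hgeti : (S.map f).get i = f (S.get ⟨i, hiS⟩) := by
      rw [List.get_eq_getElem, List.get_eq_getElem, List.getElem_map]
    have hgetj : (S.map f).get j = f (S.get ⟨j, hjS⟩) := by
      rw [List.get_eq_getElem, List.get_eq_getElem, List.getElem_map]
    have hki : key hT (S.get ⟨i, hiS⟩).1 < key hT (S.get ⟨i, hiS⟩).2 :=
      (hmemS _).1 (List.get_mem S ⟨_, hiS⟩)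
    have hkj : key hT (S.get ⟨j, hjS⟩).1 < key hT (S.get ⟨j, hjS⟩).2 :=
      (hmemS _).1 (List.get_mem S ⟨_, hjS⟩)
    have hle : le (S.get ⟨i, hiS⟩) (S.get ⟨j, hjS⟩) :=
      hsorted.rel_get_of_lt (show (⟨i, hiS⟩ : Fin S.length) < ⟨j, hjS⟩ from hij)
    by_cases hcase :
        eset hT (S.get ⟨i, hiS⟩).1 (S.get ⟨i, hiS⟩).2 ∩
          eset hT (S.get ⟨j, hjS⟩).1 (S.get ⟨j, hjS⟩).2 = ∅
    · -- disjoint case: use the crossing edge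
      have hle' : skey hT ((S.get ⟨i, hiS⟩).1, (S.get ⟨i, hiS⟩).2) ≤
          skey hT ((S.get ⟨j, hjS⟩).1, (S.get ⟨j, hjS⟩).2) := by
        simpa using hle
      obtain ⟨u, w, huw, hsk, hcard, hsub⟩ := main_step hT hki hkj hle' hcase
      have hsk' : skey hT (u, w) < skey hT (S.get ⟨j, hjS⟩) := by
        simpa using hsk
      have hmemR : (u, w) ∈ S := (hmemS _).2 huw
      obtain ⟨kf, hSk⟩ := List.mem_iff_get.1 hmemR
      have hknlt : (kf : ℕ) < S.length := kf.2
      have hSk : S.get ⟨(kf : ℕ), hknlt⟩ = (u, w) := by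
        rw [show (⟨(kf : ℕ), hknlt⟩ : Fin S.length) = kf from Fin.ext rfl]
        exact hSk
      have hkj' : (kf : ℕ) < (j : ℕ) := by
        rcases Nat.lt_trichotomy ((kf : ℕ)) (j : ℕ) with h | h | h
        · exact h
        · exfalso
          have heq : S.get ⟨j, hjS⟩ = (u, w) := by
            rw [← hSk]
            congr 1
            exact Fin.ext h.symm
          rw [heq] at hsk'
          exact Nat.lt_irrefl _ hsk'
        · exfalso
          have hrel : le (S.get ⟨j, hjS⟩) (S.get ⟨(kf : ℕ), hknlt⟩) :=
            hsorted.rel_get_of_lt (show (⟨j, hjS⟩ : Fin S.length) < ⟨(kf : ℕ), hknlt⟩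
              from h)
          rw [hSk] at hrel
          exact absurd hsk' (Nat.not_lt.2 hrel)
      have hgetk : (S.map f).get ⟨(kf : ℕ), by rw [hlen]; exact hknlt⟩ =
          f (S.get ⟨(kf : ℕ), hknlt⟩) := by
        rw [List.get_eq_getElem, List.get_eq_getElem, List.getElem_map]
      refine ⟨⟨(kf : ℕ), by rw [hlen]; exact hknlt⟩, hkj', ?_, ?_, ?_⟩
      · rw [hgetj, hgetk, hSk]
        exact hcard
      · rw [hgeti, hgetj, hgetk, hSk]
        show eset hT _ _ ∩ eset hT _ _ ⊆ _
        rw [hcase]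
        exact Finset.empty_subset _
      · rw [hgeti, hgetj, hgetk, hSk]
        exact hsub
    · -- shared-vertex case: take k = i
      refine ⟨i, hij, ?_, ?_, ?_⟩
      · rw [hgeti, hgetj]
        have h2j : (f (S.get ⟨j, hjS⟩)).card = 2 := card_eset hT (key_lt_ne hT hkj)
        have h2i : (f (S.get ⟨i, hiS⟩)).card = 2 := card_eset hT (key_lt_ne hT hki)
        have hnei : f (S.get ⟨i, hiS⟩) ≠ f (S.get ⟨j, hjS⟩) := by
          intro h
          have hpair := eset_inj hT hki hkj h
          have hpij : S.get ⟨i, hiS⟩ = S.get ⟨j, hjS⟩ := by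
            have e1 : ((S.get ⟨i, hiS⟩).1, (S.get ⟨i, hiS⟩).2) = S.get ⟨i, hiS⟩ := rfl
            have e2 : ((S.get ⟨j, hjS⟩).1, (S.get ⟨j, hjS⟩).2) = S.get ⟨j, hjS⟩ := rfl
            rw [← e1, ← e2, hpair]
          have heq := (hnodupS.get_inj_iff).1 hpij
          have hv : (i : ℕ) = (j : ℕ) := by simpa using congrArg Fin.val heq
          omega
        have hinter : 0 < (f (S.get ⟨j, hjS⟩) ∩ f (S.get ⟨i, hiS⟩)).card := by
          apply Finset.card_pos.2
          rw [Finset.inter_comm]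
          exact Finset.nonempty_iff_ne_empty.2 hcase
        have hsd : f (S.get ⟨j, hjS⟩) \ f (S.get ⟨i, hiS⟩) ≠ ∅ := by
          intro h
          have hsub := Finset.sdiff_eq_empty_iff_subset.1 h
          have := Finset.eq_of_subset_of_card_le hsub (by omega)
          exact hnei this.symm
        have hsd0 : (f (S.get ⟨j, hjS⟩) \ f (S.get ⟨i, hiS⟩)).card ≠ 0 :=
          fun h => hsd (Finset.card_eq_zero.1 h)
        have hkey := Finset.card_sdiff_add_card_inter (f (S.get ⟨j, hjS⟩)) (f (S.get ⟨i, hiS⟩))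
        omega
      · rw [hgeti, hgetj]
        exact Finset.inter_subset_left
      · rw [hgeti]
        exact Finset.subset_union_left
end

section
/- Let T be a tree with n vertices and G_T its generic graph. Then the facets of the independence complex of G_T are exactly the out-tree orientation assignments of T; in particular the independence complex of G_T is pure of dimension n−2 (every maximal independent set of G_T has exactly n−1 vertices). -/
open scoped Classical

/-- The out-tree orientation assignment with root v. -/
noncomputable def outTreeAssignment {V : Type*} [Fintype V] [DecidableEq V]
    (T : SimpleGraph V) [DecidableRel T.Adj] (v : V) : Finset (GenericVertex T) :=
  Finset.univ.filter fun p => T.dist v p.val.1 < T.dist v p.val.2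


section Aux

open SimpleGraph Walk
set_option linter.unusedSectionVars false
set_option linter.unusedVariables false

variable {V : Type*} [DecidableEq V] {T : SimpleGraph V}

lemma plen (hT : T.IsTree) {u w : V} {p : T.Walk u w} (hp : p.IsPath) :
    p.length = T.dist u w := by
  obtain ⟨q, hq, hql⟩ := hT.isConnected.exists_path_of_dist u w
  have hpq : p = q := Subtype.mk_eq_mk.mp (hT.IsAcyclic.path_unique ⟨p, hp⟩ ⟨q, hq⟩)
  rw [hpq, hql]

lemma padd (hT : T.IsTree) {a b x : V} {p : T.Walk a b} (hp : p.IsPath)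
    (hx : x ∈ p.support) : T.dist a x + T.dist x b = T.dist a b := by
  have h1 := plen hT (hp.takeUntil hx)
  have h2 := plen hT (hp.dropUntil hx)
  have h3 : (p.takeUntil x hx).length + (p.dropUntil x hx).length = p.length := by
    rw [← length_append, take_spec]
  rw [h1, h2, plen hT hp] at h3
  exact h3

lemma appendPath {a b c : V} {p : T.Walk a b} {q : T.Walk b c} (hp : p.IsPath) (hq : q.IsPath)
    (h : ∀ x ∈ p.support, x ∈ q.support → x = b) : (p.append q).IsPath := by
  rw [isPath_def, support_append]
  have hb : b ∉ q.support.tail ∧ q.support.tail.Nodup := by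
    have := hq.support_nodup
    rw [q.support_eq_cons] at this
    exact List.nodup_cons.mp this
  refine List.Nodup.append hp.support_nodup hb.2 ?_
  intro x hxp hxt
  have hxq : x ∈ q.support := by rw [q.support_eq_cons]; exact List.mem_cons_of_mem _ hxt
  exact hb.1 ((h x hxp hxq) ▸ hxt)

lemma step (hT : T.IsTree) {u w : V} (h : T.Adj u w) (v : V) :
    T.dist v w = T.dist v u + 1 ∨ T.dist v u = T.dist v w + 1 := by
  obtain ⟨p, hp, hpl⟩ := hT.isConnected.exists_path_of_dist v u
  by_cases hw : w ∈ p.support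
  · right
    have h1 := padd hT hp hw
    have h2 : T.dist w u = 1 := dist_eq_one_iff_adj.mpr h.symm
    omega
  · left
    have hq : (p.concat h).IsPath := by
      rw [concat_eq_append]
      refine appendPath hp (by simp [h.ne]) ?_
      intro x hxp hxs
      simp only [support_cons, support_nil, List.mem_cons, List.not_mem_nil, or_false,
        List.mem_singleton] at hxs
      rcases hxs with rfl | rfl
      · rfl
      · exact absurd hxp hw
    have := plen hT hq
    rw [length_concat, hpl] at this
    omega

lemma sec (hT : T.IsTree) {u x k : V} {w : T.Walk u x} (hw : w.IsPath) (h0 : 0 < w.length)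
    (h1 : w.support[1]? = some k) : T.Adj u k ∧ T.dist k x + 1 = T.dist u x := by
  cases w with
  | nil => simp at h0
  | cons h q =>
    rename_i y
    have hk : y = k := by
      rw [support_cons, List.getElem?_cons_succ, q.support_eq_cons, List.getElem?_cons_zero] at h1
      exact Option.some.inj h1
    subst hk
    refine ⟨h, ?_⟩
    have l1 := plen hT hw
    have l2 := plen hT hw.of_cons
    rw [length_cons] at l1
    omega

lemma build (hT : T.IsTree) {i k j : V} (hik : T.Adj i k) (hd : T.dist k j + 1 = T.dist i j) :
    ∃ w : T.Walk i j, w.IsPath ∧ w.length = T.dist i j ∧ w.support[1]? = some k := by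
  obtain ⟨r, hr, hrl⟩ := hT.isConnected.exists_path_of_dist k j
  have hi : i ∉ r.support := by
    intro hmem
    have h1 := padd hT hr hmem
    have h2 : T.dist k i = 1 := dist_eq_one_iff_adj.mpr hik.symm
    omega
  refine ⟨Walk.cons hik r, (cons_isPath_iff _ _).mpr ⟨hr, hi⟩, ?_, ?_⟩
  · rw [length_cons]; omega
  · rw [support_cons, List.getElem?_cons_succ, r.support_eq_cons, List.getElem?_cons_zero]

lemma KEY (hT : T.IsTree) {v i k j : V} (hik : T.Adj i k) (h1 : T.dist v k = T.dist v i + 1)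
    (h2 : T.dist k j + 1 = T.dist i j) : T.dist v j = T.dist v i + T.dist i j := by
  obtain ⟨r, hr, hrl⟩ := hT.isConnected.exists_path_of_dist k j
  have hi : i ∉ r.support := by
    intro hmem
    have e := padd hT hr hmem
    have e2 : T.dist k i = 1 := dist_eq_one_iff_adj.mpr hik.symm
    omega
  have hq : (Walk.cons hik r).IsPath := (cons_isPath_iff _ _).mpr ⟨hr, hi⟩
  obtain ⟨p, hp, hpl⟩ := hT.isConnected.exists_path_of_dist v i
  have hdisj : ∀ y ∈ p.support, y ∈ (Walk.cons hik r).support → y = i := by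
    intro y hyp hyq
    by_contra hy
    have hyr : y ∈ r.support := by
      rw [support_cons] at hyq
      rcases List.mem_cons.mp hyq with rfl | hm
      · exact absurd rfl hy
      · exact hm
    have e1 := padd hT hp hyp
    have e2 := padd hT hr hyr
    have e3 := padd hT hq (by rw [support_cons]; exact List.mem_cons_of_mem _ hyr)
    have e4 : T.dist v k ≤ T.dist v y + T.dist y k := hT.isConnected.dist_triangle
    have c1 : T.dist y k = T.dist k y := dist_comm ..
    have c2 : T.dist i y = T.dist y i := dist_comm ..
    omega
  have hap := appendPath hp hq hdisj
  have := plen hT hap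
  rw [length_append, length_cons, hpl, hrl] at this
  omega

lemma relTriple (hT : T.IsTree) {a b : GenericVertex T}
    (h : ∃ w : T.Walk a.val.1 b.val.1, w.IsPath ∧ 0 < w.length ∧
      w.support[1]? = some a.val.2 ∧ w.support.reverse[1]? = some b.val.2) :
    a.val.1 ≠ b.val.1 ∧ T.dist a.val.2 b.val.1 + 1 = T.dist a.val.1 b.val.1 ∧
      T.dist b.val.2 a.val.1 + 1 = T.dist b.val.1 a.val.1 := by
  obtain ⟨w, hw, h0, h1, h2⟩ := h
  have hne : a.val.1 ≠ b.val.1 := by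
    intro he
    have hl := plen hT hw
    have h0' : T.dist a.val.1 b.val.1 = 0 :=
      dist_eq_zero_iff_eq_or_not_reachable.mpr (Or.inl he)
    omega
  have s1 := sec hT hw h0 h1
  have s2 := sec hT hw.reverse (by rwa [length_reverse]) (by rwa [support_reverse])
  exact ⟨hne, s1.2, s2.2⟩

lemma charAdj (hT : T.IsTree) {a b : GenericVertex T} :
    (genericGraph T).Adj a b ↔ (a.val.1 ≠ b.val.1 ∧
      T.dist a.val.2 b.val.1 + 1 = T.dist a.val.1 b.val.1 ∧
      T.dist b.val.2 a.val.1 + 1 = T.dist b.val.1 a.val.1) := by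
  rw [genericGraph, fromRel_adj]
  constructor
  · rintro ⟨hne, hR | hR⟩
    · exact relTriple hT hR
    · obtain ⟨h1, h2, h3⟩ := relTriple hT hR
      exact ⟨h1.symm, h3, h2⟩
  · rintro ⟨hne, h1, h2⟩
    obtain ⟨w1, hw1, hl1, hs1⟩ := build hT a.prop h1
    obtain ⟨w2, hw2, hl2, hs2⟩ := build hT b.prop h2
    have hrev : w1.reverse = w2 :=
      Subtype.mk_eq_mk.mp (hT.IsAcyclic.path_unique ⟨w1.reverse, hw1.reverse⟩ ⟨w2, hw2⟩)
    refine ⟨fun he => hne (by rw [he]), Or.inl ⟨w1, hw1, ?_, hs1, ?_⟩⟩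
    · omega
    · rw [← support_reverse, hrev]; exact hs2

variable [Fintype V] [DecidableRel T.Adj]

lemma memA {v : V} {p : GenericVertex T} :
    p ∈ outTreeAssignment T v ↔ T.dist v p.val.1 < T.dist v p.val.2 := by
  simp [outTreeAssignment]

lemma away (hT : T.IsTree) {v : V} {p : GenericVertex T} (h : p ∈ outTreeAssignment T v) :
    T.dist v p.val.2 = T.dist v p.val.1 + 1 := by
  rw [memA] at h
  rcases step hT p.prop v with h' | h'
  · exact h'
  · omega

lemma partA (hT : T.IsTree) (v : V) :
    ∀ a ∈ outTreeAssignment T v, ∀ b ∈ outTreeAssignment T v, ¬ (genericGraph T).Adj a b := by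
  intro a ha b hb hadj
  rw [charAdj hT] at hadj
  obtain ⟨hne, hD1, hD2⟩ := hadj
  have k1 := KEY hT a.prop (away hT ha) hD1
  have k2 := KEY hT b.prop (away hT hb) hD2
  have c : T.dist b.val.1 a.val.1 = T.dist a.val.1 b.val.1 := dist_comm ..
  have h0 : T.dist a.val.1 b.val.1 = 0 := by omega
  exact hne ((hT.isConnected.dist_eq_zero_iff).mp h0)

lemma partB (hT : T.IsTree) (v : V) (t : Finset (GenericVertex T))
    (ht : ∀ a ∈ t, ∀ b ∈ t, ¬ (genericGraph T).Adj a b) (hsub : outTreeAssignment T v ⊆ t) :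
    outTreeAssignment T v = t := by
  refine Finset.Subset.antisymm hsub ?_
  intro b hb
  rw [memA]
  rcases step hT b.prop v with h' | h'
  · omega
  · exfalso
    set a : GenericVertex T := ⟨(b.val.2, b.val.1), b.prop.symm⟩ with ha
    have hav : a ∈ outTreeAssignment T v := by rw [memA]; simp only [ha]; omega
    refine ht a (hsub hav) b hb ?_
    rw [charAdj hT]
    have d1 : T.dist b.val.2 b.val.1 = 1 := dist_eq_one_iff_adj.mpr b.prop.symm
    have d2 : T.dist b.val.1 b.val.2 = 1 := dist_eq_one_iff_adj.mpr b.prop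
    refine ⟨b.prop.ne', ?_, ?_⟩ <;> simp [ha, dist_self, d1, d2]

lemma dist2 (hT : T.IsTree) {i h j : V} (hih : T.Adj i h) (hhj : T.Adj h j) (hij : i ≠ j) :
    T.dist i j = 2 := by
  have htri : T.dist i j ≤ T.dist i h + T.dist h j := hT.isConnected.dist_triangle
  have d1 : T.dist i h = 1 := dist_eq_one_iff_adj.mpr hih
  have d2 : T.dist h j = 1 := dist_eq_one_iff_adj.mpr hhj
  have hne0 : T.dist i j ≠ 0 := by
    intro h0
    exact hij (hT.isConnected.dist_eq_zero_iff.mp h0)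
  have hne1 : T.dist i j ≠ 1 := by
    intro h1
    have hadj : T.Adj i j := dist_eq_one_iff_adj.mp h1
    have p1 : (Walk.cons hadj Walk.nil).IsPath := by simp [hadj.ne]
    have p2 : (Walk.cons hih (Walk.cons hhj Walk.nil)).IsPath := by
      simp [hih.ne, hij, hhj.ne]
    have := Subtype.mk_eq_mk.mp (hT.IsAcyclic.path_unique ⟨_, p1⟩ ⟨_, p2⟩)
    have hl := congrArg Walk.length this
    simp at hl
  omega

lemma headInj (hT : T.IsTree) {s : Finset (GenericVertex T)}
    (hs : ∀ a ∈ s, ∀ b ∈ s, ¬ (genericGraph T).Adj a b) :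
    ∀ a ∈ s, ∀ b ∈ s, a.val.2 = b.val.2 → a = b := by
  intro a ha b hb hhead
  by_contra hne
  have hij : a.val.1 ≠ b.val.1 := by
    intro he
    exact hne (Subtype.ext (Prod.ext he hhead))
  refine hs a ha b hb ?_
  rw [charAdj hT]
  have hd : T.dist a.val.1 b.val.1 = 2 := dist2 hT a.prop (hhead ▸ b.prop.symm) hij
  have c : T.dist b.val.1 a.val.1 = T.dist a.val.1 b.val.1 := dist_comm ..
  have e1 : T.dist a.val.2 b.val.1 = 1 := dist_eq_one_iff_adj.mpr (hhead ▸ b.prop).symm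
  have e2 : T.dist b.val.2 a.val.1 = 1 := dist_eq_one_iff_adj.mpr (hhead ▸ a.prop).symm
  exact ⟨hij, by omega, by omega⟩

lemma cardBound (hT : T.IsTree) {s : Finset (GenericVertex T)}
    (hs : ∀ a ∈ s, ∀ b ∈ s, ¬ (genericGraph T).Adj a b) :
    s.card ≤ T.edgeFinset.card := by
  refine Finset.card_le_card_of_injOn (fun a => Sym2.mk a.val.1 a.val.2) ?_ ?_
  · intro a _
    rw [Finset.mem_coe, mem_edgeFinset]
    exact a.prop
  · intro a ha b hb he
    rcases Sym2.eq_iff.mp he with ⟨h1, h2⟩ | ⟨h1, h2⟩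
    · exact Subtype.ext (Prod.ext h1 h2)
    · exfalso
      refine hs a ha b hb ?_
      rw [charAdj hT]
      have hij : a.val.1 ≠ b.val.1 := by
        rw [← h2]
        exact a.prop.ne
      have e1 : T.dist a.val.2 b.val.1 = 0 :=
        dist_eq_zero_iff_eq_or_not_reachable.mpr (Or.inl h2)
      have e2 : T.dist b.val.2 a.val.1 = 0 :=
        dist_eq_zero_iff_eq_or_not_reachable.mpr (Or.inl h1.symm)
      have e3 : T.dist a.val.1 b.val.1 = 1 := dist_eq_one_iff_adj.mpr (h2 ▸ a.prop)
      have c : T.dist b.val.1 a.val.1 = T.dist a.val.1 b.val.1 := dist_comm ..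
      exact ⟨hij, by omega, by omega⟩

lemma existsConflict (hT : T.IsTree) {s : Finset (GenericVertex T)}
    (hs : ∀ a ∈ s, ∀ b ∈ s, ¬ (genericGraph T).Adj a b)
    (hmax : ∀ t, (∀ a ∈ t, ∀ b ∈ t, ¬ (genericGraph T).Adj a b) → s ⊆ t → s = t)
    {x : GenericVertex T} (hx : x ∉ s) : ∃ a ∈ s, (genericGraph T).Adj x a := by
  by_contra hno
  push_neg at hno
  have hind : ∀ a ∈ insert x s, ∀ b ∈ insert x s, ¬ (genericGraph T).Adj a b := by
    intro a ha b hb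
    rw [Finset.mem_insert] at ha hb
    rcases ha with rfl | ha <;> rcases hb with rfl | hb
    · exact fun hadj => hadj.ne rfl
    · exact hno b hb
    · exact fun hadj => hno a ha hadj.symm
    · exact hs a ha b hb
  have := hmax _ hind (Finset.subset_insert _ _)
  exact hx (this ▸ Finset.mem_insert_self x s)

lemma coverage (hT : T.IsTree) {s : Finset (GenericVertex T)}
    (hs : ∀ a ∈ s, ∀ b ∈ s, ¬ (genericGraph T).Adj a b)
    (hmax : ∀ t, (∀ a ∈ t, ∀ b ∈ t, ¬ (genericGraph T).Adj a b) → s ⊆ t → s = t)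
    (u w : V) (h : T.Adj u w) :
    (⟨(u, w), h⟩ : GenericVertex T) ∈ s ∨ (⟨(w, u), h.symm⟩ : GenericVertex T) ∈ s := by
  by_contra hnot
  push_neg at hnot
  obtain ⟨a, ha, hxa⟩ := existsConflict hT hs hmax hnot.1
  obtain ⟨b, hb, hxb⟩ := existsConflict hT hs hmax hnot.2
  rw [charAdj hT] at hxa hxb
  obtain ⟨hu1, f1, f2⟩ := hxa
  obtain ⟨hw1, g1, g2⟩ := hxb
  dsimp only at hu1 f1 f2 hw1 g1 g2
  -- f1 : d w a1 + 1 = d u a1 ; f2 : d a2 u + 1 = d a1 u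
  -- g1 : d u b1 + 1 = d w b1 ; g2 : d b2 w + 1 = d b1 w
  have c1 : T.dist w a.val.1 = T.dist a.val.1 w := dist_comm ..
  have c2 : T.dist u a.val.1 = T.dist a.val.1 u := dist_comm ..
  have key := KEY hT (h.symm) (v := a.val.1) (j := b.val.1) (by omega) g1
  -- key : d a1 b1 = d a1 w + d w b1
  refine hs a ha b hb ?_
  rw [charAdj hT]
  have c3 : T.dist w b.val.1 = T.dist b.val.1 w := dist_comm ..
  have c4 : T.dist b.val.1 a.val.1 = T.dist a.val.1 b.val.1 := dist_comm ..
  have c5 : T.dist w a.val.1 = T.dist a.val.1 w := dist_comm ..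
  have dA : T.dist a.val.1 a.val.2 = 1 := dist_eq_one_iff_adj.mpr a.prop
  have dB : T.dist b.val.1 b.val.2 = 1 := dist_eq_one_iff_adj.mpr b.prop
  have t1 : T.dist a.val.2 b.val.1 ≤ T.dist a.val.2 u + T.dist u b.val.1 :=
    hT.isConnected.dist_triangle
  have t2 : T.dist a.val.1 b.val.1 ≤ T.dist a.val.1 a.val.2 + T.dist a.val.2 b.val.1 :=
    hT.isConnected.dist_triangle
  have t3 : T.dist b.val.2 a.val.1 ≤ T.dist b.val.2 w + T.dist w a.val.1 :=
    hT.isConnected.dist_triangle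
  have t4 : T.dist b.val.1 a.val.1 ≤ T.dist b.val.1 b.val.2 + T.dist b.val.2 a.val.1 :=
    hT.isConnected.dist_triangle
  have hij : a.val.1 ≠ b.val.1 := by
    intro he
    rw [he] at f1 c1 c2
    omega
  exact ⟨hij, by omega, by omega⟩

lemma existsRoot (hT : T.IsTree) {s : Finset (GenericVertex T)}
    (hs : ∀ a ∈ s, ∀ b ∈ s, ¬ (genericGraph T).Adj a b) :
    ∃ v : V, ∀ a ∈ s, a.val.2 ≠ v := by
  have hV : Nonempty V := hT.isConnected.nonempty
  have hcard : (s.image fun a => a.val.2).card < Fintype.card V := by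
    calc (s.image fun a => a.val.2).card ≤ s.card := Finset.card_image_le
      _ ≤ T.edgeFinset.card := cardBound hT hs
      _ < Fintype.card V := by have := hT.card_edgeFinset; omega
  have : ∃ v : V, v ∉ s.image fun a => a.val.2 := by
    by_contra hall
    push_neg at hall
    have : (Finset.univ : Finset V) ⊆ s.image fun a => a.val.2 := fun v _ => hall v
    have := Finset.card_le_card this
    rw [Finset.card_univ] at this
    omega
  obtain ⟨v, hv⟩ := this
  exact ⟨v, fun a ha he => hv (Finset.mem_image.mpr ⟨a, ha, he⟩)⟩

lemma toOut (hT : T.IsTree) {s : Finset (GenericVertex T)}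
    (hs : ∀ a ∈ s, ∀ b ∈ s, ¬ (genericGraph T).Adj a b)
    (hmax : ∀ t, (∀ a ∈ t, ∀ b ∈ t, ¬ (genericGraph T).Adj a b) → s ⊆ t → s = t) :
    ∃ v : V, s = outTreeAssignment T v := by
  obtain ⟨v, hv⟩ := existsRoot hT hs
  refine ⟨v, ?_⟩
  have hsub : s ⊆ outTreeAssignment T v := by
    intro c hc
    rw [memA]
    rcases step hT c.prop v with h' | h'
    · omega
    · exfalso
      have hvi : v ≠ c.val.1 := by
        intro he
        have z : T.dist v c.val.1 = 0 := dist_eq_zero_iff_eq_or_not_reachable.mpr (Or.inl he)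
        have z2 : T.dist v c.val.2 = 0 := by omega
        have := hT.isConnected.dist_eq_zero_iff.mp z2
        subst this
        exact c.prop.ne (hT.isConnected.dist_eq_zero_iff.mp z).symm
      obtain ⟨p, hp, hpl⟩ := hT.isConnected.exists_path_of_dist v c.val.1
      cases p with
      | nil => exact hvi rfl
      | cons hadj q =>
        rename_i u
        have hq := plen hT hp.of_cons
        rw [length_cons, hq] at hpl
        rcases coverage hT hs hmax v u hadj with ha | ha
        · refine hs _ ha c hc ?_
          rw [charAdj hT]
          have c1 : T.dist c.val.2 v = T.dist v c.val.2 := dist_comm ..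
          have c2 : T.dist c.val.1 v = T.dist v c.val.1 := dist_comm ..
          exact ⟨hvi, by dsimp only; omega, by dsimp only; omega⟩
        · exact hv _ ha rfl
  exact (hmax (outTreeAssignment T v) (partA hT v) hsub).symm ▸ rfl

lemma cardA (hT : T.IsTree) (v : V) : (outTreeAssignment T v).card = Fintype.card V - 1 := by
  have hbij : (outTreeAssignment T v).card = T.edgeFinset.card := by
    refine Finset.card_bij (fun a _ => Sym2.mk a.val.1 a.val.2) ?_ ?_ ?_
    · intro a _
      rw [mem_edgeFinset]
      exact a.prop
    · intro a ha b hb he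
      rcases Sym2.eq_iff.mp he with ⟨h1, h2⟩ | ⟨h1, h2⟩
      · exact Subtype.ext (Prod.ext h1 h2)
      · exfalso
        rw [memA] at ha hb
        have ha' : T.dist v b.val.2 < T.dist v b.val.1 := by
          rw [← h1, ← h2]; exact ha
        omega
    · intro e he
      rw [mem_edgeFinset] at he
      induction e with
      | _ x y =>
        have he2 : T.Adj x y := he
        rcases step hT he2 v with h' | h'
        · exact ⟨⟨(x, y), he2⟩, memA.mpr (show T.dist v x < T.dist v y by omega), rfl⟩
        · exact ⟨⟨(y, x), he2.symm⟩, memA.mpr (show T.dist v y < T.dist v x by omega),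
            Sym2.eq_swap⟩
  rw [hbij]
  have := hT.card_edgeFinset
  omega

end Aux

/-- The facets of the independence complex of the generic graph of a tree T (i.e. the maximal
independent sets) are exactly the out-tree orientation assignments; in particular every
maximal independent set has exactly n - 1 vertices, where n = |V(T)|. -/
theorem stmt13 {V : Type*} [Fintype V] [DecidableEq V] (T : SimpleGraph V) [DecidableRel T.Adj]
    (hT : T.IsTree) :
    (∀ s : Finset (GenericVertex T),
      ((∀ a ∈ s, ∀ b ∈ s, ¬ (genericGraph T).Adj a b) ∧
        (∀ t : Finset (GenericVertex T),
          (∀ a ∈ t, ∀ b ∈ t, ¬ (genericGraph T).Adj a b) → s ⊆ t → s = t)) ↔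
      (∃ v : V, s = outTreeAssignment T v)) ∧
    (∀ s : Finset (GenericVertex T),
      (∀ a ∈ s, ∀ b ∈ s, ¬ (genericGraph T).Adj a b) →
      (∀ t : Finset (GenericVertex T),
        (∀ a ∈ t, ∀ b ∈ t, ¬ (genericGraph T).Adj a b) → s ⊆ t → s = t) →
      s.card = Fintype.card V - 1) := by
  constructor
  · intro s
    constructor
    · rintro ⟨hs, hmax⟩
      exact toOut hT hs hmax
    · rintro ⟨v, rfl⟩
      exact ⟨partA hT v, fun t ht hsub => partB hT v t ht hsub⟩
  · intro s hs hmax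
    obtain ⟨v, rfl⟩ := toOut hT hs hmax
    exact cardA hT v
end

section
/- Let T be a tree and, for vertices u, v of T, let A_u and A_v be the out-tree orientation assignments with roots u and v respectively. Then |A_u ∖ A_v| = dist_T(u, v). -/
open scoped Classical

private lemma dart_decomp {V : Type*} {T : SimpleGraph V} {u v : V} (w : T.Walk u v)
    (d : T.Dart) (hd : d ∈ w.darts) :
    ∃ (w1 : T.Walk u d.toProd.1) (w2 : T.Walk d.toProd.2 v),
      w.length = w1.length + w2.length + 1 := by
  induction w with
  | nil => simp at hd
  | cons h q ih =>
    rw [SimpleGraph.Walk.darts_cons, List.mem_cons] at hd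
    rcases hd with rfl | hd
    · exact ⟨SimpleGraph.Walk.nil, q, by simp⟩
    · obtain ⟨w1, w2, hl⟩ := ih hd
      exact ⟨SimpleGraph.Walk.cons h w1, w2, by simp [hl]; omega⟩

/-- For distinct out-tree orientation assignments with roots u and v, the distance
|A_u \ A_v| equals the distance between u and v in the tree T. -/
theorem stmt14 {V : Type*} [Fintype V] [DecidableEq V] (T : SimpleGraph V) [DecidableRel T.Adj]
    (hT : T.IsTree) (u v : V) (hne : outTreeAssignment T u ≠ outTreeAssignment T v) :
    (outTreeAssignment T u \ outTreeAssignment T v).card = T.dist u v := by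
  classical
  have hconn := hT.isConnected
  obtain ⟨p, hp, hpl⟩ := hconn.exists_path_of_dist u v
  set f : T.Dart → GenericVertex T := fun d => ⟨d.toProd, d.adj⟩ with hf
  have hinj : Function.Injective f := fun d1 d2 h =>
    SimpleGraph.Dart.ext _ _ (congrArg Subtype.val h)
  have hset : outTreeAssignment T u \ outTreeAssignment T v = (p.darts.map f).toFinset := by
    ext x
    obtain ⟨⟨a, b⟩, hab⟩ := x
    simp only [Finset.mem_sdiff, outTreeAssignment, Finset.mem_filter, Finset.mem_univ,
      true_and, List.mem_toFinset, List.mem_map]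
    constructor
    · rintro ⟨h1, h2⟩
      push_neg at h2
      obtain ⟨q1, hq1p, hq1l⟩ := hconn.exists_path_of_dist u a
      obtain ⟨q2, hq2p, hq2l⟩ := hconn.exists_path_of_dist b v
      by_cases hb1 : b ∈ q1.support
      · exfalso
        have hsplit := congrArg SimpleGraph.Walk.length (q1.take_spec hb1)
        rw [SimpleGraph.Walk.length_append] at hsplit
        have hub : T.dist u b ≤ (q1.takeUntil b hb1).length := SimpleGraph.dist_le _
        omega
      by_cases ha2 : a ∈ q2.support
      · exfalso
        have hsplit := congrArg SimpleGraph.Walk.length (q2.take_spec ha2)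
        rw [SimpleGraph.Walk.length_append] at hsplit
        have hav : T.dist a v ≤ (q2.dropUntil a ha2).length := SimpleGraph.dist_le _
        have e1 : T.dist v b = T.dist b v := SimpleGraph.dist_comm
        have e2 : T.dist v a = T.dist a v := SimpleGraph.dist_comm
        have ht0 : (q2.takeUntil a ha2).length = 0 := by omega
        exact hab.ne (SimpleGraph.Walk.eq_of_length_eq_zero ht0).symm
      by_cases hx : ∃ x, x ∈ q1.support ∧ x ∈ q2.support
      · exfalso
        obtain ⟨y, hy1, hy2⟩ := hx
        have hr1p : (q1.dropUntil y hy1).IsPath := hq1p.dropUntil hy1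
        have hr2p : (q2.takeUntil y hy2).IsPath := hq2p.takeUntil hy2
        have hW2p : ((SimpleGraph.Walk.cons hab (q2.takeUntil y hy2)).reverse).IsPath := by
          apply SimpleGraph.Walk.IsPath.reverse
          rw [SimpleGraph.Walk.cons_isPath_iff]
          exact ⟨hr2p, fun h => ha2 (q2.support_takeUntil_subset hy2 h)⟩
        have heq := hT.IsAcyclic.path_unique ⟨_, hr1p⟩ ⟨_, hW2p⟩
        have heq' : q1.dropUntil y hy1 =
            (SimpleGraph.Walk.cons hab (q2.takeUntil y hy2)).reverse :=
          congrArg Subtype.val heq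
        have hbmem : b ∈ ((SimpleGraph.Walk.cons hab (q2.takeUntil y hy2)).reverse).support := by
          rw [SimpleGraph.Walk.support_reverse, List.mem_reverse,
            SimpleGraph.Walk.support_cons]
          exact List.mem_cons_of_mem _ (q2.takeUntil y hy2).start_mem_support
        rw [← heq'] at hbmem
        exact hb1 (q1.support_dropUntil_subset hy1 hbmem)
      · push_neg at hx
        have hWp : (q1.append (SimpleGraph.Walk.cons hab q2)).IsPath := by
          rw [SimpleGraph.Walk.isPath_def, SimpleGraph.Walk.support_append,
            SimpleGraph.Walk.support_cons, List.tail_cons]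
          exact (hq1p.support_nodup).append (hq2p.support_nodup) hx
        have hWeq : q1.append (SimpleGraph.Walk.cons hab q2) = p :=
          congrArg Subtype.val (hT.IsAcyclic.path_unique ⟨_, hWp⟩ ⟨p, hp⟩)
        refine ⟨⟨(a, b), hab⟩, ?_, rfl⟩
        rw [← hWeq, SimpleGraph.Walk.darts_append, SimpleGraph.Walk.darts_cons]
        exact List.mem_append_right _ List.mem_cons_self
    · rintro ⟨d, hd, hfd⟩
      obtain ⟨w1, w2, hl⟩ := dart_decomp p d hd
      have ha : d.toProd.1 = a := by
        have := congrArg (fun z => z.val.1) hfd; exact this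
      have hb : d.toProd.2 = b := by
        have := congrArg (fun z => z.val.2) hfd; exact this
      have h1 : T.dist u d.toProd.1 ≤ w1.length := SimpleGraph.dist_le w1
      have h2 : T.dist d.toProd.2 v ≤ w2.length := SimpleGraph.dist_le w2
      have t1 : T.dist u v ≤ T.dist u d.toProd.2 + T.dist d.toProd.2 v := hconn.dist_triangle
      have t2 : T.dist u v ≤ T.dist u d.toProd.1 + T.dist d.toProd.1 v := hconn.dist_triangle
      have hva : T.dist v d.toProd.1 = T.dist d.toProd.1 v := SimpleGraph.dist_comm
      have hvb : T.dist v d.toProd.2 = T.dist d.toProd.2 v := SimpleGraph.dist_comm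
      rw [← ha, ← hb]
      exact ⟨by omega, by omega⟩
  rw [hset]
  rw [List.toFinset_card_of_nodup
    ((SimpleGraph.Walk.darts_nodup_of_support_nodup hp.support_nodup).map hinj)]
  rw [List.length_map, SimpleGraph.Walk.length_darts, hpl]
end
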